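/- arXiv:1509.05928 — 3 statements merged into one kernel-verified Lean document; each statement's English description precedes it below -/
import Mathlib

section
/- Let n ≥ 1, σ > 0, and let g : ℝⁿ → ℂ be measurable. Then [g ∈ L²(ℝⁿ) and g satisfies the weak A-condition with exponent 2σ] if and only if there exist constants c, c′ > 0 such that for all t ≥ 0: c (1+t)^{−2σ} ≤ ∫_{ℝⁿ} e^{−2t|ξ|²} |g(ξ)|² dξ ≤ c′ (1+t)^{−2σ}. By Plancherel the integral equals ‖e^{tΔ}u₀‖_{L²}² for u₀ with Fourier transform g, so this characterizes L²(ℝⁿ) ∩ 𝒜^{−2σ}_{2,∞} by the two-sided heat decay c″(1+t)^{−σ} ≤ ‖e^{tΔ}u₀‖₂ ≤ c‴(1+t)^{−σ}. -/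
open MeasureTheory Filter Topology
open scoped ENNReal NNReal

noncomputable section

/-- The quantity `ρ^{-(2r+n)} ∫_{|ξ|≤ρ} |g(ξ)|² dξ`, valued in `[0,∞]`. -/
def decayFun (n : ℕ) (g : EuclideanSpace ℝ (Fin n) → ℂ) (r ρ : ℝ) : ℝ≥0∞ :=
  ENNReal.ofReal (ρ ^ (-(2 * r + (n : ℝ)))) *
    ∫⁻ ξ in {ξ : EuclideanSpace ℝ (Fin n) | ‖ξ‖ ≤ ρ}, ENNReal.ofReal (‖g ξ‖ ^ 2)

/-- Lower decay indicator `P_r(g)₋`. -/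
def Pminus (n : ℕ) (g : EuclideanSpace ℝ (Fin n) → ℂ) (r : ℝ) : ℝ≥0∞ :=
  liminf (fun ρ : ℝ => decayFun n g r ρ) (𝓝[>] (0 : ℝ))

/-- Upper decay indicator `P_r(g)₊`. -/
def Pplus (n : ℕ) (g : EuclideanSpace ℝ (Fin n) → ℂ) (r : ℝ) : ℝ≥0∞ :=
  limsup (fun ρ : ℝ => decayFun n g r ρ) (𝓝[>] (0 : ℝ))

/-- `E_α(t) = ∫_{ℝⁿ} e^{−2t|ξ|^{2α}} |g(ξ)|² dξ`, valued in `[0,∞]`. -/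
def Ealpha (n : ℕ) (g : EuclideanSpace ℝ (Fin n) → ℂ) (α t : ℝ) : ℝ≥0∞ :=
  ∫⁻ ξ : EuclideanSpace ℝ (Fin n),
    ENNReal.ofReal (Real.exp (-(2 * t) * ‖ξ‖ ^ (2 * α)) * ‖g ξ‖ ^ 2)

/-- Sharp Littlewood–Paley block: `a_j(g) = (∫_{2^j ≤ |ξ| < 2^{j+1}} |g(ξ)|² dξ)^{1/2}`. -/
def ajBlock (n : ℕ) (g : EuclideanSpace ℝ (Fin n) → ℂ) (j : ℤ) : ℝ≥0∞ :=
  (∫⁻ ξ in {ξ : EuclideanSpace ℝ (Fin n) |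
      (2 : ℝ) ^ (j : ℝ) ≤ ‖ξ‖ ∧ ‖ξ‖ < (2 : ℝ) ^ ((j : ℝ) + 1)},
    ENNReal.ofReal (‖g ξ‖ ^ 2)) ^ (1 / 2 : ℝ)

/-- The strong A-condition with exponent `σ`: the Fourier-side description of `Ȧ^{-σ}_{2,∞}`. -/
def StrongACond (n : ℕ) (g : EuclideanSpace ℝ (Fin n) → ℂ) (σ : ℝ) : Prop :=
  ∃ c C : ℝ, 0 < c ∧ 0 < C ∧ ∃ M : ℕ, 0 < M ∧
    (∀ j : ℤ, ajBlock n g j ≤ ENNReal.ofReal (C * (2 : ℝ) ^ (σ * (j : ℝ)))) ∧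
    (∀ j₀ : ℤ, ∃ j : ℤ, j₀ ≤ j ∧ j < j₀ + M ∧
      ENNReal.ofReal (c * (2 : ℝ) ^ (σ * (j : ℝ))) ≤ ajBlock n g j)

/-- The weak A-condition with exponent `σ`: the Fourier-side description of `𝒜^{-σ}_{2,∞}`. -/
def WeakACond (n : ℕ) (g : EuclideanSpace ℝ (Fin n) → ℂ) (σ : ℝ) : Prop :=
  ∃ c C : ℝ, 0 < c ∧ 0 < C ∧ ∃ jk : ℕ → ℤ,
    Filter.Tendsto jk Filter.atTop Filter.atBot ∧
    (∃ M : ℕ, ∀ k : ℕ, |jk k - jk (k + 1)| ≤ M) ∧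
    (∀ j : ℤ, ajBlock n g j ≤ ENNReal.ofReal (C * (2 : ℝ) ^ (σ * (j : ℝ)))) ∧
    (∀ k : ℕ, ENNReal.ofReal (c * (2 : ℝ) ^ (σ * (jk k : ℝ))) ≤ ajBlock n g (jk k))

namespace Stmt8Aux

def Aset (n : ℕ) (j : ℤ) : Set (EuclideanSpace ℝ (Fin n)) :=
  {ξ | (2:ℝ)^j ≤ ‖ξ‖ ∧ ‖ξ‖ < (2:ℝ)^(j+1)}

def bBlock (n : ℕ) (g : EuclideanSpace ℝ (Fin n) → ℂ) (j : ℤ) : ℝ≥0∞ :=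
  ∫⁻ ξ in Aset n j, ENNReal.ofReal (‖g ξ‖ ^ 2)

def W (n : ℕ) (g : EuclideanSpace ℝ (Fin n) → ℂ) (t : ℝ) (ξ : EuclideanSpace ℝ (Fin n)) : ℝ≥0∞ :=
  ENNReal.ofReal (Real.exp (-(2 * t) * ‖ξ‖ ^ 2) * ‖g ξ‖ ^ 2)

lemma Aset_eq (n : ℕ) (j : ℤ) :
    Aset n j = {ξ : EuclideanSpace ℝ (Fin n) |
      (2 : ℝ) ^ (j : ℝ) ≤ ‖ξ‖ ∧ ‖ξ‖ < (2 : ℝ) ^ ((j : ℝ) + 1)} := by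
  have h1 : (2:ℝ) ^ ((j:ℤ):ℝ) = (2:ℝ) ^ j := Real.rpow_intCast 2 j
  have h2 : (2:ℝ) ^ ((j:ℝ) + 1) = (2:ℝ) ^ (j+1) := by
    rw [show (j:ℝ) + 1 = ((j+1 : ℤ):ℝ) by push_cast; ring, Real.rpow_intCast]
  simp only [Aset, h1, h2]

lemma ofReal_sq_rpow (x : ℝ) (hx : 0 ≤ x) :
    ENNReal.ofReal x ^ (2:ℝ) = ENNReal.ofReal (x^2) := by
  rw [show (2:ℝ) = ((2:ℕ):ℝ) by norm_num, ENNReal.rpow_natCast, ← ENNReal.ofReal_pow hx]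

lemma ajBlock_eq (n : ℕ) (g : EuclideanSpace ℝ (Fin n) → ℂ) (j : ℤ) :
    ajBlock n g j = (bBlock n g j) ^ (1/2 : ℝ) := by
  rw [ajBlock, bBlock, Aset_eq]

lemma ajBlock_le_iff (n : ℕ) (g : EuclideanSpace ℝ (Fin n) → ℂ) (j : ℤ) (x : ℝ) (hx : 0 ≤ x) :
    ajBlock n g j ≤ ENNReal.ofReal x ↔ bBlock n g j ≤ ENNReal.ofReal (x^2) := by
  rw [ajBlock_eq, ← ENNReal.rpow_le_rpow_iff (z := 2) two_pos, ← ENNReal.rpow_mul,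
    ofReal_sq_rpow x hx]
  norm_num

lemma le_ajBlock_iff (n : ℕ) (g : EuclideanSpace ℝ (Fin n) → ℂ) (j : ℤ) (x : ℝ) (hx : 0 ≤ x) :
    ENNReal.ofReal x ≤ ajBlock n g j ↔ ENNReal.ofReal (x^2) ≤ bBlock n g j := by
  rw [ajBlock_eq, ← ENNReal.rpow_le_rpow_iff (z := 2) two_pos, ← ENNReal.rpow_mul,
    ofReal_sq_rpow x hx]
  norm_num

lemma Aset_measurableSet (n : ℕ) (j : ℤ) : MeasurableSet (Aset n j) := by
  have : Aset n j = (fun ξ : EuclideanSpace ℝ (Fin n) => ‖ξ‖) ⁻¹'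
      (Set.Ico ((2:ℝ)^j) ((2:ℝ)^(j+1))) := rfl
  rw [this]
  exact measurable_norm measurableSet_Ico

lemma Aset_disjoint (n : ℕ) : Pairwise (Function.onFun Disjoint (Aset n)) := by
  intro i j hij
  wlog h : i < j generalizing i j
  · exact (this hij.symm (by omega)).symm
  refine Set.disjoint_left.2 fun ξ hi hj => ?_
  have h1 : ‖ξ‖ < (2:ℝ)^(i+1) := hi.2
  have h2 : (2:ℝ)^j ≤ ‖ξ‖ := hj.1
  have : (2:ℝ)^(i+1) ≤ (2:ℝ)^j := zpow_le_zpow_right₀ one_le_two (by omega)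
  linarith

lemma iUnion_Aset (n : ℕ) : (⋃ j : ℤ, Aset n j) = {(0 : EuclideanSpace ℝ (Fin n))}ᶜ := by
  ext ξ
  simp only [Set.mem_iUnion, Set.mem_compl_iff, Set.mem_singleton_iff]
  constructor
  · rintro ⟨j, hj, -⟩ rfl
    simp only [norm_zero] at hj
    exact absurd hj (not_le.2 (zpow_pos two_pos j))
  · intro hξ
    have hpos : 0 < ‖ξ‖ := norm_pos_iff.2 hξ
    obtain ⟨j, hj⟩ := exists_mem_Ico_zpow hpos one_lt_two
    exact ⟨j, hj.1, hj.2⟩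

lemma lintegral_eq_tsum (n : ℕ) (hn : 1 ≤ n) (f : EuclideanSpace ℝ (Fin n) → ℝ≥0∞) :
    ∫⁻ ξ, f ξ = ∑' j : ℤ, ∫⁻ ξ in Aset n j, f ξ := by
  haveI : Nonempty (Fin n) := Fin.pos_iff_nonempty.mp hn
  have h0 : (volume : Measure (EuclideanSpace ℝ (Fin n))) {0} = 0 := measure_singleton 0
  have hres : (volume : Measure (EuclideanSpace ℝ (Fin n))).restrict
      {(0:EuclideanSpace ℝ (Fin n))}ᶜ = volume := by
    rw [Measure.restrict_congr_set (ae_eq_univ.2 (by simpa using h0)), Measure.restrict_univ]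
  calc ∫⁻ ξ, f ξ = ∫⁻ ξ in {(0:EuclideanSpace ℝ (Fin n))}ᶜ, f ξ := by rw [hres]
    _ = ∫⁻ ξ in ⋃ j : ℤ, Aset n j, f ξ := by rw [iUnion_Aset]
    _ = ∑' j : ℤ, ∫⁻ ξ in Aset n j, f ξ :=
        lintegral_iUnion (Aset_measurableSet n) (Aset_disjoint n) f

lemma Ealpha_one (n : ℕ) (g : EuclideanSpace ℝ (Fin n) → ℂ) (t : ℝ) :
    Ealpha n g 1 t = ∫⁻ ξ, W n g t ξ := by
  unfold Ealpha W
  congr 1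
  ext ξ
  rw [show (2 * (1:ℝ)) = ((2:ℕ):ℝ) by norm_num, Real.rpow_natCast]

lemma Ealpha_eq_tsum (n : ℕ) (hn : 1 ≤ n) (g : EuclideanSpace ℝ (Fin n) → ℂ) (t : ℝ) :
    Ealpha n g 1 t = ∑' j : ℤ, ∫⁻ ξ in Aset n j, W n g t ξ := by
  rw [Ealpha_one]
  exact lintegral_eq_tsum n hn _

lemma Ealpha_mono (n : ℕ) (g : EuclideanSpace ℝ (Fin n) → ℂ) {t s : ℝ} (hts : t ≤ s) :
    Ealpha n g 1 s ≤ Ealpha n g 1 t := by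
  rw [Ealpha_one, Ealpha_one]
  apply lintegral_mono
  intro ξ
  apply ENNReal.ofReal_le_ofReal
  apply mul_le_mul_of_nonneg_right _ (by positivity)
  apply Real.exp_le_exp.2
  nlinarith [sq_nonneg (‖ξ‖), norm_nonneg ξ]

lemma Ealpha_zero (n : ℕ) (g : EuclideanSpace ℝ (Fin n) → ℂ) :
    Ealpha n g 1 0 = ∫⁻ ξ, ENNReal.ofReal (‖g ξ‖ ^ 2) := by
  rw [Ealpha_one]
  unfold W
  norm_num

lemma memLp_iff (n : ℕ) (g : EuclideanSpace ℝ (Fin n) → ℂ) (hg : Measurable g) :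
    MemLp g 2 (volume : Measure (EuclideanSpace ℝ (Fin n))) ↔ Ealpha n g 1 0 < ∞ := by
  rw [Ealpha_zero]
  have key : ∀ ξ : EuclideanSpace ℝ (Fin n), ‖g ξ‖ₑ ^ (2:ℝ)
      = ENNReal.ofReal (‖g ξ‖^2) := by
    intro ξ
    rw [show (2:ℝ) = ((2:ℕ):ℝ) by norm_num, ENNReal.rpow_natCast,
      ← ofReal_norm, ← ENNReal.ofReal_pow (norm_nonneg _)]
  constructor
  · rintro ⟨-, h⟩
    rw [eLpNorm_eq_lintegral_rpow_enorm_toReal (by norm_num) (by norm_num)] at h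
    simp only [ENNReal.toReal_ofNat] at h
    have := (ENNReal.rpow_lt_top_iff_of_pos (x := ∫⁻ ξ, ‖g ξ‖ₑ ^ (2:ℝ))
      (by norm_num : (0:ℝ) < 1/2)).1 ?_
    · simpa only [key] using this
    · convert h using 2
  · intro h
    refine ⟨hg.aestronglyMeasurable, ?_⟩
    rw [eLpNorm_eq_lintegral_rpow_enorm_toReal (by norm_num) (by norm_num)]
    simp only [ENNReal.toReal_ofNat]
    apply ENNReal.rpow_lt_top_of_nonneg (by norm_num)
    simp only [key]
    exact h.ne

lemma block_le (n : ℕ) (g : EuclideanSpace ℝ (Fin n) → ℂ) (hg : Measurable g)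
    (t : ℝ) (ht : 0 ≤ t) (j : ℤ) :
    ∫⁻ ξ in Aset n j, W n g t ξ
      ≤ ENNReal.ofReal (Real.exp (-(2 * t) * ((2:ℝ)^j)^2)) * bBlock n g j := by
  rw [bBlock, ← lintegral_const_mul' _ _ ENNReal.ofReal_ne_top]
  apply setLIntegral_mono (by fun_prop) ?_
  intro ξ hξ
  rw [W, ← ENNReal.ofReal_mul (Real.exp_nonneg _)]
  apply ENNReal.ofReal_le_ofReal
  apply mul_le_mul_of_nonneg_right _ (by positivity)
  apply Real.exp_le_exp.2
  have h1 : (2:ℝ)^j ≤ ‖ξ‖ := hξ.1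
  have h2 : (0:ℝ) < (2:ℝ)^j := zpow_pos two_pos j
  have hsq : ((2:ℝ)^j)^2 ≤ ‖ξ‖^2 := by nlinarith
  nlinarith [mul_le_mul_of_nonneg_left hsq ht]

lemma le_block (n : ℕ) (g : EuclideanSpace ℝ (Fin n) → ℂ) (hg : Measurable g)
    (t : ℝ) (ht : 0 ≤ t) (j : ℤ) :
    ENNReal.ofReal (Real.exp (-(2 * t) * ((2:ℝ)^(j+1))^2)) * bBlock n g j
      ≤ ∫⁻ ξ in Aset n j, W n g t ξ := by
  rw [bBlock, ← lintegral_const_mul' _ _ ENNReal.ofReal_ne_top]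
  apply setLIntegral_mono (by unfold W; fun_prop) ?_
  intro ξ hξ
  rw [W, ← ENNReal.ofReal_mul (Real.exp_nonneg _)]
  apply ENNReal.ofReal_le_ofReal
  apply mul_le_mul_of_nonneg_right _ (by positivity)
  apply Real.exp_le_exp.2
  have h1 : ‖ξ‖ < (2:ℝ)^(j+1) := hξ.2
  have h0 : (0:ℝ) ≤ ‖ξ‖ := norm_nonneg ξ
  have hsq : ‖ξ‖^2 ≤ ((2:ℝ)^(j+1))^2 := by nlinarith
  nlinarith [mul_le_mul_of_nonneg_left hsq ht]

lemma tsum_left_tail (F : ℤ → ℝ≥0∞) (j₁ : ℤ) (D r : ℝ≥0∞) (hr : r < 1)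
    (hF : ∀ j : ℤ, j ≤ j₁ → F j ≤ D * r ^ (j₁ - j).toNat)
    (hF0 : ∀ j : ℤ, j₁ < j → F j = 0) :
    ∑' j : ℤ, F j ≤ D * (1 - r)⁻¹ := by
  have hinj : Function.Injective (fun m : ℕ => j₁ - (m:ℤ)) := by
    intro a b h; simpa using h
  have hsupp : Function.support F ⊆ Set.range (fun m : ℕ => j₁ - (m:ℤ)) := by
    intro j hj
    by_contra hmem
    rcases le_or_gt j j₁ with h | h
    · exact hmem ⟨(j₁ - j).toNat, by show j₁ - ((j₁ - j).toNat:ℤ) = j; omega⟩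
    · exact hj (hF0 j h)
  rw [← hinj.tsum_eq hsupp]
  calc ∑' m : ℕ, F (j₁ - (m:ℤ)) ≤ ∑' m : ℕ, D * r ^ m := by
        apply ENNReal.tsum_le_tsum
        intro m
        have := hF (j₁ - (m:ℤ)) (by omega)
        simpa using this
    _ = D * (1 - r)⁻¹ := by rw [ENNReal.tsum_mul_left, ENNReal.tsum_geometric]

lemma tsum_right_tail (F : ℤ → ℝ≥0∞) (j₁ : ℤ) (D r : ℝ≥0∞) (hr : r < 1)
    (hF : ∀ j : ℤ, j₁ < j → F j ≤ D * r ^ (j - j₁).toNat)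
    (hF0 : ∀ j : ℤ, j ≤ j₁ → F j = 0) :
    ∑' j : ℤ, F j ≤ D * (1 - r)⁻¹ := by
  have hinj : Function.Injective (fun m : ℕ => j₁ + 1 + (m:ℤ)) := by
    intro a b h; simpa using h
  have hsupp : Function.support F ⊆ Set.range (fun m : ℕ => j₁ + 1 + (m:ℤ)) := by
    intro j hj
    by_contra hmem
    rcases le_or_gt j j₁ with h | h
    · exact hj (hF0 j h)
    · exact hmem ⟨(j - j₁ - 1).toNat, by show j₁ + 1 + ((j - j₁ - 1).toNat:ℤ) = j; omega⟩
  rw [← hinj.tsum_eq hsupp]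
  calc ∑' m : ℕ, F (j₁ + 1 + (m:ℤ)) ≤ ∑' m : ℕ, D * r ^ (m+1) := by
        apply ENNReal.tsum_le_tsum
        intro m
        have := hF (j₁ + 1 + (m:ℤ)) (by omega)
        have he : (j₁ + 1 + (m:ℤ) - j₁).toNat = m + 1 := by omega
        rwa [he] at this
    _ ≤ ∑' m : ℕ, D * r ^ m := by
        apply ENNReal.tsum_le_tsum
        intro m
        exact mul_le_mul_right (pow_le_pow_of_le_one zero_le hr.le (by omega)) D
    _ = D * (1 - r)⁻¹ := by rw [ENNReal.tsum_mul_left, ENNReal.tsum_geometric]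

lemma rpow_le_exp_aux (p : ℝ) (hp : 0 ≤ p) :
    ∃ K : ℝ, 1 ≤ K ∧ ∀ x : ℝ, 0 ≤ x → x ^ p ≤ K * Real.exp x := by
  refine ⟨(Nat.ceil p).factorial, by exact_mod_cast (Nat.ceil p).factorial_pos, ?_⟩
  intro x hx
  have hK : (1:ℝ) ≤ (Nat.ceil p).factorial := by exact_mod_cast (Nat.ceil p).factorial_pos
  rcases le_or_gt x 1 with h | h
  · have h1 : x ^ p ≤ 1 := Real.rpow_le_one hx h hp
    have h2 : (1:ℝ) ≤ Real.exp x := Real.one_le_exp hx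
    nlinarith
  · have h1 : x ^ p ≤ x ^ ((Nat.ceil p : ℕ) : ℝ) :=
      Real.rpow_le_rpow_of_exponent_le h.le (Nat.le_ceil p)
    rw [Real.rpow_natCast] at h1
    have h2 : x ^ (Nat.ceil p) / (Nat.ceil p).factorial ≤ Real.exp x := by
      calc x ^ (Nat.ceil p) / (Nat.ceil p).factorial
          ≤ ∑ i ∈ Finset.range (Nat.ceil p + 1), x ^ i / i.factorial :=
            Finset.single_le_sum (f := fun i => x ^ i / (i.factorial : ℝ))
              (fun i _ => by positivity) (Finset.self_mem_range_succ _)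
        _ ≤ Real.exp x := Real.sum_le_exp_of_nonneg hx _
    have h3 : (0:ℝ) < (Nat.ceil p).factorial := by positivity
    calc x ^ p ≤ x ^ (Nat.ceil p) := h1
      _ ≤ (Nat.ceil p).factorial * Real.exp x := by
          rw [div_le_iff₀ h3] at h2; linarith [h2]

-- helpers
lemma two_rpow_add (a b : ℝ) : (2:ℝ)^(a+b) = (2:ℝ)^a * (2:ℝ)^b :=
  Real.rpow_add two_pos a b

lemma two_rpow_nat (y : ℝ) (m : ℕ) : ((2:ℝ)^y)^m = (2:ℝ)^(y * m) := by
  rw [← Real.rpow_natCast ((2:ℝ)^y) m, ← Real.rpow_mul (by norm_num : (0:ℝ) ≤ 2)]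

lemma four_zpow (j : ℤ) : (4:ℝ)^j = (2:ℝ)^(2*(j:ℝ)) := by
  rw [show (2*(j:ℝ)) = (((2*j : ℤ)):ℝ) by push_cast; ring, Real.rpow_intCast,
    show ((4:ℝ)) = (2:ℝ)^(2:ℤ) by norm_num, ← zpow_mul]

lemma two_zpow_sq (j : ℤ) : ((2:ℝ)^j)^2 = (2:ℝ)^(2*(j:ℝ)) := by
  rw [← four_zpow, show (4:ℝ) = 2*2 by norm_num, mul_zpow]; ring

lemma two_rpow_rpow (y z : ℝ) : ((2:ℝ)^y)^z = (2:ℝ)^(y*z) :=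
  (Real.rpow_mul (by norm_num : (0:ℝ) ≤ 2) y z).symm

lemma nat_le_four_pow (m : ℕ) (hm : 1 ≤ m) : (m:ℝ) ≤ (4:ℝ)^(m-1:ℤ) := by
  have h1 : m ≤ 2^(m-1) := by
    have := Nat.lt_two_pow_self (n := m-1)
    omega
  have h2 : (2:ℝ)^(m-1:ℕ) ≤ (4:ℝ)^(m-1:ℕ) :=
    pow_le_pow_left₀ (by norm_num) (by norm_num) _
  have h3 : ((4:ℝ))^((m:ℤ)-1) = (4:ℝ)^(m-1:ℕ) := by
    rw [show (m:ℤ)-1 = ((m-1:ℕ):ℤ) by omega, zpow_natCast]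
  rw [h3]
  calc (m:ℝ) ≤ (2:ℝ)^(m-1:ℕ) := by exact_mod_cast Nat.cast_le.2 h1 |>.trans (by
        rw [Nat.cast_pow]; norm_num)
    _ ≤ _ := h2

lemma W_le (n : ℕ) (g : EuclideanSpace ℝ (Fin n) → ℂ) (t : ℝ) (ht : 0 ≤ t)
    (ξ : EuclideanSpace ℝ (Fin n)) : W n g t ξ ≤ ENNReal.ofReal (‖g ξ‖^2) := by
  apply ENNReal.ofReal_le_ofReal
  apply mul_le_of_le_one_left (by positivity)
  apply Real.exp_le_one_iff.2
  nlinarith [sq_nonneg ‖ξ‖]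

lemma block_le' (n : ℕ) (g : EuclideanSpace ℝ (Fin n) → ℂ) (t : ℝ) (ht : 0 ≤ t) (j : ℤ) :
    ∫⁻ ξ in Aset n j, W n g t ξ ≤ bBlock n g j :=
  lintegral_mono fun ξ => W_le n g t ht ξ

lemma forward_upper (n : ℕ) (hn : 1 ≤ n) (σ : ℝ) (hσ : 0 < σ)
    (g : EuclideanSpace ℝ (Fin n) → ℂ) (hg : Measurable g) (C : ℝ) (hC : 0 < C)
    (hb : ∀ j : ℤ, bBlock n g j ≤ ENNReal.ofReal ((C * (2:ℝ)^((2*σ) * (j:ℝ)))^2)) :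
    ∃ KU : ℝ, 0 < KU ∧ ∀ t : ℝ, 1 ≤ t →
      Ealpha n g 1 t ≤ ENNReal.ofReal (KU * t^(-(2*σ))) := by
  obtain ⟨K, hK1, hK⟩ := rpow_le_exp_aux (2*σ) (by positivity)
  set rL : ℝ := (2:ℝ)^(-(4*σ)) with hrL_def
  have hrL0 : 0 < rL := Real.rpow_pos_of_pos two_pos _
  have hrL1 : rL < 1 := Real.rpow_lt_one_of_one_lt_of_neg one_lt_two (by linarith)
  set rR : ℝ := Real.exp (-1) with hrR_def
  have hrR0 : 0 < rR := Real.exp_pos _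
  have hrR1 : rR < 1 := Real.exp_lt_one_iff.2 (by norm_num)
  set KU : ℝ := C^2 * (1 - rL)⁻¹ + C^2 * K * (1 - rR)⁻¹ with hKU_def
  have hKU : 0 < KU := by
    have := inv_pos.2 (by linarith : (0:ℝ) < 1 - rL)
    have := inv_pos.2 (by linarith : (0:ℝ) < 1 - rR)
    positivity
  refine ⟨KU, hKU, ?_⟩
  intro t ht
  have ht0 : 0 < t := lt_of_lt_of_le one_pos ht
  have htneg : 0 < t^(-(2*σ)) := Real.rpow_pos_of_pos ht0 _
  obtain ⟨j₀, hj₀⟩ := exists_mem_Ico_zpow (show (0:ℝ) < 1/t by positivity)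
    (show (1:ℝ) < 4 by norm_num)
  have hj₀1 : (4:ℝ)^j₀ ≤ 1/t := hj₀.1
  have hj₀2 : 1/t < (4:ℝ)^(j₀+1) := hj₀.2
  -- key real bound at scale j₀ : 2^(4σ j₀) ≤ t^(-2σ)
  have hscale : (2:ℝ)^(4*σ*(j₀:ℝ)) ≤ t^(-(2*σ)) := by
    have h1 : ((4:ℝ)^j₀)^(2*σ) ≤ (1/t)^(2*σ) :=
      Real.rpow_le_rpow (le_of_lt (zpow_pos (by norm_num) _)) hj₀1 (by positivity)
    have h2 : ((4:ℝ)^j₀)^(2*σ) = (2:ℝ)^(4*σ*(j₀:ℝ)) := by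
      rw [four_zpow, two_rpow_rpow]; ring_nf
    have h3 : ((1:ℝ)/t)^(2*σ) = t^(-(2*σ)) := by
      rw [one_div, ← Real.rpow_neg_one t, ← Real.rpow_mul ht0.le]; ring_nf
    rw [h2, h3] at h1; exact h1
  rw [Ealpha_eq_tsum n hn g t]
  set F : ℤ → ℝ≥0∞ := fun j => ∫⁻ ξ in Aset n j, W n g t ξ with hF_def
  set F₁ : ℤ → ℝ≥0∞ := fun j => if j ≤ j₀ then F j else 0 with hF₁_def
  set F₂ : ℤ → ℝ≥0∞ := fun j => if j₀ < j then F j else 0 with hF₂_def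
  have hsplit : ∀ j, F j ≤ F₁ j + F₂ j := by
    intro j
    rcases le_or_gt j j₀ with h | h
    · simp [hF₁_def, hF₂_def, h, not_lt.2 h]
    · simp [hF₁_def, hF₂_def, h, not_le.2 h]
  have hbound1 : ∑' j : ℤ, F₁ j
      ≤ ENNReal.ofReal (C^2 * t^(-(2*σ))) * (1 - ENNReal.ofReal rL)⁻¹ := by
    apply tsum_left_tail F₁ j₀ _ _ (ENNReal.ofReal_lt_one.2 hrL1)
    · intro j hj
      set m : ℕ := (j₀ - j).toNat with hm_def
      have hjm : (j:ℝ) = (j₀:ℝ) - m := by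
        have hz : j = j₀ - (m:ℤ) := by omega
        rw [hz]; push_cast; ring
      have hreal : (C * (2:ℝ)^((2*σ) * (j:ℝ)))^2 ≤ (C^2 * t^(-(2*σ))) * rL^m := by
        have he : (C * (2:ℝ)^((2*σ) * (j:ℝ)))^2 = C^2 * (2:ℝ)^(4*σ*(j:ℝ)) := by
          rw [mul_pow, sq ((2:ℝ)^((2*σ) * (j:ℝ))), ← two_rpow_add]; ring_nf
        have hd : (2:ℝ)^(4*σ*(j:ℝ)) = (2:ℝ)^(4*σ*(j₀:ℝ)) * rL^m := by
          rw [hrL_def, two_rpow_nat, ← two_rpow_add, hjm]; ring_nf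
        rw [he, hd, ← mul_assoc]
        apply mul_le_mul_of_nonneg_right _ (by positivity)
        apply mul_le_mul_of_nonneg_left hscale (by positivity)
      calc F₁ j ≤ F j := by simp [hF₁_def, hj]
        _ ≤ bBlock n g j := block_le' n g t ht0.le j
        _ ≤ ENNReal.ofReal ((C * (2:ℝ)^((2*σ) * (j:ℝ)))^2) := hb j
        _ ≤ ENNReal.ofReal ((C^2 * t^(-(2*σ))) * rL^m) := ENNReal.ofReal_le_ofReal hreal
        _ = ENNReal.ofReal (C^2 * t^(-(2*σ))) * (ENNReal.ofReal rL)^m := by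
            rw [ENNReal.ofReal_mul (by positivity), ENNReal.ofReal_pow hrL0.le]
    · intro j hj
      simp [hF₂_def, hF₁_def, not_le.2 hj]
  have hbound2 : ∑' j : ℤ, F₂ j
      ≤ ENNReal.ofReal (C^2 * K * t^(-(2*σ))) * (1 - ENNReal.ofReal rR)⁻¹ := by
    apply tsum_right_tail F₂ j₀ _ _ (ENNReal.ofReal_lt_one.2 hrR1)
    · intro j hj
      set m : ℕ := (j - j₀).toNat with hm_def
      have hm1 : 1 ≤ m := by omega
      have hjm : (j:ℝ) = (j₀:ℝ) + m := by
        have hz : j = j₀ + (m:ℤ) := by omega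
        rw [hz]; push_cast; ring
      set x : ℝ := t * (2:ℝ)^(2*(j:ℝ)) with hx_def
      have hx0 : 0 < x := by
        have := Real.rpow_pos_of_pos two_pos (2*(j:ℝ)); positivity
      -- x ≥ m
      have hxm : (m:ℝ) ≤ x := by
        have h41 : (1:ℝ) < t * (4:ℝ)^(j₀+1) := by
          have h := (div_lt_iff₀ ht0).1 hj₀2
          rwa [mul_comm] at h
        have hsplit4 : x = (t * (4:ℝ)^(j₀+1)) * (4:ℝ)^((m:ℤ)-1) := by
          have hz : j = (j₀+1) + ((m:ℤ)-1) := by omega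
          rw [hx_def, ← four_zpow j, hz, zpow_add₀ (by norm_num : (4:ℝ) ≠ 0)]
          ring
        rw [hsplit4]
        calc (m:ℝ) ≤ (4:ℝ)^((m:ℤ)-1) := nat_le_four_pow m hm1
          _ ≤ (t * (4:ℝ)^(j₀+1)) * (4:ℝ)^((m:ℤ)-1) := by
              nlinarith [zpow_pos (show (0:ℝ) < 4 by norm_num) ((m:ℤ)-1)]
      have hreal : Real.exp (-(2*t) * ((2:ℝ)^j)^2) * (C * (2:ℝ)^((2*σ) * (j:ℝ)))^2
          ≤ (C^2 * K * t^(-(2*σ))) * rR^m := by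
        have he : (C * (2:ℝ)^((2*σ) * (j:ℝ)))^2 = C^2 * (2:ℝ)^(4*σ*(j:ℝ)) := by
          rw [mul_pow, sq ((2:ℝ)^((2*σ) * (j:ℝ))), ← two_rpow_add]; ring_nf
        have hxt : (2:ℝ)^(4*σ*(j:ℝ)) = x^(2*σ) * t^(-(2*σ)) := by
          have : (2:ℝ)^(2*(j:ℝ)) = x / t := by rw [hx_def]; field_simp
          rw [show (4*σ*(j:ℝ)) = (2*(j:ℝ)) * (2*σ) by ring, ← two_rpow_rpow, this,
            Real.div_rpow hx0.le ht0.le, div_eq_mul_inv, ← Real.rpow_neg ht0.le]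
        have harg : -(2*t) * ((2:ℝ)^j)^2 = -(2*x) := by
          rw [two_zpow_sq, hx_def]; ring
        rw [he, hxt, harg]
        have hKx : x^(2*σ) ≤ K * Real.exp x := hK x hx0.le
        have hexp : Real.exp (-(2*x)) * (K * Real.exp x) = K * Real.exp (-x) := by
          have h := Real.exp_add (-(2*x)) x
          have h2 : -(2*x) + x = -x := by ring
          rw [h2] at h
          calc Real.exp (-(2*x)) * (K * Real.exp x)
              = K * (Real.exp (-(2*x)) * Real.exp x) := by ring
            _ = K * Real.exp (-x) := by rw [← h]
        have hstep : Real.exp (-(2*x)) * x^(2*σ) ≤ K * Real.exp (-x) := by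
          calc Real.exp (-(2*x)) * x^(2*σ) ≤ Real.exp (-(2*x)) * (K * Real.exp x) := by
                apply mul_le_mul_of_nonneg_left hKx (Real.exp_nonneg _)
            _ = K * Real.exp (-x) := hexp
        have hexp2 : Real.exp (-x) ≤ rR^m := by
          rw [hrR_def, ← Real.exp_nat_mul]
          apply Real.exp_le_exp.2
          push_cast
          linarith
        calc Real.exp (-(2*x)) * (C^2 * (x^(2*σ) * t^(-(2*σ))))
            = (C^2 * t^(-(2*σ))) * (Real.exp (-(2*x)) * x^(2*σ)) := by ring
          _ ≤ (C^2 * t^(-(2*σ))) * (K * Real.exp (-x)) := by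
              apply mul_le_mul_of_nonneg_left hstep (by positivity)
          _ ≤ (C^2 * t^(-(2*σ))) * (K * rR^m) := by
              apply mul_le_mul_of_nonneg_left _ (by positivity)
              exact mul_le_mul_of_nonneg_left hexp2 (by linarith)
          _ = (C^2 * K * t^(-(2*σ))) * rR^m := by ring
      calc F₂ j ≤ F j := by simp [hF₂_def, hj]
        _ ≤ ENNReal.ofReal (Real.exp (-(2*t) * ((2:ℝ)^j)^2)) * bBlock n g j :=
            block_le n g hg t ht0.le j
        _ ≤ ENNReal.ofReal (Real.exp (-(2*t) * ((2:ℝ)^j)^2))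
            * ENNReal.ofReal ((C * (2:ℝ)^((2*σ) * (j:ℝ)))^2) := by
            exact mul_le_mul_right (hb j) _
        _ = ENNReal.ofReal (Real.exp (-(2*t) * ((2:ℝ)^j)^2) * (C * (2:ℝ)^((2*σ) * (j:ℝ)))^2) := by
            rw [← ENNReal.ofReal_mul (Real.exp_nonneg _)]
        _ ≤ ENNReal.ofReal ((C^2 * K * t^(-(2*σ))) * rR^m) := ENNReal.ofReal_le_ofReal hreal
        _ = ENNReal.ofReal (C^2 * K * t^(-(2*σ))) * (ENNReal.ofReal rR)^m := by
            rw [ENNReal.ofReal_mul (by positivity), ENNReal.ofReal_pow hrR0.le]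
    · intro j hj
      simp [hF₂_def, not_lt.2 hj]
  have hconv : ∀ y : ℝ, 0 < y → y < 1 → ((1:ℝ≥0∞) - ENNReal.ofReal y)⁻¹
      = ENNReal.ofReal ((1-y)⁻¹) := by
    intro y hy0 hy1
    rw [← ENNReal.ofReal_one, ← ENNReal.ofReal_sub _ hy0.le,
      ← ENNReal.ofReal_inv_of_pos (by linarith)]
  calc ∑' j : ℤ, F j ≤ ∑' j : ℤ, (F₁ j + F₂ j) := ENNReal.tsum_le_tsum hsplit
    _ = ∑' j : ℤ, F₁ j + ∑' j : ℤ, F₂ j := ENNReal.tsum_add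
    _ ≤ ENNReal.ofReal (C^2 * t^(-(2*σ))) * (1 - ENNReal.ofReal rL)⁻¹
        + ENNReal.ofReal (C^2 * K * t^(-(2*σ))) * (1 - ENNReal.ofReal rR)⁻¹ :=
        add_le_add hbound1 hbound2
    _ = ENNReal.ofReal (KU * t^(-(2*σ))) := by
        have hn1 : (0:ℝ) ≤ C^2 * t^(-(2*σ)) * (1-rL)⁻¹ :=
          mul_nonneg (by positivity) (inv_nonneg.2 (by linarith))
        have hn2 : (0:ℝ) ≤ C^2 * K * t^(-(2*σ)) * (1-rR)⁻¹ :=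
          mul_nonneg (by positivity) (inv_nonneg.2 (by linarith))
        rw [hconv rL hrL0 hrL1, hconv rR hrR0 hrR1,
          ← ENNReal.ofReal_mul (by positivity), ← ENNReal.ofReal_mul (by positivity),
          ← ENNReal.ofReal_add hn1 hn2]
        congr 1
        rw [hKU_def]; ring

lemma find_window (jk : ℕ → ℤ) (hbot : Filter.Tendsto jk Filter.atTop Filter.atBot)
    (M : ℕ) (hgap : ∀ k : ℕ, |jk k - jk (k+1)| ≤ M) (j₀ : ℤ) (hj₀ : j₀ < jk 0) :
    ∃ k : ℕ, j₀ - M ≤ jk k ∧ jk k ≤ j₀ := by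
  have hex : ∃ k, jk k ≤ j₀ := (hbot.eventually (eventually_le_atBot j₀)).exists
  classical
  let k := Nat.find hex
  have hk : jk k ≤ j₀ := Nat.find_spec hex
  have hkpos : k ≠ 0 := by
    intro h
    rw [h] at hk
    omega
  have hk' : ¬ (jk (k-1) ≤ j₀) := Nat.find_min hex (by omega)
  have hg := hgap (k-1)
  have hke : k - 1 + 1 = k := by omega
  rw [hke, abs_le] at hg
  refine ⟨k, ?_, hk⟩
  omega

lemma forward_lower (n : ℕ) (hn : 1 ≤ n) (σ : ℝ) (hσ : 0 < σ)
    (g : EuclideanSpace ℝ (Fin n) → ℂ) (hg : Measurable g) (c : ℝ) (hc : 0 < c)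
    (jk : ℕ → ℤ) (hbot : Filter.Tendsto jk Filter.atTop Filter.atBot)
    (M : ℕ) (hgap : ∀ k : ℕ, |jk k - jk (k+1)| ≤ M)
    (hgood : ∀ k : ℕ, ENNReal.ofReal ((c * (2:ℝ)^((2*σ)*((jk k):ℝ)))^2) ≤ bBlock n g (jk k)) :
    ∃ KL T₀ : ℝ, 0 < KL ∧ 1 ≤ T₀ ∧ ∀ t : ℝ, T₀ ≤ t →
      ENNReal.ofReal (KL * t^(-(2*σ))) ≤ Ealpha n g 1 t := by
  set KL : ℝ := Real.exp (-8) * c^2 * (2:ℝ)^(-(4*σ)*((M:ℝ)+1)) with hKL_def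
  have hKL : 0 < KL := by
    have := Real.rpow_pos_of_pos two_pos (-(4*σ)*((M:ℝ)+1))
    positivity
  set T₀ : ℝ := max 1 ((4:ℝ)^(1 - jk 0)) with hT₀_def
  refine ⟨KL, T₀, hKL, le_max_left _ _, ?_⟩
  intro t ht
  have ht1 : (1:ℝ) ≤ t := le_trans (le_max_left _ _) ht
  have ht0 : 0 < t := lt_of_lt_of_le one_pos ht1
  obtain ⟨j₀, hj₀⟩ := exists_mem_Ico_zpow (show (0:ℝ) < 1/t by positivity)
    (show (1:ℝ) < 4 by norm_num)
  have hj₀1 : (4:ℝ)^j₀ ≤ 1/t := hj₀.1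
  have hj₀2 : 1/t < (4:ℝ)^(j₀+1) := hj₀.2
  -- j₀ < jk 0
  have hjlt : j₀ < jk 0 := by
    have hT : (4:ℝ)^(1 - jk 0) ≤ t := le_trans (le_max_right _ _) ht
    have h1t : 1/t ≤ (4:ℝ)^(jk 0 - 1) := by
      rw [div_le_iff₀ ht0]
      calc (1:ℝ) = (4:ℝ)^(jk 0 - 1) * (4:ℝ)^(1 - jk 0) := by
            rw [← zpow_add₀ (by norm_num : (4:ℝ) ≠ 0)]; norm_num
        _ ≤ (4:ℝ)^(jk 0 - 1) * t := by
            apply mul_le_mul_of_nonneg_left hT (le_of_lt (zpow_pos (by norm_num) _))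
    have : (4:ℝ)^j₀ ≤ (4:ℝ)^(jk 0 - 1) := le_trans hj₀1 h1t
    have := (zpow_le_zpow_iff_right₀ (show (1:ℝ) < 4 by norm_num)).1 this
    omega
  obtain ⟨k, hk1, hk2⟩ := find_window jk hbot M hgap j₀ hjlt
  set j : ℤ := jk k with hj_def
  -- lower bound E t by single block
  have hblock : ENNReal.ofReal (Real.exp (-(2*t) * ((2:ℝ)^(j+1))^2)) * bBlock n g j
      ≤ Ealpha n g 1 t := by
    rw [Ealpha_one]
    exact le_trans (le_block n g hg t ht0.le j) (setLIntegral_le_lintegral _ _)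
  -- the exponential factor is ≥ exp(-8)
  have hexp : Real.exp (-8) ≤ Real.exp (-(2*t) * ((2:ℝ)^(j+1))^2) := by
    apply Real.exp_le_exp.2
    have h4 : ((2:ℝ)^(j+1))^2 = (4:ℝ)^(j+1) := by
      rw [four_zpow, ← two_zpow_sq]
    rw [h4]
    have hle : (4:ℝ)^(j+1) ≤ (4:ℝ)^(j₀+1) :=
      zpow_le_zpow_right₀ (by norm_num) (by omega)
    have h44 : (4:ℝ)^(j₀+1) ≤ 4 * (1/t) := by
      calc (4:ℝ)^(j₀+1) = 4 * (4:ℝ)^j₀ := by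
            rw [add_comm, zpow_add₀ (by norm_num : (4:ℝ) ≠ 0)]; norm_num
        _ ≤ 4 * (1/t) := by linarith [hj₀1]
    have ht4 : t * (4:ℝ)^(j+1) ≤ 4 := by
      calc t * (4:ℝ)^(j+1) ≤ t * (4 * (1/t)) := by
            apply mul_le_mul_of_nonneg_left (le_trans hle h44) ht0.le
        _ = 4 := by field_simp
    nlinarith [zpow_pos (show (0:ℝ) < 4 by norm_num) (j+1)]
  -- the block value is ≥ c² 2^{-4σ(M+1)} t^{-2σ}
  have hval : (c^2 * (2:ℝ)^(-(4*σ)*((M:ℝ)+1)) * t^(-(2*σ)))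
      ≤ (c * (2:ℝ)^((2*σ)*((j:ℤ):ℝ)))^2 := by
    have he : (c * (2:ℝ)^((2*σ)*((j:ℤ):ℝ)))^2 = c^2 * (2:ℝ)^(4*σ*(j:ℝ)) := by
      rw [mul_pow, sq ((2:ℝ)^((2*σ)*((j:ℤ):ℝ))), ← two_rpow_add]; ring_nf
    rw [he]
    -- 2^{4σ j₀} ≥ 2^{-4σ} t^{-2σ}
    have hsc : (2:ℝ)^(-(4*σ)) * t^(-(2*σ)) ≤ (2:ℝ)^(4*σ*(j₀:ℝ)) := by
      have h1 : 1/(4*t) ≤ (4:ℝ)^j₀ := by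
        rw [div_le_iff₀ (by positivity)]
        have := (div_lt_iff₀ ht0).1 hj₀2
        calc (1:ℝ) ≤ (4:ℝ)^(j₀+1) * t := this.le
          _ = (4:ℝ)^j₀ * (4*t) := by
              rw [add_comm, zpow_add₀ (by norm_num : (4:ℝ) ≠ 0)]; ring
      have h2 : ((1:ℝ)/(4*t))^(2*σ) ≤ ((4:ℝ)^j₀)^(2*σ) :=
        Real.rpow_le_rpow (by positivity) h1 (by positivity)
      have h3 : ((4:ℝ)^j₀)^(2*σ) = (2:ℝ)^(4*σ*(j₀:ℝ)) := by
        rw [four_zpow, two_rpow_rpow]; ring_nf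
      have h4 : ((1:ℝ)/(4*t))^(2*σ) = (2:ℝ)^(-(4*σ)) * t^(-(2*σ)) := by
        rw [one_div, mul_inv, ← one_div, ← one_div,
          Real.mul_rpow (by positivity) (by positivity)]
        congr 1
        · rw [one_div, ← Real.rpow_neg_one (4:ℝ), ← Real.rpow_mul (by norm_num : (0:ℝ) ≤ 4),
            show (4:ℝ) = (2:ℝ)^(2:ℝ) by rw [Real.rpow_two]; norm_num, two_rpow_rpow]
          ring_nf
        · rw [one_div, ← Real.rpow_neg_one t, ← Real.rpow_mul ht0.le]
          ring_nf
      rw [← h3, ← h4]; exact h2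
    have hmon : (2:ℝ)^(4*σ*(j₀:ℝ) + (-(4*σ)*(M:ℝ))) ≤ (2:ℝ)^(4*σ*(j:ℝ)) := by
      apply Real.rpow_le_rpow_of_exponent_le one_le_two
      have : (j₀:ℝ) - (M:ℝ) ≤ (j:ℝ) := by exact_mod_cast hk1
      nlinarith
    calc c^2 * (2:ℝ)^(-(4*σ)*((M:ℝ)+1)) * t^(-(2*σ))
        = c^2 * ((2:ℝ)^(-(4*σ)*(M:ℝ)) * ((2:ℝ)^(-(4*σ)) * t^(-(2*σ)))) := by
          rw [show (-(4*σ)*((M:ℝ)+1)) = (-(4*σ)*(M:ℝ)) + (-(4*σ)) by ring, two_rpow_add]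
          ring
      _ ≤ c^2 * ((2:ℝ)^(-(4*σ)*(M:ℝ)) * (2:ℝ)^(4*σ*(j₀:ℝ))) := by
          apply mul_le_mul_of_nonneg_left _ (by positivity)
          apply mul_le_mul_of_nonneg_left hsc (by positivity)
      _ = c^2 * (2:ℝ)^(4*σ*(j₀:ℝ) + (-(4*σ)*(M:ℝ))) := by
          rw [two_rpow_add]; ring
      _ ≤ c^2 * (2:ℝ)^(4*σ*(j:ℝ)) := by
          apply mul_le_mul_of_nonneg_left hmon (by positivity)
  calc ENNReal.ofReal (KL * t^(-(2*σ)))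
      = ENNReal.ofReal (Real.exp (-8)) * ENNReal.ofReal
          (c^2 * (2:ℝ)^(-(4*σ)*((M:ℝ)+1)) * t^(-(2*σ))) := by
        rw [← ENNReal.ofReal_mul (Real.exp_nonneg _), hKL_def]
        congr 1
        ring
    _ ≤ ENNReal.ofReal (Real.exp (-(2*t) * ((2:ℝ)^(j+1))^2))
        * ENNReal.ofReal ((c * (2:ℝ)^((2*σ)*((j:ℤ):ℝ)))^2) := by
        apply mul_le_mul' (ENNReal.ofReal_le_ofReal hexp) (ENNReal.ofReal_le_ofReal hval)
    _ ≤ ENNReal.ofReal (Real.exp (-(2*t) * ((2:ℝ)^(j+1))^2)) * bBlock n g j := by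
        exact mul_le_mul_right (hgood k) _
    _ ≤ Ealpha n g 1 t := hblock

lemma rpow_neg_mono {a b p : ℝ} (ha : 0 < a) (hab : a ≤ b) (hp : 0 ≤ p) :
    b^(-p) ≤ a^(-p) := by
  rw [Real.rpow_neg (by linarith), Real.rpow_neg ha.le]
  exact inv_anti₀ (Real.rpow_pos_of_pos ha p) (Real.rpow_le_rpow ha.le hab hp)

lemma sq_zpow_succ (j : ℤ) : ((2:ℝ)^(j+1))^2 = (4:ℝ)^(j+1) := by
  rw [four_zpow, ← two_zpow_sq]

lemma reverse_blocks_upper (n : ℕ) (hn : 1 ≤ n) (σ : ℝ) (hσ : 0 < σ)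
    (g : EuclideanSpace ℝ (Fin n) → ℂ) (hg : Measurable g) (c' : ℝ) (hc' : 0 < c')
    (hup : ∀ t : ℝ, 0 ≤ t → Ealpha n g 1 t ≤ ENNReal.ofReal (c' * (1+t)^(-(2*σ)))) :
    ∀ j : ℤ, bBlock n g j ≤ ENNReal.ofReal ((Real.exp 8 * c') * (2:ℝ)^(4*σ*(j:ℝ))) := by
  intro j
  rcases le_or_gt j 0 with hj | hj
  · set t : ℝ := (4:ℝ)^(-j) with ht_def
    have ht0 : 0 < t := zpow_pos (by norm_num) _
    have harg : -(2*t) * ((2:ℝ)^(j+1))^2 = -8 := by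
      have h44 : (4:ℝ)^(-j) * (4:ℝ)^(j+1) = 4 := by
        rw [← zpow_add₀ (by norm_num : (4:ℝ) ≠ 0), show -j + (j+1) = 1 by ring]
        norm_num
      rw [sq_zpow_succ, ht_def]
      linear_combination (-2 : ℝ) * h44
    have hkey : ENNReal.ofReal (Real.exp (-8)) * bBlock n g j ≤ Ealpha n g 1 t := by
      rw [Ealpha_one, ← harg]
      exact le_trans (le_block n g hg t ht0.le j) (setLIntegral_le_lintegral _ _)
    have hE := hup t ht0.le
    have hmul : bBlock n g j ≤ ENNReal.ofReal (Real.exp 8) *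
        ENNReal.ofReal (c' * (1+t)^(-(2*σ))) := by
      have h1 : bBlock n g j = ENNReal.ofReal (Real.exp 8) *
          (ENNReal.ofReal (Real.exp (-8)) * bBlock n g j) := by
        rw [← mul_assoc, ← ENNReal.ofReal_mul (Real.exp_nonneg _), ← Real.exp_add]
        norm_num
      rw [h1]
      exact mul_le_mul_right (le_trans hkey hE) _
    have hfin : Real.exp 8 * (c' * (1+t)^(-(2*σ)))
        ≤ (Real.exp 8 * c') * (2:ℝ)^(4*σ*(j:ℝ)) := by
      have h2 : (1+t)^(-(2*σ)) ≤ t^(-(2*σ)) := rpow_neg_mono ht0 (by linarith) (by positivity)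
      have h3 : t^(-(2*σ)) = (2:ℝ)^(4*σ*(j:ℝ)) := by
        rw [ht_def, four_zpow, two_rpow_rpow]
        push_cast
        ring_nf
      rw [← h3]
      calc Real.exp 8 * (c' * (1+t)^(-(2*σ))) = (Real.exp 8 * c') * (1+t)^(-(2*σ)) := by ring
        _ ≤ (Real.exp 8 * c') * t^(-(2*σ)) := by
            apply mul_le_mul_of_nonneg_left h2 (by positivity)
    calc bBlock n g j ≤ ENNReal.ofReal (Real.exp 8) * ENNReal.ofReal (c' * (1+t)^(-(2*σ))) :=
          hmul
      _ = ENNReal.ofReal (Real.exp 8 * (c' * (1+t)^(-(2*σ)))) := by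
          rw [← ENNReal.ofReal_mul (Real.exp_nonneg _)]
      _ ≤ ENNReal.ofReal ((Real.exp 8 * c') * (2:ℝ)^(4*σ*(j:ℝ))) :=
          ENNReal.ofReal_le_ofReal hfin
  · have h1 : bBlock n g j ≤ Ealpha n g 1 0 := by
      rw [Ealpha_zero]
      exact setLIntegral_le_lintegral _ _
    have h2 := hup 0 le_rfl
    have h3 : c' * ((1:ℝ)+0)^(-(2*σ)) = c' := by
      norm_num
    rw [h3] at h2
    have h4 : c' ≤ (Real.exp 8 * c') * (2:ℝ)^(4*σ*(j:ℝ)) := by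
      have he : (1:ℝ) ≤ Real.exp 8 := by
        rw [show (1:ℝ) = Real.exp 0 by simp]
        exact Real.exp_le_exp.2 (by norm_num)
      have hr : (1:ℝ) ≤ (2:ℝ)^(4*σ*(j:ℝ)) := by
        apply Real.one_le_rpow one_le_two
        have : (1:ℝ) ≤ (j:ℝ) := by exact_mod_cast hj
        nlinarith
      calc c' ≤ Real.exp 8 * c' := by nlinarith
        _ = (Real.exp 8 * c') * 1 := by ring
        _ ≤ (Real.exp 8 * c') * (2:ℝ)^(4*σ*(j:ℝ)) := by
            apply mul_le_mul_of_nonneg_left hr (by positivity)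
    exact le_trans h1 (le_trans h2 (ENNReal.ofReal_le_ofReal h4))

set_option maxHeartbeats 1000000 in
lemma reverse_window (n : ℕ) (hn : 1 ≤ n) (σ : ℝ) (hσ : 0 < σ)
    (g : EuclideanSpace ℝ (Fin n) → ℂ) (hg : Measurable g) (c C₀ : ℝ)
    (hc : 0 < c) (hC₀ : 0 < C₀)
    (hb : ∀ j : ℤ, bBlock n g j ≤ ENNReal.ofReal (C₀ * (2:ℝ)^(4*σ*(j:ℝ))))
    (hlow : ∀ t : ℝ, 0 ≤ t → ENNReal.ofReal (c * (1+t)^(-(2*σ))) ≤ Ealpha n g 1 t) :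
    ∃ ε : ℝ, 0 < ε ∧ ∃ M : ℕ, 1 ≤ M ∧ ∀ j₀ : ℤ, j₀ ≤ 0 →
      ∃ j : ℤ, j₀ - M ≤ j ∧ j ≤ j₀ + M ∧
        ENNReal.ofReal ((ε * (2:ℝ)^((2*σ)*(j:ℝ)))^2) ≤ bBlock n g j := by
  obtain ⟨K, hK1, hK⟩ := rpow_le_exp_aux (2*σ) (by positivity)
  set rL : ℝ := (2:ℝ)^(-(4*σ)) with hrL_def
  have hrL0 : 0 < rL := Real.rpow_pos_of_pos two_pos _
  have hrL1 : rL < 1 := Real.rpow_lt_one_of_one_lt_of_neg one_lt_two (by linarith)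
  set rR : ℝ := Real.exp (-1) with hrR_def
  have hrR0 : 0 < rR := Real.exp_pos _
  have hrR1 : rR < 1 := Real.exp_lt_one_iff.2 (by norm_num)
  set G : ℝ := (1 - rL)⁻¹ with hG_def
  have hG : 0 < G := inv_pos.2 (by linarith)
  set GR : ℝ := (1 - rR)⁻¹ with hGR_def
  have hGR : 0 < GR := inv_pos.2 (by linarith)
  set target : ℝ := c * (2:ℝ)^(-(2*σ)) with htarget_def
  have htarget : 0 < target := by
    have := Real.rpow_pos_of_pos two_pos (-(2*σ)); positivity
  -- choose M
  have htend : Filter.Tendsto (fun M : ℕ => C₀ * G * rL^(M+1) + C₀ * K * GR * rR^M)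
      Filter.atTop (𝓝 0) := by
    have t1 : Filter.Tendsto (fun M : ℕ => rL^M) Filter.atTop (𝓝 0) :=
      tendsto_pow_atTop_nhds_zero_of_lt_one hrL0.le hrL1
    have t2 : Filter.Tendsto (fun M : ℕ => rR^M) Filter.atTop (𝓝 0) :=
      tendsto_pow_atTop_nhds_zero_of_lt_one hrR0.le hrR1
    have t3 : Filter.Tendsto (fun M : ℕ => C₀ * G * rL^(M+1)) Filter.atTop (𝓝 0) := by
      have := (t1.mul_const rL).const_mul (C₀ * G)
      simpa [pow_succ, mul_assoc] using this
    have t4 : Filter.Tendsto (fun M : ℕ => C₀ * K * GR * rR^M) Filter.atTop (𝓝 0) := by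
      have := t2.const_mul (C₀ * K * GR)
      simpa using this
    simpa using t3.add t4
  obtain ⟨M, hM1, hMlt⟩ : ∃ M : ℕ, 1 ≤ M ∧
      C₀ * G * rL^(M+1) + C₀ * K * GR * rR^M < target/2 := by
    have hev := (htend.eventually (eventually_lt_nhds (show (0:ℝ) < target/2 by positivity))).and
      (Filter.eventually_ge_atTop 1)
    obtain ⟨M, hM⟩ := hev.exists
    exact ⟨M, hM.2, hM.1⟩
  -- choose ε
  set ε2 : ℝ := target / (4 * (2:ℝ)^(4*σ*(M:ℝ)) * G) with hε2_def
  have hε2 : 0 < ε2 := by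
    have := Real.rpow_pos_of_pos two_pos (4*σ*(M:ℝ)); positivity
  set ε : ℝ := Real.sqrt ε2 with hε_def
  have hε : 0 < ε := Real.sqrt_pos.2 hε2
  have hεsq : ε^2 = ε2 := Real.sq_sqrt hε2.le
  refine ⟨ε, hε, M, hM1, ?_⟩
  intro j₀ hj₀0
  by_contra hcon
  push_neg at hcon
  have hwin : ∀ j : ℤ, j₀ - M ≤ j → j ≤ j₀ + M →
      bBlock n g j ≤ ENNReal.ofReal (ε2 * (2:ℝ)^(4*σ*(j:ℝ))) := by
    intro j h1 h2
    have := hcon j h1 h2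
    have heq : (ε * (2:ℝ)^((2*σ)*(j:ℝ)))^2 = ε2 * (2:ℝ)^(4*σ*(j:ℝ)) := by
      rw [mul_pow, hεsq, sq ((2:ℝ)^((2*σ)*(j:ℝ))), ← two_rpow_add]
      ring_nf
    rw [heq] at this
    exact le_of_lt this
  set t : ℝ := (4:ℝ)^(-j₀) with ht_def
  have ht0 : 0 < t := zpow_pos (by norm_num) _
  have ht1 : 1 ≤ t := by
    rw [ht_def, show (1:ℝ) = (4:ℝ)^(0:ℤ) by norm_num]
    exact zpow_le_zpow_right₀ (by norm_num) (by omega)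
  -- exact scaling : t^(-2σ) = 2^{4σ j₀}
  have hts : t^(-(2*σ)) = (2:ℝ)^(4*σ*(j₀:ℝ)) := by
    rw [ht_def, four_zpow, two_rpow_rpow]
    push_cast
    ring_nf
  have htneg : 0 < t^(-(2*σ)) := Real.rpow_pos_of_pos ht0 _
  -- upper estimate on E t
  set F : ℤ → ℝ≥0∞ := fun j => ∫⁻ ξ in Aset n j, W n g t ξ with hF_def
  set j₁L : ℤ := j₀ - M - 1 with hj₁L_def
  set j₁R : ℤ := j₀ + M with hj₁R_def
  set F₁ : ℤ → ℝ≥0∞ := fun j => if j ≤ j₁L then F j else 0 with hF₁_def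
  set F₂ : ℤ → ℝ≥0∞ := fun j => if j₁L < j ∧ j ≤ j₁R then F j else 0 with hF₂_def
  set F₃ : ℤ → ℝ≥0∞ := fun j => if j₁R < j then F j else 0 with hF₃_def
  have hsplit : ∀ j, F j ≤ F₁ j + F₂ j + F₃ j := by
    intro j
    simp only [hF₁_def, hF₂_def, hF₃_def]
    rcases le_or_gt j j₁L with h | h
    · rw [if_pos h, if_neg (by omega), if_neg (by omega)]; simp
    · rcases le_or_gt j j₁R with h' | h'
      · rw [if_neg (by omega), if_pos (show j₁L < j ∧ j ≤ j₁R from ⟨h, h'⟩), if_neg (by omega)]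
        simp
      · rw [if_neg (by omega), if_neg (by omega), if_pos h']; simp
  -- generic exponent decomposition
  have hdecomp : ∀ (a : ℝ) (ha : 0 < a) (j₁ j : ℤ), j ≤ j₁ →
      a * (2:ℝ)^(4*σ*(j:ℝ)) = (a * (2:ℝ)^(4*σ*((j₁:ℤ):ℝ))) * rL^((j₁ - j).toNat) := by
    intro a ha j₁ j hj
    set m : ℕ := (j₁ - j).toNat with hm_def
    have hjm : (j:ℝ) = (j₁:ℝ) - m := by
      have hz : j = j₁ - (m:ℤ) := by omega
      rw [hz]; push_cast; ring
    rw [hrL_def, two_rpow_nat, hjm,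
      show (4*σ*((j₁:ℝ) - (m:ℝ))) = (4*σ*(j₁:ℝ)) + (-(4*σ)*(m:ℝ)) by ring, two_rpow_add]
    ring
  have hbound1 : ∑' j : ℤ, F₁ j
      ≤ ENNReal.ofReal (C₀ * (2:ℝ)^(4*σ*((j₁L:ℤ):ℝ))) * (1 - ENNReal.ofReal rL)⁻¹ := by
    apply tsum_left_tail F₁ j₁L _ _ (ENNReal.ofReal_lt_one.2 hrL1)
    · intro j hj
      calc F₁ j ≤ F j := by simp [hF₁_def, hj]
        _ ≤ bBlock n g j := block_le' n g t ht0.le j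
        _ ≤ ENNReal.ofReal (C₀ * (2:ℝ)^(4*σ*(j:ℝ))) := hb j
        _ = ENNReal.ofReal ((C₀ * (2:ℝ)^(4*σ*((j₁L:ℤ):ℝ))) * rL^((j₁L - j).toNat)) := by
            rw [← hdecomp C₀ hC₀ j₁L j hj]
        _ = ENNReal.ofReal (C₀ * (2:ℝ)^(4*σ*((j₁L:ℤ):ℝ))) * (ENNReal.ofReal rL)^((j₁L - j).toNat) := by
            rw [ENNReal.ofReal_mul (by positivity), ENNReal.ofReal_pow hrL0.le]
    · intro j hj
      simp only [hF₁_def]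
      exact if_neg (by omega)
  have hbound2 : ∑' j : ℤ, F₂ j
      ≤ ENNReal.ofReal (ε2 * (2:ℝ)^(4*σ*((j₁R:ℤ):ℝ))) * (1 - ENNReal.ofReal rL)⁻¹ := by
    apply tsum_left_tail F₂ j₁R _ _ (ENNReal.ofReal_lt_one.2 hrL1)
    · intro j hj
      rcases le_or_gt j j₁L with h | h
      · simp only [hF₂_def, if_neg ((by omega : ¬ (j₁L < j ∧ j ≤ j₁R)))]
        exact zero_le
      · calc F₂ j ≤ F j := by simp [hF₂_def, h, hj]
          _ ≤ bBlock n g j := block_le' n g t ht0.le j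
          _ ≤ ENNReal.ofReal (ε2 * (2:ℝ)^(4*σ*(j:ℝ))) := hwin j (by omega) (by omega)
          _ = ENNReal.ofReal ((ε2 * (2:ℝ)^(4*σ*((j₁R:ℤ):ℝ))) * rL^((j₁R - j).toNat)) := by
              rw [← hdecomp ε2 hε2 j₁R j hj]
          _ = ENNReal.ofReal (ε2 * (2:ℝ)^(4*σ*((j₁R:ℤ):ℝ))) * (ENNReal.ofReal rL)^((j₁R - j).toNat) := by
              rw [ENNReal.ofReal_mul (by positivity), ENNReal.ofReal_pow hrL0.le]
    · intro j hj
      simp only [hF₂_def]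
      exact if_neg (by omega)
  have hbound3 : ∑' j : ℤ, F₃ j
      ≤ ENNReal.ofReal ((C₀ * K * t^(-(2*σ)) * rR^M)) * (1 - ENNReal.ofReal rR)⁻¹ := by
    apply tsum_right_tail F₃ j₁R _ _ (ENNReal.ofReal_lt_one.2 hrR1)
    · intro j hj
      set m : ℕ := (j - j₁R).toNat with hm_def
      have hm1 : 1 ≤ m := by omega
      set x : ℝ := t * (2:ℝ)^(2*(j:ℝ)) with hx_def
      have hx0 : 0 < x := by
        have := Real.rpow_pos_of_pos two_pos (2*(j:ℝ)); positivity
      -- x = 4^{j - j₀} exactly, and j - j₀ = m + M ≥ 1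
      have hxe : x = (4:ℝ)^((m:ℤ) + M) := by
        have hz : (m:ℤ) + M = j - j₀ := by omega
        rw [hx_def, ← four_zpow j, ht_def, ← zpow_add₀ (by norm_num : (4:ℝ) ≠ 0), hz]
        congr 1
        omega
      have hxm : ((m:ℝ) + M) ≤ x := by
        rw [hxe]
        have h1 : ((m + M : ℕ):ℝ) ≤ (4:ℝ)^(((m+M:ℕ):ℤ)-1) := nat_le_four_pow (m+M) (by omega)
        have h2 : (4:ℝ)^(((m+M:ℕ):ℤ)-1) ≤ (4:ℝ)^((m:ℤ) + M) :=
          zpow_le_zpow_right₀ (by norm_num) (by push_cast; omega)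
        calc ((m:ℝ) + M) = ((m + M : ℕ):ℝ) := by push_cast; ring
          _ ≤ (4:ℝ)^((m:ℤ) + M) := le_trans h1 h2
      have hreal : Real.exp (-(2*t) * ((2:ℝ)^j)^2) * (C₀ * (2:ℝ)^(4*σ*(j:ℝ)))
          ≤ (C₀ * K * t^(-(2*σ)) * rR^M) * rR^m := by
        have hxt : (2:ℝ)^(4*σ*(j:ℝ)) = x^(2*σ) * t^(-(2*σ)) := by
          have hq : (2:ℝ)^(2*(j:ℝ)) = x / t := by rw [hx_def]; field_simp
          rw [show (4*σ*(j:ℝ)) = (2*(j:ℝ)) * (2*σ) by ring, ← two_rpow_rpow, hq,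
            Real.div_rpow hx0.le ht0.le, div_eq_mul_inv, ← Real.rpow_neg ht0.le]
        have harg : -(2*t) * ((2:ℝ)^j)^2 = -(2*x) := by
          rw [two_zpow_sq, hx_def]; ring
        rw [hxt, harg]
        have hKx : x^(2*σ) ≤ K * Real.exp x := hK x hx0.le
        have hexp : Real.exp (-(2*x)) * (K * Real.exp x) = K * Real.exp (-x) := by
          have h := Real.exp_add (-(2*x)) x
          have h2 : -(2*x) + x = -x := by ring
          rw [h2] at h
          calc Real.exp (-(2*x)) * (K * Real.exp x)
              = K * (Real.exp (-(2*x)) * Real.exp x) := by ring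
            _ = K * Real.exp (-x) := by rw [← h]
        have hstep : Real.exp (-(2*x)) * x^(2*σ) ≤ K * Real.exp (-x) := by
          calc Real.exp (-(2*x)) * x^(2*σ) ≤ Real.exp (-(2*x)) * (K * Real.exp x) :=
              mul_le_mul_of_nonneg_left hKx (Real.exp_nonneg _)
            _ = K * Real.exp (-x) := hexp
        have hexp2 : Real.exp (-x) ≤ rR^M * rR^m := by
          rw [hrR_def, ← Real.exp_nat_mul, ← Real.exp_nat_mul, ← Real.exp_add]
          apply Real.exp_le_exp.2
          push_cast
          linarith
        calc Real.exp (-(2*x)) * (C₀ * (x^(2*σ) * t^(-(2*σ))))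
            = (C₀ * t^(-(2*σ))) * (Real.exp (-(2*x)) * x^(2*σ)) := by ring
          _ ≤ (C₀ * t^(-(2*σ))) * (K * Real.exp (-x)) :=
              mul_le_mul_of_nonneg_left hstep (by positivity)
          _ ≤ (C₀ * t^(-(2*σ))) * (K * (rR^M * rR^m)) := by
              apply mul_le_mul_of_nonneg_left _ (by positivity)
              exact mul_le_mul_of_nonneg_left hexp2 (by linarith)
          _ = (C₀ * K * t^(-(2*σ)) * rR^M) * rR^m := by ring
      calc F₃ j ≤ F j := by simp [hF₃_def, hj]
        _ ≤ ENNReal.ofReal (Real.exp (-(2*t) * ((2:ℝ)^j)^2)) * bBlock n g j :=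
            block_le n g hg t ht0.le j
        _ ≤ ENNReal.ofReal (Real.exp (-(2*t) * ((2:ℝ)^j)^2))
            * ENNReal.ofReal (C₀ * (2:ℝ)^(4*σ*(j:ℝ))) := mul_le_mul_right (hb j) _
        _ = ENNReal.ofReal (Real.exp (-(2*t) * ((2:ℝ)^j)^2) * (C₀ * (2:ℝ)^(4*σ*(j:ℝ)))) := by
            rw [← ENNReal.ofReal_mul (Real.exp_nonneg _)]
        _ ≤ ENNReal.ofReal ((C₀ * K * t^(-(2*σ)) * rR^M) * rR^m) :=
            ENNReal.ofReal_le_ofReal hreal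
        _ = ENNReal.ofReal (C₀ * K * t^(-(2*σ)) * rR^M) * (ENNReal.ofReal rR)^m := by
            rw [ENNReal.ofReal_mul (by positivity), ENNReal.ofReal_pow hrR0.le]
    · intro j hj
      simp only [hF₃_def]
      exact if_neg (by omega)
  -- combine
  have hconv : ∀ y : ℝ, 0 < y → y < 1 → ((1:ℝ≥0∞) - ENNReal.ofReal y)⁻¹
      = ENNReal.ofReal ((1-y)⁻¹) := by
    intro y hy0 hy1
    rw [← ENNReal.ofReal_one, ← ENNReal.ofReal_sub _ hy0.le,
      ← ENNReal.ofReal_inv_of_pos (by linarith)]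
  set S : ℝ := C₀ * (2:ℝ)^(4*σ*((j₁L:ℤ):ℝ)) * G + ε2 * (2:ℝ)^(4*σ*((j₁R:ℤ):ℝ)) * G
      + C₀ * K * t^(-(2*σ)) * rR^M * GR with hS_def
  have hEup : Ealpha n g 1 t ≤ ENNReal.ofReal S := by
    rw [Ealpha_eq_tsum n hn g t]
    calc ∑' j : ℤ, F j ≤ ∑' j : ℤ, (F₁ j + F₂ j + F₃ j) := ENNReal.tsum_le_tsum hsplit
      _ = ∑' j : ℤ, F₁ j + ∑' j : ℤ, F₂ j + ∑' j : ℤ, F₃ j := by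
          rw [ENNReal.tsum_add, ENNReal.tsum_add]
      _ ≤ ENNReal.ofReal (C₀ * (2:ℝ)^(4*σ*((j₁L:ℤ):ℝ))) * (1 - ENNReal.ofReal rL)⁻¹
          + ENNReal.ofReal (ε2 * (2:ℝ)^(4*σ*((j₁R:ℤ):ℝ))) * (1 - ENNReal.ofReal rL)⁻¹
          + ENNReal.ofReal ((C₀ * K * t^(-(2*σ)) * rR^M)) * (1 - ENNReal.ofReal rR)⁻¹ :=
          add_le_add (add_le_add hbound1 hbound2) hbound3
      _ = ENNReal.ofReal S := by
          rw [hconv rL hrL0 hrL1, hconv rR hrR0 hrR1,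
            ← ENNReal.ofReal_mul (by positivity), ← ENNReal.ofReal_mul (by positivity),
            ← ENNReal.ofReal_mul (by positivity),
            ← ENNReal.ofReal_add (by positivity) (by positivity),
            ← ENNReal.ofReal_add (by positivity) (by positivity), hS_def, hG_def, hGR_def]
  -- lower estimate on E t
  have hElow : ENNReal.ofReal (target * t^(-(2*σ))) ≤ Ealpha n g 1 t := by
    refine le_trans (ENNReal.ofReal_le_ofReal ?_) (hlow t ht0.le)
    have h2t : (1+t)^(-(2*σ)) ≥ (2*t)^(-(2*σ)) := rpow_neg_mono (by linarith) (by linarith)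
      (by positivity)
    have hmul : (2*t)^(-(2*σ)) = (2:ℝ)^(-(2*σ)) * t^(-(2*σ)) :=
      Real.mul_rpow (by norm_num) ht0.le
    calc target * t^(-(2*σ)) = c * ((2:ℝ)^(-(2*σ)) * t^(-(2*σ))) := by
          rw [htarget_def]; ring
      _ = c * (2*t)^(-(2*σ)) := by rw [hmul]
      _ ≤ c * (1+t)^(-(2*σ)) := mul_le_mul_of_nonneg_left h2t hc.le
  -- S < target * t^{-2σ} : contradiction
  have hSlt : S < target * t^(-(2*σ)) := by
    have e1 : C₀ * (2:ℝ)^(4*σ*((j₁L:ℤ):ℝ)) * G = (C₀ * G * rL^(M+1)) * t^(-(2*σ)) := by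
      have := hdecomp C₀ hC₀ j₀ j₁L (by omega)
      have hm : (j₀ - j₁L).toNat = M + 1 := by omega
      rw [hm] at this
      rw [this, hts]
      ring
    have e2 : ε2 * (2:ℝ)^(4*σ*((j₁R:ℤ):ℝ)) * G = target/4 * t^(-(2*σ)) := by
      have hjr : ((j₁R:ℤ):ℝ) = (j₀:ℝ) + (M:ℝ) := by rw [hj₁R_def]; push_cast; ring
      have hexpand : (2:ℝ)^(4*σ*((j₁R:ℤ):ℝ)) = (2:ℝ)^(4*σ*(j₀:ℝ)) * (2:ℝ)^(4*σ*(M:ℝ)) := by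
        rw [hjr, ← two_rpow_add]
        ring_nf
      rw [hexpand, ← hts, hε2_def]
      have hGne : G ≠ 0 := ne_of_gt hG
      have hpow : ((2:ℝ)^(4*σ*(M:ℝ))) ≠ 0 := ne_of_gt (Real.rpow_pos_of_pos two_pos _)
      field_simp
    have e3 : C₀ * K * t^(-(2*σ)) * rR^M * GR = (C₀ * K * GR * rR^M) * t^(-(2*σ)) := by ring
    rw [hS_def, e1, e2, e3]
    have hq : target/4 < target/2 := by linarith
    nlinarith [htneg, hMlt, mul_lt_mul_of_pos_right hMlt htneg]
  have : target * t^(-(2*σ)) ≤ S := by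
    have hh := le_trans hElow hEup
    rwa [ENNReal.ofReal_le_ofReal_iff (by rw [hS_def]; positivity)] at hh
  linarith

lemma build_seq (n : ℕ) (σ : ℝ) (g : EuclideanSpace ℝ (Fin n) → ℂ)
    (ε : ℝ) (M : ℕ) (hM1 : 1 ≤ M)
    (hwin : ∀ j₀ : ℤ, j₀ ≤ 0 → ∃ j : ℤ, j₀ - M ≤ j ∧ j ≤ j₀ + M ∧
      ENNReal.ofReal ((ε * (2:ℝ)^((2*σ)*(j:ℝ)))^2) ≤ bBlock n g j) :
    ∃ jk : ℕ → ℤ, Filter.Tendsto jk Filter.atTop Filter.atBot ∧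
      (∃ M' : ℕ, ∀ k : ℕ, |jk k - jk (k+1)| ≤ M') ∧
      (∀ k : ℕ, ENNReal.ofReal ((ε * (2:ℝ)^((2*σ)*((jk k):ℝ)))^2) ≤ bBlock n g (jk k)) := by
  classical
  set j₀f : ℕ → ℤ := fun k => -((k:ℤ) * (2*(M:ℤ)+1)) with hj₀f_def
  have hj₀f_le : ∀ k, j₀f k ≤ 0 := by
    intro k
    simp only [hj₀f_def]
    have : (0:ℤ) ≤ (k:ℤ) * (2*(M:ℤ)+1) :=
      mul_nonneg (Int.natCast_nonneg k) (by positivity)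
    omega
  set jk : ℕ → ℤ := fun k => (hwin (j₀f k) (hj₀f_le k)).choose with hjk_def
  have hspec : ∀ k, j₀f k - M ≤ jk k ∧ jk k ≤ j₀f k + M ∧
      ENNReal.ofReal ((ε * (2:ℝ)^((2*σ)*((jk k):ℝ)))^2) ≤ bBlock n g (jk k) := by
    intro k
    exact (hwin (j₀f k) (hj₀f_le k)).choose_spec
  have hdiff : ∀ k, j₀f k - j₀f (k+1) = 2*(M:ℤ)+1 := by
    intro k
    simp only [hj₀f_def]
    push_cast
    ring
  refine ⟨jk, ?_, ⟨4*M+1, ?_⟩, fun k => (hspec k).2.2⟩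
  · rw [Filter.tendsto_atBot]
    intro b
    rw [Filter.eventually_atTop]
    refine ⟨((M:ℤ) - b).toNat, ?_⟩
    intro k hk
    have h1 : jk k ≤ j₀f k + M := (hspec k).2.1
    have h2 : (k:ℤ) ≤ (k:ℤ) * (2*(M:ℤ)+1) :=
      le_mul_of_one_le_right (Int.natCast_nonneg k) (by omega)
    have h3 : (((M:ℤ) - b).toNat : ℤ) ≤ (k:ℤ) := by exact_mod_cast hk
    have h4 : (M:ℤ) - b ≤ (((M:ℤ) - b).toNat : ℤ) := Int.self_le_toNat _
    simp only [hj₀f_def] at h1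
    omega
  · intro k
    have h1 := (hspec k).1
    have h2 := (hspec k).2.1
    have h3 := (hspec (k+1)).1
    have h4 := (hspec (k+1)).2.1
    have h5 := hdiff k
    have : ((4*M+1 : ℕ):ℤ) = 4*(M:ℤ)+1 := by push_cast; ring
    rw [this, abs_le]
    omega

end Stmt8Aux

open Stmt8Aux

theorem stmt8 (n : ℕ) (hn : 1 ≤ n) (σ : ℝ) (hσ : 0 < σ)
    (g : EuclideanSpace ℝ (Fin n) → ℂ) (hg_meas : Measurable g) :
    (MemLp g 2 (volume : Measure (EuclideanSpace ℝ (Fin n))) ∧ WeakACond n g (2 * σ)) ↔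
    (∃ c c' : ℝ, 0 < c ∧ 0 < c' ∧ ∀ t : ℝ, 0 ≤ t →
      ENNReal.ofReal (c * (1 + t) ^ (-(2 * σ))) ≤ Ealpha n g 1 t ∧
      Ealpha n g 1 t ≤ ENNReal.ofReal (c' * (1 + t) ^ (-(2 * σ)))) := by
  constructor
  · rintro ⟨hmem, c, C, hc, hC, jk, hbot, ⟨M, hgap⟩, hCb, hgood⟩
    have hb : ∀ j : ℤ, bBlock n g j ≤ ENNReal.ofReal ((C * (2:ℝ)^((2*σ) * (j:ℝ)))^2) := by
      intro j
      exact (ajBlock_le_iff n g j _ (by positivity)).1 (hCb j)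
    have hgood' : ∀ k : ℕ, ENNReal.ofReal ((c * (2:ℝ)^((2*σ)*((jk k):ℝ)))^2)
        ≤ bBlock n g (jk k) := by
      intro k
      exact (le_ajBlock_iff n g (jk k) _ (by positivity)).1 (hgood k)
    obtain ⟨KU, hKU, hup⟩ := forward_upper n hn σ hσ g hg_meas C hC hb
    obtain ⟨KL, T₀, hKL, hT₀, hlow⟩ := forward_lower n hn σ hσ g hg_meas c hc jk hbot M hgap hgood'
    have hE0fin : Ealpha n g 1 0 < ∞ := (memLp_iff n g hg_meas).1 hmem
    set E0r : ℝ := (Ealpha n g 1 0).toReal with hE0r_def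
    have hE0r : 0 ≤ E0r := ENNReal.toReal_nonneg
    have hE0eq : Ealpha n g 1 0 = ENNReal.ofReal E0r := (ENNReal.ofReal_toReal hE0fin.ne).symm
    have h2rpow : (2:ℝ)^(2*σ) * (2:ℝ)^(-(2*σ)) = 1 := by
      rw [← two_rpow_add]
      norm_num
    have h2pos : (0:ℝ) < (2:ℝ)^(2*σ) := Real.rpow_pos_of_pos two_pos _
    have h2pos' : (0:ℝ) < (2:ℝ)^(-(2*σ)) := Real.rpow_pos_of_pos two_pos _
    -- choose final constants
    set cu : ℝ := (E0r + KU) * (2:ℝ)^(2*σ) + 1 with hcu_def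
    have hcu : 0 < cu := by positivity
    set cl : ℝ := KL * T₀^(-(2*σ)) with hcl_def
    have hT₀0 : (0:ℝ) < T₀ := lt_of_lt_of_le one_pos hT₀
    have hcl : 0 < cl := by
      have := Real.rpow_pos_of_pos hT₀0 (-(2*σ)); positivity
    refine ⟨cl, cu, hcl, hcu, ?_⟩
    intro t ht
    have h1t : (0:ℝ) < 1 + t := by linarith
    constructor
    · -- lower bound
      rcases le_or_gt t T₀ with hcase | hcase
      · have step1 : cl * (1+t)^(-(2*σ)) ≤ cl := by
          have : (1+t)^(-(2*σ)) ≤ 1 :=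
            Real.rpow_le_one_of_one_le_of_nonpos (by linarith) (by linarith)
          nlinarith
        have step2 : ENNReal.ofReal cl ≤ Ealpha n g 1 T₀ := by
          rw [hcl_def]
          exact hlow T₀ le_rfl
        calc ENNReal.ofReal (cl * (1+t)^(-(2*σ))) ≤ ENNReal.ofReal cl :=
              ENNReal.ofReal_le_ofReal step1
          _ ≤ Ealpha n g 1 T₀ := step2
          _ ≤ Ealpha n g 1 t := Ealpha_mono n g hcase
      · have ht0 : (0:ℝ) < t := lt_trans hT₀0 hcase
        have step1 : cl * (1+t)^(-(2*σ)) ≤ KL * t^(-(2*σ)) := by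
          have hA : (1+t)^(-(2*σ)) ≤ t^(-(2*σ)) := rpow_neg_mono ht0 (by linarith) (by positivity)
          have hB : T₀^(-(2*σ)) ≤ 1 :=
            Real.rpow_le_one_of_one_le_of_nonpos hT₀ (by linarith)
          have hcl_le : cl ≤ KL := by rw [hcl_def]; nlinarith
          have := Real.rpow_pos_of_pos ht0 (-(2*σ))
          nlinarith [Real.rpow_pos_of_pos h1t (-(2*σ))]
        exact le_trans (ENNReal.ofReal_le_ofReal step1) (hlow t hcase.le)
    · -- upper bound
      rcases le_or_gt t 1 with hcase | hcase
      · have step1 : Ealpha n g 1 t ≤ ENNReal.ofReal E0r := by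
          rw [← hE0eq]
          exact Ealpha_mono n g ht
        have step2 : E0r ≤ cu * (1+t)^(-(2*σ)) := by
          have hA : (2:ℝ)^(-(2*σ)) ≤ (1+t)^(-(2*σ)) := rpow_neg_mono h1t (by linarith)
            (by positivity)
          have : cu * (2:ℝ)^(-(2*σ)) ≥ E0r := by
            rw [hcu_def]
            nlinarith
          nlinarith
        exact le_trans step1 (ENNReal.ofReal_le_ofReal step2)
      · have step1 : KU * t^(-(2*σ)) ≤ cu * (1+t)^(-(2*σ)) := by
          have ht0 : (0:ℝ) < t := by linarith
          have hA : (2:ℝ)^(-(2*σ)) * t^(-(2*σ)) ≤ (1+t)^(-(2*σ)) := by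
            have h2t : (1+t)^(-(2*σ)) ≥ (2*t)^(-(2*σ)) :=
              rpow_neg_mono h1t (by linarith) (by positivity)
            have hmul : (2*t)^(-(2*σ)) = (2:ℝ)^(-(2*σ)) * t^(-(2*σ)) :=
              Real.mul_rpow (by norm_num) ht0.le
            linarith [hmul ▸ h2t]
          have htn : (0:ℝ) < t^(-(2*σ)) := Real.rpow_pos_of_pos ht0 _
          have hcu_ge : KU * (2:ℝ)^(2*σ) ≤ cu := by rw [hcu_def]; nlinarith
          calc KU * t^(-(2*σ)) = (KU * (2:ℝ)^(2*σ)) * ((2:ℝ)^(-(2*σ)) * t^(-(2*σ))) := by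
                rw [show (KU * (2:ℝ)^(2*σ)) * ((2:ℝ)^(-(2*σ)) * t^(-(2*σ)))
                  = KU * ((2:ℝ)^(2*σ) * (2:ℝ)^(-(2*σ))) * t^(-(2*σ)) by ring, h2rpow]
                ring
            _ ≤ cu * ((2:ℝ)^(-(2*σ)) * t^(-(2*σ))) := by
                apply mul_le_mul_of_nonneg_right hcu_ge (by positivity)
            _ ≤ cu * (1+t)^(-(2*σ)) := mul_le_mul_of_nonneg_left hA hcu.le
        exact le_trans (hup t hcase.le) (ENNReal.ofReal_le_ofReal step1)
  · rintro ⟨c, c', hc, hc', h⟩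
    have hup : ∀ t : ℝ, 0 ≤ t → Ealpha n g 1 t ≤ ENNReal.ofReal (c' * (1+t)^(-(2*σ))) :=
      fun t ht => (h t ht).2
    have hlow : ∀ t : ℝ, 0 ≤ t → ENNReal.ofReal (c * (1+t)^(-(2*σ))) ≤ Ealpha n g 1 t :=
      fun t ht => (h t ht).1
    constructor
    · apply (memLp_iff n g hg_meas).2
      exact lt_of_le_of_lt (hup 0 le_rfl) ENNReal.ofReal_lt_top
    · set C₀ : ℝ := Real.exp 8 * c' with hC₀_def
      have hC₀ : 0 < C₀ := by positivity
      have hb0 : ∀ j : ℤ, bBlock n g j ≤ ENNReal.ofReal (C₀ * (2:ℝ)^(4*σ*(j:ℝ))) :=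
        reverse_blocks_upper n hn σ hσ g hg_meas c' hc' hup
      obtain ⟨ε, hε, M, hM1, hwin⟩ :=
        reverse_window n hn σ hσ g hg_meas c C₀ hc hC₀ hb0 hlow
      obtain ⟨jk, hbot, ⟨M', hgap⟩, hgoodb⟩ := build_seq n σ g ε M hM1 hwin
      refine ⟨ε, Real.sqrt C₀, hε, Real.sqrt_pos.2 hC₀, jk, hbot, ⟨M', hgap⟩, ?_, ?_⟩
      · intro j
        apply (ajBlock_le_iff n g j _ (by positivity)).2
        have heq : (Real.sqrt C₀ * (2:ℝ)^((2*σ)*(j:ℝ)))^2 = C₀ * (2:ℝ)^(4*σ*(j:ℝ)) := by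
          rw [mul_pow, Real.sq_sqrt hC₀.le, sq ((2:ℝ)^((2*σ)*(j:ℝ))), ← two_rpow_add]
          ring_nf
        rw [heq]
        exact hb0 j
      · intro k
        exact (le_ajBlock_iff n g (jk k) _ (by positivity)).2 (hgoodb k)
end
end

section
/- Let n ≥ 1, σ > 0, α > 0, and let g : ℝⁿ → ℂ be measurable. Then g satisfies the strong A-condition with exponent 2σ if and only if there exist constants c₁, c₂ > 0 such that for all t > 0: c₁ t^{−2σ/α} ≤ ∫_{ℝⁿ} e^{−2t|ξ|^{2α}} |g(ξ)|² dξ ≤ c₂ t^{−2σ/α} (the integral being a priori valued in [0,+∞]). This is the characterization of Ȧ^{−2σ}_{2,∞} by the two-sided bound c₁′ t^{−σ/α} ≤ ‖e^{t𝓛}f‖₂ ≤ c₂′ t^{−σ/α}, valid for all t > 0, for the semigroup generated by a diagonalizable pseudo-differential operator 𝓛 with homogeneous symbol of order 2α. -/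
open MeasureTheory Filter Topology
open scoped ENNReal NNReal

noncomputable section

namespace Stmt9Aux

open Real MeasureTheory

/-- The dyadic annulus. -/
def A (n : ℕ) (j : ℤ) : Set (EuclideanSpace ℝ (Fin n)) :=
  {ξ | (2 : ℝ) ^ (j : ℝ) ≤ ‖ξ‖ ∧ ‖ξ‖ < (2 : ℝ) ^ ((j : ℝ) + 1)}

lemma measurableSet_A (n : ℕ) (j : ℤ) : MeasurableSet (A n j) := by
  have : A n j = (fun ξ : EuclideanSpace ℝ (Fin n) => ‖ξ‖) ⁻¹'
      (Set.Ico ((2:ℝ) ^ (j:ℝ)) ((2:ℝ) ^ ((j:ℝ)+1))) := rfl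
  rw [this]
  exact measurable_norm measurableSet_Ico

lemma A_disjoint (n : ℕ) : Pairwise (Function.onFun Disjoint (A n)) := by
  have key : ∀ i j : ℤ, i < j → Disjoint (A n i) (A n j) := by
    intro i j hij
    rw [Set.disjoint_left]
    rintro ξ ⟨_, h2⟩ ⟨h3, _⟩
    have hle : ((i:ℝ) + 1) ≤ (j:ℝ) := by exact_mod_cast hij
    have : (2:ℝ) ^ ((i:ℝ)+1) ≤ (2:ℝ) ^ (j:ℝ) :=
      Real.rpow_le_rpow_of_exponent_le one_le_two hle
    linarith
  intro i j hij
  rcases lt_or_gt_of_ne hij with h | h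
  · exact key i j h
  · exact (key j i h).symm

lemma iUnion_A (n : ℕ) : (⋃ j : ℤ, A n j) = {ξ : EuclideanSpace ℝ (Fin n) | ξ ≠ 0} := by
  ext ξ
  simp only [Set.mem_iUnion, Set.mem_setOf_eq]
  constructor
  · rintro ⟨j, h1, _⟩ rfl
    simp only [norm_zero] at h1
    have := Real.rpow_pos_of_pos (by norm_num : (0:ℝ) < 2) (j:ℝ)
    linarith
  · intro hξ
    have hpos : 0 < ‖ξ‖ := norm_pos_iff.mpr hξ
    refine ⟨⌊Real.logb 2 ‖ξ‖⌋, ?_, ?_⟩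
    · calc (2:ℝ) ^ ((⌊Real.logb 2 ‖ξ‖⌋ : ℤ) : ℝ)
          ≤ (2:ℝ) ^ (Real.logb 2 ‖ξ‖) :=
            Real.rpow_le_rpow_of_exponent_le one_le_two (Int.floor_le _)
        _ = ‖ξ‖ := Real.rpow_logb (by norm_num) (by norm_num) hpos
    · calc ‖ξ‖ = (2:ℝ) ^ (Real.logb 2 ‖ξ‖) :=
            (Real.rpow_logb (by norm_num) (by norm_num) hpos).symm
        _ < (2:ℝ) ^ (((⌊Real.logb 2 ‖ξ‖⌋ : ℤ) : ℝ) + 1) := by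
            apply Real.rpow_lt_rpow_of_exponent_lt one_lt_two
            exact Int.lt_floor_add_one _

lemma lintegral_decomp {n : ℕ} (hn : 1 ≤ n) (F : EuclideanSpace ℝ (Fin n) → ℝ≥0∞) :
    ∫⁻ ξ, F ξ = ∑' j : ℤ, ∫⁻ ξ in A n j, F ξ := by
  haveI : Nontrivial (EuclideanSpace ℝ (Fin n)) := by
    refine ⟨EuclideanSpace.single ⟨0, hn⟩ (1:ℝ), 0, ?_⟩
    intro h
    have := congrArg (fun v : EuclideanSpace ℝ (Fin n) => v ⟨0, hn⟩) h
    simp at this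
  have h0 : (volume : Measure (EuclideanSpace ℝ (Fin n))) {(0:EuclideanSpace ℝ (Fin n))} = 0 :=
    measure_singleton 0
  have hae : (⋃ j : ℤ, A n j) =ᵐ[volume] (Set.univ : Set (EuclideanSpace ℝ (Fin n))) := by
    rw [ae_eq_univ, iUnion_A]
    have : {ξ : EuclideanSpace ℝ (Fin n) | ξ ≠ 0}ᶜ = {(0 : EuclideanSpace ℝ (Fin n))} := by
      ext ξ; simp
    rw [this]; exact h0
  calc ∫⁻ ξ, F ξ = ∫⁻ ξ in Set.univ, F ξ := by rw [setLIntegral_univ]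
    _ = ∫⁻ ξ in ⋃ j : ℤ, A n j, F ξ := (setLIntegral_congr hae).symm
    _ = ∑' j : ℤ, ∫⁻ ξ in A n j, F ξ :=
        lintegral_iUnion (measurableSet_A n) (A_disjoint n) F

end Stmt9Aux
namespace Stmt9Aux

open Real MeasureTheory

variable {n : ℕ}

/-- block energy -/
def bB (n : ℕ) (g : EuclideanSpace ℝ (Fin n) → ℂ) (j : ℤ) : ℝ≥0∞ :=
  ∫⁻ ξ in A n j, ENNReal.ofReal (‖g ξ‖ ^ 2)

lemma ajBlock_eq (g : EuclideanSpace ℝ (Fin n) → ℂ) (j : ℤ) :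
    ajBlock n g j = (bB n g j) ^ (1/2 : ℝ) := rfl

/-- annulus piece of the heat integral -/
def Ifun (n : ℕ) (g : EuclideanSpace ℝ (Fin n) → ℂ) (α t : ℝ) (j : ℤ) : ℝ≥0∞ :=
  ∫⁻ ξ in A n j, ENNReal.ofReal (Real.exp (-(2 * t) * ‖ξ‖ ^ (2 * α)) * ‖g ξ‖ ^ 2)

lemma Ealpha_decomp (hn : 1 ≤ n) (g : EuclideanSpace ℝ (Fin n) → ℂ) (α t : ℝ) :
    Ealpha n g α t = ∑' j : ℤ, Ifun n g α t j :=
  lintegral_decomp hn _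

lemma Ifun_le_Ealpha (g : EuclideanSpace ℝ (Fin n) → ℂ) (α t : ℝ) (j : ℤ) :
    Ifun n g α t j ≤ Ealpha n g α t :=
  setLIntegral_le_lintegral _ _

/-- key pointwise fact: on `A n j`, `‖ξ‖ ^ (2α)` is between `2^(2α j)` and `2^(2α (j+1))`. -/
lemma norm_rpow_bounds {α : ℝ} (hα : 0 < α) {j : ℤ}
    {ξ : EuclideanSpace ℝ (Fin n)} (hξ : ξ ∈ A n j) :
    (2:ℝ) ^ ((2*α) * (j:ℝ)) ≤ ‖ξ‖ ^ (2*α) ∧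
      ‖ξ‖ ^ (2*α) ≤ (2:ℝ) ^ ((2*α) * ((j:ℝ)+1)) := by
  obtain ⟨h1, h2⟩ := hξ
  have h2pos : (0:ℝ) < (2:ℝ) ^ ((j:ℝ)) := Real.rpow_pos_of_pos (by norm_num) _
  have hαnn : (0:ℝ) ≤ 2*α := by linarith
  constructor
  · calc (2:ℝ) ^ ((2*α) * (j:ℝ)) = (2:ℝ) ^ ((j:ℝ) * (2*α)) := by ring_nf
      _ = ((2:ℝ) ^ ((j:ℝ))) ^ (2*α) := Real.rpow_mul (by norm_num) _ _
      _ ≤ ‖ξ‖ ^ (2*α) := Real.rpow_le_rpow (le_of_lt h2pos) h1 hαnn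
  · calc ‖ξ‖ ^ (2*α) ≤ ((2:ℝ) ^ ((j:ℝ)+1)) ^ (2*α) :=
        Real.rpow_le_rpow (norm_nonneg _) (le_of_lt h2) hαnn
      _ = (2:ℝ) ^ (((j:ℝ)+1) * (2*α)) := (Real.rpow_mul (by norm_num) _ _).symm
      _ = (2:ℝ) ^ ((2*α) * ((j:ℝ)+1)) := by ring_nf

lemma Ifun_le (g : EuclideanSpace ℝ (Fin n) → ℂ) {α : ℝ} (hα : 0 < α) {t : ℝ} (ht : 0 ≤ t)
    (j : ℤ) :
    Ifun n g α t j ≤ ENNReal.ofReal (Real.exp (-(2*t) * (2:ℝ) ^ ((2*α) * (j:ℝ)))) * bB n g j := by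
  rw [Ifun, bB, ← lintegral_const_mul' _ _ ENNReal.ofReal_ne_top]
  refine setLIntegral_mono' (measurableSet_A n j) (fun ξ hξ => ?_)
  rw [← ENNReal.ofReal_mul (Real.exp_nonneg _)]
  apply ENNReal.ofReal_le_ofReal
  apply mul_le_mul_of_nonneg_right _ (sq_nonneg _)
  apply Real.exp_le_exp.mpr
  have h := (norm_rpow_bounds (n := n) hα hξ).1
  have := mul_le_mul_of_nonneg_left h (by linarith : (0:ℝ) ≤ 2*t)
  linarith

lemma le_Ifun (g : EuclideanSpace ℝ (Fin n) → ℂ) {α : ℝ} (hα : 0 < α) {t : ℝ} (ht : 0 ≤ t)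
    (j : ℤ) :
    ENNReal.ofReal (Real.exp (-(2*t) * (2:ℝ) ^ ((2*α) * ((j:ℝ)+1)))) * bB n g j
      ≤ Ifun n g α t j := by
  rw [Ifun, bB, ← lintegral_const_mul' _ _ ENNReal.ofReal_ne_top]
  refine setLIntegral_mono' (measurableSet_A n j) (fun ξ hξ => ?_)
  rw [← ENNReal.ofReal_mul (Real.exp_nonneg _)]
  apply ENNReal.ofReal_le_ofReal
  apply mul_le_mul_of_nonneg_right _ (sq_nonneg _)
  apply Real.exp_le_exp.mpr
  have h := (norm_rpow_bounds (n := n) hα hξ).2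
  have := mul_le_mul_of_nonneg_left h (by linarith : (0:ℝ) ≤ 2*t)
  linarith

lemma Ealpha_antitone (g : EuclideanSpace ℝ (Fin n) → ℂ) (α : ℝ) {t t' : ℝ} (ht : 0 ≤ t)
    (htt' : t ≤ t') : Ealpha n g α t' ≤ Ealpha n g α t := by
  apply lintegral_mono
  intro ξ
  apply ENNReal.ofReal_le_ofReal
  apply mul_le_mul_of_nonneg_right _ (sq_nonneg _)
  apply Real.exp_le_exp.mpr
  have hx : (0:ℝ) ≤ ‖ξ‖ ^ (2*α) := Real.rpow_nonneg (norm_nonneg _) _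
  nlinarith

end Stmt9Aux
namespace Stmt9Aux

open Real

/-- splitting a `ℤ`-indexed `ℝ≥0∞` sum into two tails and a middle window. -/
lemma tsum_int_split (f : ℤ → ℝ≥0∞) (a b : ℤ) (hab : a ≤ b) :
    ∑' j : ℤ, f j ≤ (∑' i : ℕ, f (a - 1 - i)) + (∑ j ∈ Finset.Ico a b, f j)
      + (∑' i : ℕ, f (b + i)) := by
  classical
  set f₁ : ℤ → ℝ≥0∞ := fun j => if j < a then f j else 0 with hf₁
  set f₂ : ℤ → ℝ≥0∞ := fun j => if a ≤ j ∧ j < b then f j else 0 with hf₂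
  set f₃ : ℤ → ℝ≥0∞ := fun j => if b ≤ j then f j else 0 with hf₃
  have hsum : ∀ j, f j = f₁ j + f₂ j + f₃ j := by
    intro j
    simp only [hf₁, hf₂, hf₃]
    rcases lt_or_ge j a with h | h
    · have h2 : ¬ (a ≤ j ∧ j < b) := fun hj => absurd hj.1 (not_le.mpr h)
      have h3 : ¬ b ≤ j := not_le.mpr (lt_of_lt_of_le h hab)
      simp [h, h2, h3]
    · rcases lt_or_ge j b with h' | h'
      · have h3 : ¬ b ≤ j := not_le.mpr h'
        simp [not_lt.mpr h, h, h', h3]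
      · have h2 : ¬ (a ≤ j ∧ j < b) := fun hj => absurd hj.2 (not_lt.mpr h')
        simp [not_lt.mpr (le_trans hab h'), h2, h']
  have e1 : ∑' j : ℤ, f₁ j = ∑' i : ℕ, f₁ (a - 1 - i) := by
    refine (Function.Injective.tsum_eq (g := fun i : ℕ => a - 1 - (i:ℤ)) ?_ ?_).symm
    · intro i i' h; simp only at h; omega
    · intro j hj
      have hj' : (if j < a then f j else 0) ≠ 0 := hj
      have hja : j < a := by
        by_contra h
        rw [if_neg h] at hj'
        exact hj' rfl
      exact ⟨(a - 1 - j).toNat, by show a - 1 - ((a - 1 - j).toNat : ℤ) = j; omega⟩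
  have e2 : ∑' j : ℤ, f₂ j = ∑ j ∈ Finset.Ico a b, f₂ j := by
    apply tsum_eq_sum
    intro j hj
    simp only [Finset.mem_Ico, not_and, not_lt] at hj
    simp only [hf₂]
    rw [if_neg]
    intro hj'
    exact absurd (hj hj'.1) (not_le.mpr hj'.2)
  have e3 : ∑' j : ℤ, f₃ j = ∑' i : ℕ, f₃ (b + i) := by
    refine (Function.Injective.tsum_eq (g := fun i : ℕ => b + (i:ℤ)) ?_ ?_).symm
    · intro i i' h; simp only at h; omega
    · intro j hj
      have hj' : (if b ≤ j then f j else 0) ≠ 0 := hj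
      have hjb : b ≤ j := by
        by_contra h
        rw [if_neg h] at hj'
        exact hj' rfl
      exact ⟨(j - b).toNat, by show b + ((j - b).toNat : ℤ) = j; omega⟩
  calc ∑' j : ℤ, f j = ∑' j : ℤ, (f₁ j + f₂ j + f₃ j) := by
        exact tsum_congr hsum
    _ = (∑' j : ℤ, (f₁ j + f₂ j)) + ∑' j : ℤ, f₃ j := ENNReal.tsum_add
    _ = (∑' j : ℤ, f₁ j) + (∑' j : ℤ, f₂ j) + ∑' j : ℤ, f₃ j := by rw [ENNReal.tsum_add]
    _ ≤ (∑' i : ℕ, f (a - 1 - i)) + (∑ j ∈ Finset.Ico a b, f j) + (∑' i : ℕ, f (b + i)) := by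
        rw [e1, e2, e3]
        gcongr with i hi i
        · simp only [hf₁]; split_ifs <;> simp
        · simp only [hf₂]; split_ifs <;> simp
        · simp only [hf₃]; split_ifs <;> simp

/-- geometric bound. -/
lemma tsum_geom_le {Amp q : ℝ} (hA : 0 ≤ Amp) (h0 : 0 ≤ q) (h1 : q < 1) :
    ∑' i : ℕ, ENNReal.ofReal (Amp * q ^ i) ≤ ENNReal.ofReal (Amp * (1 - q)⁻¹) := by
  have hsummable : Summable (fun i : ℕ => Amp * q ^ i) :=
    (summable_geometric_of_lt_one h0 h1).mul_left _
  rw [← ENNReal.ofReal_tsum_of_nonneg (fun i => by positivity) hsummable]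
  apply ENNReal.ofReal_le_ofReal
  rw [tsum_mul_left, tsum_geometric_of_lt_one h0 h1]

/-- `exp (-x) ≤ m! * x⁻¹ ^ m` for `x > 0`. -/
lemma exp_neg_le {x : ℝ} (hx : 0 < x) (m : ℕ) :
    Real.exp (-x) ≤ (m.factorial : ℝ) * (x ^ m)⁻¹ := by
  have h1 : x ^ m / (m.factorial : ℝ) ≤ Real.exp x := by
    calc x ^ m / (m.factorial : ℝ) ≤ ∑ i ∈ Finset.range (m+1), x ^ i / (i.factorial : ℝ) := by
          apply Finset.single_le_sum (f := fun i => x ^ i / (i.factorial : ℝ))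
            (fun i _ => by positivity) (Finset.self_mem_range_succ m)
      _ ≤ Real.exp x := Real.sum_le_exp_of_nonneg hx.le _
  rw [Real.exp_neg]
  have hxm : (0:ℝ) < x ^ m := by positivity
  have hfac : (0:ℝ) < (m.factorial : ℝ) := by positivity
  rw [inv_le_iff_one_le_mul₀ (Real.exp_pos x)]
  calc (1:ℝ) = (x ^ m / (m.factorial : ℝ)) * ((m.factorial : ℝ) * (x ^ m)⁻¹) := by
        field_simp
    _ ≤ Real.exp x * ((m.factorial : ℝ) * (x ^ m)⁻¹) := by
        apply mul_le_mul_of_nonneg_right h1; positivity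
    _ = (m.factorial : ℝ) * (x ^ m)⁻¹ * Real.exp x := by ring

end Stmt9Aux
namespace Stmt9Aux

open Real

lemma r2_pos (x : ℝ) : 0 < (2:ℝ) ^ x := Real.rpow_pos_of_pos (by norm_num) x

lemma r2_nonneg (x : ℝ) : 0 ≤ (2:ℝ) ^ x := (r2_pos x).le

lemma r2_add (x y : ℝ) : (2:ℝ) ^ (x + y) = (2:ℝ) ^ x * (2:ℝ) ^ y :=
  Real.rpow_add (by norm_num) x y

lemma r2_pow (x : ℝ) (i : ℕ) : ((2:ℝ) ^ x) ^ i = (2:ℝ) ^ (x * i) := by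
  rw [← Real.rpow_natCast ((2:ℝ)^x) i, ← Real.rpow_mul (by norm_num)]

lemma r2_mono {x y : ℝ} (h : x ≤ y) : (2:ℝ) ^ x ≤ (2:ℝ) ^ y :=
  Real.rpow_le_rpow_of_exponent_le one_le_two h

lemma r2_le_one {x : ℝ} (hx : x ≤ 0) : (2:ℝ) ^ x ≤ 1 := by
  have := r2_mono hx; simpa using this

lemma r2_lt_one {x : ℝ} (hx : x < 0) : (2:ℝ) ^ x < 1 := by
  have := Real.rpow_lt_rpow_of_exponent_lt (by norm_num : (1:ℝ) < 2) hx
  simpa using this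

set_option maxHeartbeats 1000000 in
/-- master bound: `∑_j exp(-2·2^{a(j-k)}) · C₂ · 2^{s j} ≤ K C₂ 2^{s k}`. -/
lemma sum_bound (s a : ℝ) (hs : 0 < s) (ha : 0 < a) :
    ∃ K : ℝ, 0 < K ∧ ∀ (C2 : ℝ), 0 ≤ C2 → ∀ k : ℤ,
      (∑' j : ℤ, ENNReal.ofReal (Real.exp (-(2 * (2:ℝ) ^ (a * ((j:ℝ) - (k:ℝ)))))
          * (C2 * (2:ℝ) ^ (s * (j:ℝ)))))
        ≤ ENNReal.ofReal (K * C2 * (2:ℝ) ^ (s * (k:ℝ))) := by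
  obtain ⟨m, hm⟩ := exists_nat_gt (s / a)
  have hsa : s < a * m := by
    have := (div_lt_iff₀ ha).mp hm; linarith
  set q₁ : ℝ := (2:ℝ) ^ (-s) with hq₁
  set q₂ : ℝ := (2:ℝ) ^ (s - a * m) with hq₂
  have hq₁0 : 0 ≤ q₁ := r2_nonneg _
  have hq₁1 : q₁ < 1 := r2_lt_one (by linarith)
  have hq₂0 : 0 ≤ q₂ := r2_nonneg _
  have hq₂1 : q₂ < 1 := r2_lt_one (by linarith)
  have hKpos : (0:ℝ) < (2:ℝ) ^ (-s) * (1 - q₁)⁻¹ + (m.factorial : ℝ) * (1 - q₂)⁻¹ :=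
    add_pos (mul_pos (r2_pos _) (inv_pos.mpr (by linarith)))
      (mul_pos (Nat.cast_pos.mpr m.factorial_pos) (inv_pos.mpr (by linarith)))
  refine ⟨(2:ℝ) ^ (-s) * (1 - q₁)⁻¹ + (m.factorial : ℝ) * (1 - q₂)⁻¹, hKpos,
    fun C2 hC2 k => ?_⟩
  set f : ℤ → ℝ≥0∞ := fun j => ENNReal.ofReal (Real.exp (-(2 * (2:ℝ) ^ (a * ((j:ℝ) - (k:ℝ)))))
    * (C2 * (2:ℝ) ^ (s * (j:ℝ)))) with hf
  have split := tsum_int_split f k k le_rfl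
  rw [Finset.Ico_self, Finset.sum_empty, add_zero] at split
  have tail1 : (∑' i : ℕ, f (k - 1 - i)) ≤
      ENNReal.ofReal ((C2 * (2:ℝ) ^ (s * ((k:ℝ) - 1))) * (1 - q₁)⁻¹) := by
    refine le_trans (ENNReal.tsum_le_tsum (fun i => ?_)) (tsum_geom_le (by positivity) hq₁0 hq₁1)
    simp only [hf]
    apply ENNReal.ofReal_le_ofReal
    set jr : ℝ := (((k - 1 - (i:ℤ)):ℤ):ℝ) with hjr
    have hexp : Real.exp (-(2 * (2:ℝ) ^ (a * (jr - (k:ℝ))))) ≤ 1 := by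
      rw [Real.exp_le_one_iff]
      have : (0:ℝ) < 2 * (2:ℝ) ^ (a * (jr - (k:ℝ))) := by positivity
      linarith
    have h2 : (2:ℝ) ^ (s * jr) = (2:ℝ) ^ (s * ((k:ℝ) - 1)) * q₁ ^ i := by
      rw [hq₁, r2_pow, ← r2_add]
      congr 1
      rw [hjr]
      push_cast
      ring
    calc Real.exp (-(2 * (2:ℝ) ^ (a * (jr - (k:ℝ))))) * (C2 * (2:ℝ) ^ (s * jr))
        ≤ 1 * (C2 * (2:ℝ) ^ (s * jr)) :=
          mul_le_mul_of_nonneg_right hexp (by positivity)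
      _ = C2 * (2:ℝ) ^ (s * ((k:ℝ) - 1)) * q₁ ^ i := by rw [one_mul, h2]; ring
  have tail2 : (∑' i : ℕ, f (k + i)) ≤
      ENNReal.ofReal ((C2 * (m.factorial : ℝ) * (2:ℝ) ^ (s * (k:ℝ))) * (1 - q₂)⁻¹) := by
    refine le_trans (ENNReal.tsum_le_tsum (fun i => ?_)) (tsum_geom_le (by positivity) hq₂0 hq₂1)
    simp only [hf]
    apply ENNReal.ofReal_le_ofReal
    set jr : ℝ := (((k + (i:ℤ)):ℤ):ℝ) with hjr
    have harg : a * (jr - (k:ℝ)) = a * (i:ℝ) := by rw [hjr]; push_cast; ring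
    have hexp : Real.exp (-(2 * (2:ℝ) ^ (a * (jr - (k:ℝ)))))
        ≤ (m.factorial : ℝ) * (2:ℝ) ^ (-(a * m) * (i:ℝ)) := by
      rw [harg]
      have h1 : Real.exp (-(2 * (2:ℝ) ^ (a * (i:ℝ)))) ≤ Real.exp (-((2:ℝ) ^ (a * (i:ℝ)))) := by
        apply Real.exp_le_exp.mpr
        have := r2_pos (a * (i:ℝ)); linarith
      refine h1.trans ?_
      have h2 := exp_neg_le (r2_pos (a * (i:ℝ))) m
      refine h2.trans (le_of_eq ?_)
      congr 1
      rw [← Real.rpow_natCast ((2:ℝ) ^ (a * (i:ℝ))) m, ← Real.rpow_mul (by norm_num),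
        ← Real.rpow_neg (by norm_num)]
      congr 1
      ring
    have h2 : (2:ℝ) ^ (s * jr) = (2:ℝ) ^ (s * (k:ℝ)) * (2:ℝ) ^ (s * (i:ℝ)) := by
      rw [← r2_add]; congr 1; rw [hjr]; push_cast; ring
    calc Real.exp (-(2 * (2:ℝ) ^ (a * (jr - (k:ℝ))))) * (C2 * (2:ℝ) ^ (s * jr))
        ≤ ((m.factorial : ℝ) * (2:ℝ) ^ (-(a * m) * (i:ℝ)))
            * (C2 * ((2:ℝ) ^ (s * (k:ℝ)) * (2:ℝ) ^ (s * (i:ℝ)))) := by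
          rw [← h2]
          exact mul_le_mul_of_nonneg_right hexp (by positivity)
      _ = C2 * (m.factorial : ℝ) * (2:ℝ) ^ (s * (k:ℝ)) * ((2:ℝ) ^ (-(a*m) * (i:ℝ)) * (2:ℝ) ^ (s * (i:ℝ))) := by
          ring
      _ = C2 * (m.factorial : ℝ) * (2:ℝ) ^ (s * (k:ℝ)) * q₂ ^ i := by
          rw [hq₂, r2_pow, ← r2_add]
          congr 2
          ring
  calc (∑' j : ℤ, f j) ≤ (∑' i : ℕ, f (k - 1 - i)) + (∑' i : ℕ, f (k + i)) := split
    _ ≤ ENNReal.ofReal ((C2 * (2:ℝ) ^ (s * ((k:ℝ) - 1))) * (1 - q₁)⁻¹)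
        + ENNReal.ofReal ((C2 * (m.factorial : ℝ) * (2:ℝ) ^ (s * (k:ℝ))) * (1 - q₂)⁻¹) :=
        add_le_add tail1 tail2
    _ = ENNReal.ofReal ((C2 * (2:ℝ) ^ (s * ((k:ℝ) - 1))) * (1 - q₁)⁻¹
        + (C2 * (m.factorial : ℝ) * (2:ℝ) ^ (s * (k:ℝ))) * (1 - q₂)⁻¹) := by
        have hq₁' : (0:ℝ) ≤ (1 - q₁)⁻¹ := inv_nonneg.mpr (by linarith)
        have hq₂' : (0:ℝ) ≤ (1 - q₂)⁻¹ := inv_nonneg.mpr (by linarith)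
        rw [ENNReal.ofReal_add (by positivity) (by positivity)]
    _ ≤ ENNReal.ofReal (((2:ℝ) ^ (-s) * (1 - q₁)⁻¹ + (m.factorial : ℝ) * (1 - q₂)⁻¹) * C2
        * (2:ℝ) ^ (s * (k:ℝ))) := by
        apply ENNReal.ofReal_le_ofReal
        have hx : (2:ℝ) ^ (s * ((k:ℝ) - 1)) = (2:ℝ) ^ (s * (k:ℝ)) * (2:ℝ) ^ (-s) := by
          rw [← r2_add]; congr 1; ring
        rw [hx]; ring_nf
        exact le_of_eq (by ring)

end Stmt9Aux
namespace Stmt9Aux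

lemma sqrt_pow_cancel (x : ℝ≥0∞) : (x ^ (1/2:ℝ)) ^ (2:ℕ) = x := by
  rw [← ENNReal.rpow_natCast, ← ENNReal.rpow_mul]
  norm_num

lemma bB_le_of_aj {x : ℝ≥0∞} {y : ℝ} (hy : 0 ≤ y) (h : x ^ (1/2:ℝ) ≤ ENNReal.ofReal y) :
    x ≤ ENNReal.ofReal (y ^ 2) := by
  calc x = (x ^ (1/2:ℝ)) ^ (2:ℕ) := (sqrt_pow_cancel x).symm
    _ ≤ (ENNReal.ofReal y) ^ (2:ℕ) := pow_le_pow_left' h 2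
    _ = ENNReal.ofReal (y ^ 2) := (ENNReal.ofReal_pow hy 2).symm

lemma le_bB_of_aj {x : ℝ≥0∞} {y : ℝ} (hy : 0 ≤ y) (h : ENNReal.ofReal y ≤ x ^ (1/2:ℝ)) :
    ENNReal.ofReal (y ^ 2) ≤ x := by
  calc ENNReal.ofReal (y ^ 2) = (ENNReal.ofReal y) ^ (2:ℕ) := ENNReal.ofReal_pow hy 2
    _ ≤ (x ^ (1/2:ℝ)) ^ (2:ℕ) := pow_le_pow_left' h 2
    _ = x := sqrt_pow_cancel x

lemma real_sq_sqrt {y : ℝ} (hy : 0 ≤ y) : (y ^ 2) ^ (1/2:ℝ) = y := by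
  rw [← Real.rpow_natCast y 2, ← Real.rpow_mul hy]
  norm_num

lemma aj_le_of_bB {x : ℝ≥0∞} {y : ℝ} (hy : 0 < y) (h : x ≤ ENNReal.ofReal (y ^ 2)) :
    x ^ (1/2:ℝ) ≤ ENNReal.ofReal y := by
  calc x ^ (1/2:ℝ) ≤ (ENNReal.ofReal (y ^ 2)) ^ (1/2:ℝ) := ENNReal.rpow_le_rpow h (by norm_num)
    _ = ENNReal.ofReal ((y ^ 2) ^ (1/2:ℝ)) := ENNReal.ofReal_rpow_of_pos (by positivity)
    _ = ENNReal.ofReal y := by rw [real_sq_sqrt hy.le]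

lemma le_aj_of_bB {x : ℝ≥0∞} {y : ℝ} (hy : 0 < y) (h : ENNReal.ofReal (y ^ 2) ≤ x) :
    ENNReal.ofReal y ≤ x ^ (1/2:ℝ) := by
  calc ENNReal.ofReal y = ENNReal.ofReal ((y ^ 2) ^ (1/2:ℝ)) := by rw [real_sq_sqrt hy.le]
    _ = (ENNReal.ofReal (y ^ 2)) ^ (1/2:ℝ) := (ENNReal.ofReal_rpow_of_pos (by positivity)).symm
    _ ≤ x ^ (1/2:ℝ) := ENNReal.rpow_le_rpow h (by norm_num)

end Stmt9Aux
namespace Stmt9Aux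

open Real

set_option maxHeartbeats 1000000 in
lemma forward (n : ℕ) (hn : 1 ≤ n) (σ α : ℝ) (hσ : 0 < σ) (hα : 0 < α)
    (g : EuclideanSpace ℝ (Fin n) → ℂ)
    (h : StrongACond n g (2 * σ)) :
    ∃ c₁ c₂ : ℝ, 0 < c₁ ∧ 0 < c₂ ∧ ∀ t : ℝ, 0 < t →
      ENNReal.ofReal (c₁ * t ^ (-(2 * σ) / α)) ≤ Ealpha n g α t ∧
      Ealpha n g α t ≤ ENNReal.ofReal (c₂ * t ^ (-(2 * σ) / α)) := by
  obtain ⟨c, C, hc, hC, M, hM, hup, hlow⟩ := h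
  have hb_up : ∀ j : ℤ, bB n g j ≤ ENNReal.ofReal ((C * (2:ℝ) ^ (2 * σ * (j:ℝ))) ^ 2) :=
    fun j => bB_le_of_aj (by positivity) (hup j)
  have hb_low : ∀ j₀ : ℤ, ∃ j : ℤ, j₀ ≤ j ∧ j < j₀ + M ∧
      ENNReal.ofReal ((c * (2:ℝ) ^ (2 * σ * (j:ℝ))) ^ 2) ≤ bB n g j := by
    intro j₀; obtain ⟨j, h1, h2, h3⟩ := hlow j₀
    exact ⟨j, h1, h2, le_bB_of_aj (by positivity) h3⟩
  have hsq : ∀ (b : ℝ) (j : ℤ), (b * (2:ℝ) ^ (2 * σ * (j:ℝ))) ^ 2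
      = b ^ 2 * (2:ℝ) ^ ((4*σ) * (j:ℝ)) := by
    intro b j
    have h2 : (2:ℝ) ^ (2 * σ * (j:ℝ)) * (2:ℝ) ^ (2 * σ * (j:ℝ))
        = (2:ℝ) ^ ((4*σ) * (j:ℝ)) := by
      rw [← r2_add]; congr 1; ring
    calc (b * (2:ℝ) ^ (2 * σ * (j:ℝ))) ^ 2
        = b ^ 2 * ((2:ℝ) ^ (2 * σ * (j:ℝ)) * (2:ℝ) ^ (2 * σ * (j:ℝ))) := by ring
      _ = b ^ 2 * (2:ℝ) ^ ((4*σ) * (j:ℝ)) := by rw [h2]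
  obtain ⟨K, hK, hKbound⟩ := sum_bound (4*σ) (2*α) (by linarith) (by linarith)
  set tk : ℤ → ℝ := fun k => (2:ℝ) ^ (-(2*α) * (k:ℝ)) with htk
  have htkpos : ∀ k, 0 < tk k := fun k => r2_pos _
  have hexparg : ∀ (k : ℤ) (x : ℝ),
      -(2 * tk k) * (2:ℝ) ^ ((2*α) * x) = -(2 * (2:ℝ) ^ ((2*α) * (x - (k:ℝ)))) := by
    intro k x
    have h2 : tk k * (2:ℝ) ^ ((2*α) * x) = (2:ℝ) ^ ((2*α) * (x - (k:ℝ))) := by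
      rw [htk]
      dsimp only
      rw [← r2_add]; congr 1; ring
    calc -(2 * tk k) * (2:ℝ) ^ ((2*α) * x)
        = -(2 * (tk k * (2:ℝ) ^ ((2*α) * x))) := by ring
      _ = -(2 * (2:ℝ) ^ ((2*α) * (x - (k:ℝ)))) := by rw [h2]
  -- dyadic upper bound
  have hup_dyadic : ∀ k : ℤ,
      Ealpha n g α (tk k) ≤ ENNReal.ofReal (K * C ^ 2 * (2:ℝ) ^ ((4*σ) * (k:ℝ))) := by
    intro k
    rw [Ealpha_decomp hn]
    refine le_trans (ENNReal.tsum_le_tsum (fun j => ?_)) (hKbound (C^2) (by positivity) k)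
    calc Ifun n g α (tk k) j
        ≤ ENNReal.ofReal (Real.exp (-(2 * tk k) * (2:ℝ) ^ ((2*α) * (j:ℝ)))) * bB n g j :=
          Ifun_le g hα (htkpos k).le j
      _ ≤ ENNReal.ofReal (Real.exp (-(2 * tk k) * (2:ℝ) ^ ((2*α) * (j:ℝ))))
          * ENNReal.ofReal ((C * (2:ℝ) ^ (2 * σ * (j:ℝ))) ^ 2) := mul_le_mul_right (hb_up j) _
      _ = ENNReal.ofReal (Real.exp (-(2 * (2:ℝ) ^ ((2*α) * ((j:ℝ) - (k:ℝ)))))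
          * (C ^ 2 * (2:ℝ) ^ ((4*σ) * (j:ℝ)))) := by
          rw [← ENNReal.ofReal_mul (Real.exp_nonneg _), hexparg k (j:ℝ), hsq]
  -- dyadic lower bound
  have hlow_dyadic : ∀ k : ℤ,
      ENNReal.ofReal ((Real.exp (-2) * (c ^ 2 * (2:ℝ) ^ (-(4*σ) * (M:ℝ))))
        * (2:ℝ) ^ ((4*σ) * (k:ℝ))) ≤ Ealpha n g α (tk k) := by
    intro k
    obtain ⟨j, hj1, hj2, hj3⟩ := hb_low (k - M)
    have hjk : (j:ℝ) + 1 ≤ (k:ℝ) := by exact_mod_cast (by omega : j + 1 ≤ k)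
    have hexple : ENNReal.ofReal (Real.exp (-2))
        ≤ ENNReal.ofReal (Real.exp (-(2 * tk k) * (2:ℝ) ^ ((2*α) * ((j:ℝ) + 1)))) := by
      apply ENNReal.ofReal_le_ofReal
      apply Real.exp_le_exp.mpr
      rw [hexparg k ((j:ℝ)+1)]
      have hle1 : (2:ℝ) ^ ((2*α) * (((j:ℝ)+1) - (k:ℝ))) ≤ 1 := r2_le_one (by nlinarith)
      linarith
    have hblow : ENNReal.ofReal (c ^ 2 * (2:ℝ) ^ (-(4*σ) * (M:ℝ)) * (2:ℝ) ^ ((4*σ) * (k:ℝ)))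
        ≤ bB n g j := by
      refine le_trans (ENNReal.ofReal_le_ofReal ?_) hj3
      rw [hsq c j]
      have hjge : (k:ℝ) - (M:ℝ) ≤ (j:ℝ) := by exact_mod_cast hj1
      have : (2:ℝ) ^ (-(4*σ) * (M:ℝ)) * (2:ℝ) ^ ((4*σ) * (k:ℝ))
          = (2:ℝ) ^ ((4*σ) * ((k:ℝ) - (M:ℝ))) := by rw [← r2_add]; congr 1; ring
      rw [mul_assoc, this]
      have := r2_mono (by nlinarith : (4*σ) * ((k:ℝ) - (M:ℝ)) ≤ (4*σ) * (j:ℝ))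
      nlinarith [sq_nonneg c]
    calc ENNReal.ofReal ((Real.exp (-2) * (c ^ 2 * (2:ℝ) ^ (-(4*σ) * (M:ℝ))))
          * (2:ℝ) ^ ((4*σ) * (k:ℝ)))
        = ENNReal.ofReal (Real.exp (-2))
          * ENNReal.ofReal (c ^ 2 * (2:ℝ) ^ (-(4*σ) * (M:ℝ)) * (2:ℝ) ^ ((4*σ) * (k:ℝ))) := by
          rw [← ENNReal.ofReal_mul (Real.exp_nonneg _)]; ring_nf
      _ ≤ ENNReal.ofReal (Real.exp (-(2 * tk k) * (2:ℝ) ^ ((2*α) * ((j:ℝ) + 1)))) * bB n g j :=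
          mul_le_mul' hexple hblow
      _ ≤ Ifun n g α (tk k) j := le_Ifun g hα (htkpos k).le j
      _ ≤ Ealpha n g α (tk k) := Ifun_le_Ealpha g α (tk k) j
  -- from dyadic times to all times
  have he_neg : -(2*σ)/α ≤ 0 := by
    apply div_nonpos_of_nonpos_of_nonneg <;> linarith
  have htk_rpow : ∀ k : ℤ, (tk k) ^ (-(2*σ)/α) = (2:ℝ) ^ ((4*σ) * (k:ℝ)) := by
    intro k
    rw [htk]
    dsimp only
    rw [← Real.rpow_mul (by norm_num : (0:ℝ) ≤ 2)]
    congr 1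
    field_simp
    ring
  have hcast : ∀ k : ℤ, ((k + 1 : ℤ) : ℝ) = (k:ℝ) + 1 := by intro k; push_cast; ring
  set c₂ : ℝ := K * C ^ 2 * (2:ℝ) ^ (4*σ) with hc₂
  set c₁ : ℝ := Real.exp (-2) * (c ^ 2 * (2:ℝ) ^ (-(4*σ) * (M:ℝ))) * (2:ℝ) ^ (-(4*σ)) with hc₁
  have hc₁pos : 0 < c₁ := by
    apply mul_pos (mul_pos (Real.exp_pos _) (mul_pos (by positivity) (r2_pos _))) (r2_pos _)
  have hc₂pos : 0 < c₂ := by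
    apply mul_pos (mul_pos hK (by positivity)) (r2_pos _)
  refine ⟨c₁, c₂, hc₁pos, hc₂pos, fun t ht => ?_⟩
  set x : ℝ := Real.logb 2 t / (-(2*α)) with hx
  set k : ℤ := ⌊x⌋ with hkdef
  have hxk : (k:ℝ) ≤ x := Int.floor_le x
  have hxk1 : x < (k:ℝ) + 1 := Int.lt_floor_add_one x
  have hlogt : -(2*α) * x = Real.logb 2 t := by
    rw [hx]; field_simp
  have ht_eq : (2:ℝ) ^ (Real.logb 2 t) = t := Real.rpow_logb (by norm_num) (by norm_num) ht
  have hta : t ≤ tk k := by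
    rw [← ht_eq, htk]
    dsimp only
    apply r2_mono
    have := mul_le_mul_of_nonpos_left hxk (by linarith : -(2*α) ≤ 0)
    linarith
  have htb : tk (k+1) ≤ t := by
    rw [← ht_eq, htk]
    dsimp only
    apply r2_mono
    have := mul_le_mul_of_nonpos_left hxk1.le (by linarith : -(2*α) ≤ 0)
    rw [hcast k]
    linarith
  have hrpow_up : (2:ℝ) ^ ((4*σ) * (k:ℝ)) ≤ t ^ (-(2*σ)/α) := by
    rw [← htk_rpow k]
    exact Real.rpow_le_rpow_of_nonpos ht hta he_neg
  have hrpow_low : t ^ (-(2*σ)/α) ≤ (2:ℝ) ^ (4*σ) * (2:ℝ) ^ ((4*σ) * (k:ℝ)) := by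
    have h1 : t ^ (-(2*σ)/α) ≤ (tk (k+1)) ^ (-(2*σ)/α) :=
      Real.rpow_le_rpow_of_nonpos (htkpos (k+1)) htb he_neg
    rw [htk_rpow (k+1), hcast k] at h1
    refine h1.trans (le_of_eq ?_)
    rw [← r2_add]; congr 1; ring
  constructor
  · -- lower bound
    calc ENNReal.ofReal (c₁ * t ^ (-(2 * σ) / α))
        ≤ ENNReal.ofReal ((Real.exp (-2) * (c ^ 2 * (2:ℝ) ^ (-(4*σ) * (M:ℝ))))
            * (2:ℝ) ^ ((4*σ) * (k:ℝ))) := by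
          apply ENNReal.ofReal_le_ofReal
          rw [hc₁]
          have hpos : (0:ℝ) < Real.exp (-2) * (c ^ 2 * (2:ℝ) ^ (-(4*σ) * (M:ℝ))) :=
            mul_pos (Real.exp_pos _) (mul_pos (by positivity) (r2_pos _))
          have h2 : (2:ℝ) ^ (-(4*σ)) * ((2:ℝ) ^ (4*σ) * (2:ℝ) ^ ((4*σ) * (k:ℝ)))
              = (2:ℝ) ^ ((4*σ) * (k:ℝ)) := by
            rw [← mul_assoc, ← r2_add]
            norm_num
          calc Real.exp (-2) * (c ^ 2 * (2:ℝ) ^ (-(4*σ) * (M:ℝ))) * (2:ℝ) ^ (-(4*σ))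
                * t ^ (-(2 * σ) / α)
              ≤ Real.exp (-2) * (c ^ 2 * (2:ℝ) ^ (-(4*σ) * (M:ℝ))) * (2:ℝ) ^ (-(4*σ))
                * ((2:ℝ) ^ (4*σ) * (2:ℝ) ^ ((4*σ) * (k:ℝ))) := by
                apply mul_le_mul_of_nonneg_left hrpow_low (by positivity)
            _ = Real.exp (-2) * (c ^ 2 * (2:ℝ) ^ (-(4*σ) * (M:ℝ)))
                * ((2:ℝ) ^ (-(4*σ)) * ((2:ℝ) ^ (4*σ) * (2:ℝ) ^ ((4*σ) * (k:ℝ)))) := by ring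
            _ = Real.exp (-2) * (c ^ 2 * (2:ℝ) ^ (-(4*σ) * (M:ℝ)))
                * (2:ℝ) ^ ((4*σ) * (k:ℝ)) := by rw [h2]
      _ ≤ Ealpha n g α (tk k) := hlow_dyadic k
      _ ≤ Ealpha n g α t := Ealpha_antitone g α ht.le hta
  · -- upper bound
    calc Ealpha n g α t
        ≤ Ealpha n g α (tk (k+1)) := Ealpha_antitone g α (htkpos (k+1)).le htb
      _ ≤ ENNReal.ofReal (K * C ^ 2 * (2:ℝ) ^ ((4*σ) * (((k+1):ℤ):ℝ))) := hup_dyadic (k+1)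
      _ ≤ ENNReal.ofReal (c₂ * t ^ (-(2 * σ) / α)) := by
          apply ENNReal.ofReal_le_ofReal
          rw [hc₂, hcast k]
          have h2 : (2:ℝ) ^ ((4*σ) * ((k:ℝ)+1)) = (2:ℝ) ^ (4*σ) * (2:ℝ) ^ ((4*σ) * (k:ℝ)) := by
            rw [← r2_add]; congr 1; ring
          rw [h2]
          calc K * C ^ 2 * ((2:ℝ) ^ (4*σ) * (2:ℝ) ^ ((4*σ) * (k:ℝ)))
              = K * C ^ 2 * (2:ℝ) ^ (4*σ) * (2:ℝ) ^ ((4*σ) * (k:ℝ)) := by ring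
            _ ≤ K * C ^ 2 * (2:ℝ) ^ (4*σ) * t ^ (-(2 * σ) / α) := by
                apply mul_le_mul_of_nonneg_left hrpow_up (by positivity)

end Stmt9Aux
namespace Stmt9Aux

open Real

lemma sq_two_sigma (σ b : ℝ) (x : ℝ) :
    (b * (2:ℝ) ^ (2 * σ * x)) ^ 2 = b ^ 2 * (2:ℝ) ^ ((4*σ) * x) := by
  have h2 : (2:ℝ) ^ (2 * σ * x) * (2:ℝ) ^ (2 * σ * x) = (2:ℝ) ^ ((4*σ) * x) := by
    rw [← r2_add]; congr 1; ring
  calc (b * (2:ℝ) ^ (2 * σ * x)) ^ 2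
      = b ^ 2 * ((2:ℝ) ^ (2 * σ * x) * (2:ℝ) ^ (2 * σ * x)) := by ring
    _ = b ^ 2 * (2:ℝ) ^ ((4*σ) * x) := by rw [h2]

lemma rpow_tk {σ α : ℝ} (hα : 0 < α) (y : ℝ) :
    ((2:ℝ) ^ (-(2*α) * y)) ^ (-(2*σ)/α) = (2:ℝ) ^ ((4*σ) * y) := by
  rw [← Real.rpow_mul (by norm_num : (0:ℝ) ≤ 2)]
  congr 1
  field_simp
  ring

lemma exparg2 {α : ℝ} (y : ℝ) (x : ℝ) :
    -(2 * (2:ℝ) ^ (-(2*α) * y)) * (2:ℝ) ^ ((2*α) * x)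
      = -(2 * (2:ℝ) ^ ((2*α) * (x - y))) := by
  have h2 : (2:ℝ) ^ (-(2*α) * y) * (2:ℝ) ^ ((2*α) * x) = (2:ℝ) ^ ((2*α) * (x - y)) := by
    rw [← r2_add]; congr 1; ring
  calc -(2 * (2:ℝ) ^ (-(2*α) * y)) * (2:ℝ) ^ ((2*α) * x)
      = -(2 * ((2:ℝ) ^ (-(2*α) * y) * (2:ℝ) ^ ((2*α) * x))) := by ring
    _ = -(2 * (2:ℝ) ^ ((2*α) * (x - y))) := by rw [h2]

/-- upper block-energy bound from the two-sided heat bound. -/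
lemma block_upper (n : ℕ) (σ α : ℝ) (hσ : 0 < σ) (hα : 0 < α)
    (g : EuclideanSpace ℝ (Fin n) → ℂ) (c₂ : ℝ) (hc₂ : 0 < c₂)
    (hB : ∀ t : ℝ, 0 < t → Ealpha n g α t ≤ ENNReal.ofReal (c₂ * t ^ (-(2 * σ) / α))) :
    ∀ j : ℤ, bB n g j ≤
      ENNReal.ofReal ((Real.exp 2 * c₂ * (2:ℝ) ^ (4*σ)) * (2:ℝ) ^ ((4*σ) * (j:ℝ))) := by
  intro j
  set t : ℝ := (2:ℝ) ^ (-(2*α) * ((j:ℝ) + 1)) with htdef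
  have ht : 0 < t := r2_pos _
  have key : ENNReal.ofReal (Real.exp (-2)) * bB n g j
      ≤ ENNReal.ofReal (c₂ * (2:ℝ) ^ ((4*σ) * ((j:ℝ)+1))) := by
    have h1 : ENNReal.ofReal (Real.exp (-(2 * t) * (2:ℝ) ^ ((2*α) * ((j:ℝ) + 1)))) * bB n g j
        ≤ Ifun n g α t j := le_Ifun g hα ht.le j
    have harg : -(2 * t) * (2:ℝ) ^ ((2*α) * ((j:ℝ) + 1)) = -2 := by
      rw [htdef, exparg2]
      norm_num
    rw [harg] at h1
    calc ENNReal.ofReal (Real.exp (-2)) * bB n g j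
        ≤ Ifun n g α t j := h1
      _ ≤ Ealpha n g α t := Ifun_le_Ealpha g α t j
      _ ≤ ENNReal.ofReal (c₂ * t ^ (-(2 * σ) / α)) := hB t ht
      _ = ENNReal.ofReal (c₂ * (2:ℝ) ^ ((4*σ) * ((j:ℝ)+1))) := by
          rw [htdef, rpow_tk hα]
  have hmul : ENNReal.ofReal (Real.exp (-2)) * ENNReal.ofReal (Real.exp 2) = 1 := by
    rw [← ENNReal.ofReal_mul (Real.exp_nonneg _), ← Real.exp_add]
    norm_num
  calc bB n g j = ENNReal.ofReal (Real.exp (-2)) * bB n g j * ENNReal.ofReal (Real.exp 2) := by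
        rw [mul_comm (ENNReal.ofReal (Real.exp (-2))) (bB n g j), mul_assoc, hmul, mul_one]
    _ ≤ ENNReal.ofReal (c₂ * (2:ℝ) ^ ((4*σ) * ((j:ℝ)+1))) * ENNReal.ofReal (Real.exp 2) :=
        mul_le_mul_left key _
    _ = ENNReal.ofReal ((Real.exp 2 * c₂ * (2:ℝ) ^ (4*σ)) * (2:ℝ) ^ ((4*σ) * (j:ℝ))) := by
        rw [← ENNReal.ofReal_mul (by positivity)]
        congr 1
        have h2 : (2:ℝ) ^ ((4*σ) * ((j:ℝ)+1)) = (2:ℝ) ^ ((4*σ) * (j:ℝ)) * (2:ℝ) ^ (4*σ) := by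
          rw [← r2_add]; congr 1; ring
        rw [h2]; ring

end Stmt9Aux
namespace Stmt9Aux

open Real

set_option maxHeartbeats 2000000 in
lemma block_window (n : ℕ) (hn : 1 ≤ n) (σ α : ℝ) (hσ : 0 < σ) (hα : 0 < α)
    (g : EuclideanSpace ℝ (Fin n) → ℂ) (c₁ D : ℝ) (hc₁ : 0 < c₁) (hD : 0 < D)
    (hb_up : ∀ j : ℤ, bB n g j ≤ ENNReal.ofReal (D * (2:ℝ) ^ ((4*σ) * (j:ℝ))))
    (hB : ∀ t : ℝ, 0 < t → ENNReal.ofReal (c₁ * t ^ (-(2 * σ) / α)) ≤ Ealpha n g α t) :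
    ∃ M : ℕ, 0 < M ∧ ∃ cL : ℝ, 0 < cL ∧ ∀ j₀ : ℤ, ∃ j : ℤ, j₀ ≤ j ∧ j < j₀ + M ∧
      ENNReal.ofReal (cL * (2:ℝ) ^ ((4*σ) * (j:ℝ))) ≤ bB n g j := by
  obtain ⟨m, hm⟩ := exists_nat_gt ((4*σ) / (2*α))
  have hm4 : 4*σ < 2*α*m := by
    have := (div_lt_iff₀ (by linarith : (0:ℝ) < 2*α)).mp hm; linarith
  set q₁ : ℝ := (2:ℝ) ^ (-(4*σ)) with hq₁def
  set q₂ : ℝ := (2:ℝ) ^ ((4*σ) - 2*α*m) with hq₂def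
  have hq₁0 : 0 < q₁ := r2_pos _
  have hq₁1 : q₁ < 1 := r2_lt_one (by linarith)
  have hq₂0 : 0 < q₂ := r2_pos _
  have hq₂1 : q₂ < 1 := r2_lt_one (by linarith)
  have h1q₁ : (0:ℝ) < 1 - q₁ := by linarith
  have h1q₂ : (0:ℝ) < 1 - q₂ := by linarith
  have hDq₁ : (0:ℝ) < D * (1 - q₁)⁻¹ := mul_pos hD (inv_pos.mpr h1q₁)
  have hDq₂ : (0:ℝ) < D * (m.factorial : ℝ) * (1 - q₂)⁻¹ :=
    mul_pos (mul_pos hD (Nat.cast_pos.mpr m.factorial_pos)) (inv_pos.mpr h1q₂)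
  obtain ⟨K₁, hK₁⟩ := exists_pow_lt_of_lt_one
    (show (0:ℝ) < (c₁/4) / (D * (1 - q₁)⁻¹) by positivity) hq₁1
  obtain ⟨K₂, hK₂⟩ := exists_pow_lt_of_lt_one
    (show (0:ℝ) < (c₁/4) / (D * (m.factorial : ℝ) * (1 - q₂)⁻¹) by positivity) hq₂1
  set M : ℕ := K₁ + K₂ + 1 with hMdef
  have hMpos : 0 < M := by omega
  set cL : ℝ := (c₁/4) / ((M:ℝ) * (2:ℝ) ^ ((4*σ) * (M:ℝ))) with hcLdef
  have hMR : (0:ℝ) < (M:ℝ) := by exact_mod_cast hMpos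
  have hcLpos : 0 < cL := by
    apply div_pos (by positivity) (mul_pos hMR (r2_pos _))
  refine ⟨M, hMpos, cL, hcLpos, fun j₀ => ?_⟩
  by_contra hcon
  push_neg at hcon
  set j₁ : ℤ := j₀ + K₁ with hj₁def
  set t : ℝ := (2:ℝ) ^ (-(2*α) * (j₁:ℝ)) with htdef
  have ht : 0 < t := r2_pos _
  set f : ℤ → ℝ≥0∞ := fun j => Ifun n g α t j with hfdef
  -- pointwise bounds
  have hfb : ∀ j : ℤ, f j ≤ bB n g j := by
    intro j
    refine le_trans (Ifun_le g hα ht.le j) ?_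
    have : ENNReal.ofReal (Real.exp (-(2 * t) * (2:ℝ) ^ ((2*α) * (j:ℝ)))) ≤ 1 := by
      rw [ENNReal.ofReal_le_one, Real.exp_le_one_iff]
      have h0 : (0:ℝ) < 2 * t * (2:ℝ) ^ ((2*α) * (j:ℝ)) := by positivity
      nlinarith
    calc ENNReal.ofReal (Real.exp (-(2 * t) * (2:ℝ) ^ ((2*α) * (j:ℝ)))) * bB n g j
        ≤ 1 * bB n g j := mul_le_mul_left this _
      _ = bB n g j := one_mul _
  have hfD : ∀ j : ℤ, f j ≤ ENNReal.ofReal (D * (2:ℝ) ^ ((4*σ) * (j:ℝ))) :=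
    fun j => (hfb j).trans (hb_up j)
  set X : ℝ := (2:ℝ) ^ ((4*σ) * (j₁:ℝ)) with hXdef
  have hXpos : 0 < X := r2_pos _
  -- low tail
  have hT₁ : (∑' i : ℕ, f (j₀ - 1 - i)) ≤ ENNReal.ofReal ((c₁/4) * X) := by
    have step : (∑' i : ℕ, f (j₀ - 1 - i)) ≤
        ENNReal.ofReal ((D * (2:ℝ) ^ ((4*σ) * ((j₀:ℝ) - 1))) * (1 - q₁)⁻¹) := by
      refine le_trans (ENNReal.tsum_le_tsum (fun i => ?_))
        (tsum_geom_le (by positivity) hq₁0.le hq₁1)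
      refine (hfD _).trans (ENNReal.ofReal_le_ofReal (le_of_eq ?_))
      have hcast : (((j₀ - 1 - (i:ℤ)):ℤ):ℝ) = (j₀:ℝ) - 1 - (i:ℝ) := by push_cast; ring
      rw [hcast, hq₁def, r2_pow, mul_assoc D, ← r2_add]
      congr 2
      ring
    refine step.trans (ENNReal.ofReal_le_ofReal ?_)
    have hsplit : (2:ℝ) ^ ((4*σ) * ((j₀:ℝ) - 1)) = X * q₁ ^ (K₁ + 1) := by
      rw [hXdef, hq₁def, r2_pow, ← r2_add, hj₁def]
      congr 1
      push_cast
      ring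
    rw [hsplit]
    have hq₁K : q₁ ^ (K₁ + 1) ≤ q₁ ^ K₁ := by
      apply pow_le_pow_of_le_one hq₁0.le hq₁1.le
      omega
    have : D * (1 - q₁)⁻¹ * q₁ ^ (K₁ + 1) ≤ c₁/4 := by
      calc D * (1 - q₁)⁻¹ * q₁ ^ (K₁ + 1) ≤ D * (1 - q₁)⁻¹ * q₁ ^ K₁ := by
            apply mul_le_mul_of_nonneg_left hq₁K (by positivity)
        _ ≤ D * (1 - q₁)⁻¹ * ((c₁/4) / (D * (1 - q₁)⁻¹)) := by
            apply mul_le_mul_of_nonneg_left hK₁.le (by positivity)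
        _ = c₁/4 := by rw [mul_comm, div_mul_cancel₀ _ (ne_of_gt hDq₁)]
    calc D * (X * q₁ ^ (K₁ + 1)) * (1 - q₁)⁻¹
        = (D * (1 - q₁)⁻¹ * q₁ ^ (K₁ + 1)) * X := by ring
      _ ≤ (c₁/4) * X := by apply mul_le_mul_of_nonneg_right this hXpos.le
  -- high tail
  have hT₃ : (∑' i : ℕ, f (j₀ + M + i)) ≤ ENNReal.ofReal ((c₁/4) * X) := by
    have step : (∑' i : ℕ, f (j₀ + M + i)) ≤
        ENNReal.ofReal ((D * (m.factorial : ℝ) * X * q₂ ^ (K₂ + 1)) * (1 - q₂)⁻¹) := by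
      refine le_trans (ENNReal.tsum_le_tsum (fun i => ?_))
        (tsum_geom_le (by positivity) hq₂0.le hq₂1)
      set jr : ℝ := (((j₀ + (M:ℤ) + (i:ℤ)):ℤ):ℝ) with hjrdef
      have hjr : jr = (j₁:ℝ) + ((K₂ + 1 + i : ℕ):ℝ) := by
        rw [hjrdef, hj₁def, hMdef]; push_cast; ring
      have step1 : f (j₀ + M + i) ≤
          ENNReal.ofReal (Real.exp (-(2 * t) * (2:ℝ) ^ ((2*α) * jr))
            * (D * (2:ℝ) ^ ((4*σ) * jr))) := by
        refine le_trans (Ifun_le g hα ht.le _) ?_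
        rw [ENNReal.ofReal_mul (Real.exp_nonneg _)]
        exact mul_le_mul_right (hb_up _) _
      refine step1.trans (ENNReal.ofReal_le_ofReal ?_)
      set d : ℕ := K₂ + 1 + i with hddef
      have hexp : Real.exp (-(2 * t) * (2:ℝ) ^ ((2*α) * jr))
          ≤ (m.factorial : ℝ) * (2:ℝ) ^ (-(2*α*m) * (d:ℝ)) := by
        have harg : -(2 * t) * (2:ℝ) ^ ((2*α) * jr) = -(2 * (2:ℝ) ^ ((2*α) * (d:ℝ))) := by
          rw [htdef, exparg2]
          congr 3
          rw [hjr]; ring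
        rw [harg]
        have h1 : Real.exp (-(2 * (2:ℝ) ^ ((2*α) * (d:ℝ))))
            ≤ Real.exp (-((2:ℝ) ^ ((2*α) * (d:ℝ)))) := by
          apply Real.exp_le_exp.mpr
          have := r2_pos ((2*α) * (d:ℝ)); linarith
        refine h1.trans ((exp_neg_le (r2_pos _) m).trans (le_of_eq ?_))
        congr 1
        rw [r2_pow, ← Real.rpow_neg (by norm_num)]
        congr 1
        push_cast
        ring
      have hfactor : (2:ℝ) ^ ((4*σ) * jr) = X * (2:ℝ) ^ ((4*σ) * (d:ℝ)) := by
        rw [hXdef, ← r2_add, hjr]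
        congr 1
        ring
      have hq₂d : (2:ℝ) ^ ((4*σ) * (d:ℝ)) * (2:ℝ) ^ (-(2*α*m) * (d:ℝ)) = q₂ ^ d := by
        rw [hq₂def, r2_pow, ← r2_add]
        congr 1
        ring
      have hq₂dd : q₂ ^ d = q₂ ^ (K₂ + 1) * q₂ ^ i := by rw [hddef, pow_add]
      calc Real.exp (-(2 * t) * (2:ℝ) ^ ((2*α) * jr)) * (D * (2:ℝ) ^ ((4*σ) * jr))
          ≤ ((m.factorial : ℝ) * (2:ℝ) ^ (-(2*α*m) * (d:ℝ))) * (D * (2:ℝ) ^ ((4*σ) * jr)) := by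
            apply mul_le_mul_of_nonneg_right hexp (by positivity)
        _ = D * (m.factorial : ℝ) * X
            * ((2:ℝ) ^ ((4*σ) * (d:ℝ)) * (2:ℝ) ^ (-(2*α*m) * (d:ℝ))) := by
            rw [hfactor]; ring
        _ = D * (m.factorial : ℝ) * X * (q₂ ^ (K₂ + 1) * q₂ ^ i) := by rw [hq₂d, hq₂dd]
        _ = D * (m.factorial : ℝ) * X * q₂ ^ (K₂ + 1) * q₂ ^ i := by ring
    refine step.trans (ENNReal.ofReal_le_ofReal ?_)
    have hq₂K : q₂ ^ (K₂ + 1) ≤ q₂ ^ K₂ := by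
      apply pow_le_pow_of_le_one hq₂0.le hq₂1.le
      omega
    have hkey : D * (m.factorial : ℝ) * (1 - q₂)⁻¹ * q₂ ^ (K₂ + 1) ≤ c₁/4 := by
      calc D * (m.factorial : ℝ) * (1 - q₂)⁻¹ * q₂ ^ (K₂ + 1)
          ≤ D * (m.factorial : ℝ) * (1 - q₂)⁻¹ * q₂ ^ K₂ := by
            apply mul_le_mul_of_nonneg_left hq₂K (by positivity)
        _ ≤ D * (m.factorial : ℝ) * (1 - q₂)⁻¹
            * ((c₁/4) / (D * (m.factorial : ℝ) * (1 - q₂)⁻¹)) := by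
            apply mul_le_mul_of_nonneg_left hK₂.le (by positivity)
        _ = c₁/4 := by rw [mul_comm, div_mul_cancel₀ _ (ne_of_gt hDq₂)]
    calc D * (m.factorial : ℝ) * X * q₂ ^ (K₂ + 1) * (1 - q₂)⁻¹
        = (D * (m.factorial : ℝ) * (1 - q₂)⁻¹ * q₂ ^ (K₂ + 1)) * X := by ring
      _ ≤ (c₁/4) * X := mul_le_mul_of_nonneg_right hkey hXpos.le
  -- middle window
  have hW : (∑ j ∈ Finset.Ico j₀ (j₀ + (M:ℤ)), f j) ≤ ENNReal.ofReal ((c₁/4) * X) := by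
    have hterm : ∀ j ∈ Finset.Ico j₀ (j₀ + (M:ℤ)),
        f j ≤ ENNReal.ofReal (cL * (2:ℝ) ^ ((4*σ) * ((j₀:ℝ) + (M:ℝ)))) := by
      intro j hj
      rw [Finset.mem_Ico] at hj
      have h1 : bB n g j < ENNReal.ofReal (cL * (2:ℝ) ^ ((4*σ) * (j:ℝ))) :=
        hcon j hj.1 hj.2
      refine ((hfb j).trans h1.le).trans (ENNReal.ofReal_le_ofReal ?_)
      apply mul_le_mul_of_nonneg_left _ hcLpos.le
      apply r2_mono
      have : (j:ℝ) ≤ (j₀:ℝ) + (M:ℝ) := by exact_mod_cast hj.2.le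
      nlinarith
    calc (∑ j ∈ Finset.Ico j₀ (j₀ + (M:ℤ)), f j)
        ≤ ∑ _j ∈ Finset.Ico j₀ (j₀ + (M:ℤ)),
            ENNReal.ofReal (cL * (2:ℝ) ^ ((4*σ) * ((j₀:ℝ) + (M:ℝ)))) :=
          Finset.sum_le_sum hterm
      _ = ENNReal.ofReal ((M:ℝ) * (cL * (2:ℝ) ^ ((4*σ) * ((j₀:ℝ) + (M:ℝ))))) := by
          rw [Finset.sum_const, Int.card_Ico]
          have h1 : (j₀ + (M:ℤ) - j₀).toNat = M := by omega
          rw [h1, nsmul_eq_mul, ← ENNReal.ofReal_natCast M,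
            ← ENNReal.ofReal_mul (Nat.cast_nonneg M)]
      _ ≤ ENNReal.ofReal ((c₁/4) * X) := by
          apply ENNReal.ofReal_le_ofReal
          have hsplit : (2:ℝ) ^ ((4*σ) * ((j₀:ℝ) + (M:ℝ)))
              = X * (2:ℝ) ^ ((4*σ) * ((M:ℝ) - (K₁:ℝ))) := by
            rw [hXdef, ← r2_add, hj₁def]
            congr 1
            push_cast
            ring
          have hle : (2:ℝ) ^ ((4*σ) * ((M:ℝ) - (K₁:ℝ))) ≤ (2:ℝ) ^ ((4*σ) * (M:ℝ)) := by
            apply r2_mono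
            have : (0:ℝ) ≤ (K₁:ℝ) := Nat.cast_nonneg _
            nlinarith
          calc (M:ℝ) * (cL * (2:ℝ) ^ ((4*σ) * ((j₀:ℝ) + (M:ℝ))))
              = (M:ℝ) * cL * ((2:ℝ) ^ ((4*σ) * ((M:ℝ) - (K₁:ℝ))) * X) := by
                rw [hsplit]; ring
            _ ≤ (M:ℝ) * cL * ((2:ℝ) ^ ((4*σ) * (M:ℝ)) * X) := by
                apply mul_le_mul_of_nonneg_left _ (by positivity)
                exact mul_le_mul_of_nonneg_right hle hXpos.le
            _ = (c₁/4) * X := by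
                rw [hcLdef]
                field_simp
  -- contradiction
  have hlowt := hB t ht
  rw [htdef, rpow_tk hα, ← hXdef] at hlowt
  have hsum : Ealpha n g α t ≤ ENNReal.ofReal ((3*c₁/4) * X) := by
    calc Ealpha n g α t = ∑' j : ℤ, f j := Ealpha_decomp hn g α t
      _ ≤ (∑' i : ℕ, f (j₀ - 1 - i)) + (∑ j ∈ Finset.Ico j₀ (j₀ + (M:ℤ)), f j)
          + (∑' i : ℕ, f (j₀ + M + i)) := tsum_int_split f j₀ (j₀ + M) (by omega)
      _ ≤ ENNReal.ofReal ((c₁/4) * X) + ENNReal.ofReal ((c₁/4) * X)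
          + ENNReal.ofReal ((c₁/4) * X) := add_le_add (add_le_add hT₁ hW) hT₃
      _ = ENNReal.ofReal ((3*c₁/4) * X) := by
          rw [← ENNReal.ofReal_add (by positivity) (by positivity),
            ← ENNReal.ofReal_add (by positivity) (by positivity)]
          congr 1
          ring
  have hfinal : ENNReal.ofReal (c₁ * X) ≤ ENNReal.ofReal ((3*c₁/4) * X) :=
    le_trans hlowt hsum
  rw [ENNReal.ofReal_le_ofReal_iff (by positivity)] at hfinal
  nlinarith

end Stmt9Aux

open Stmt9Aux in
theorem stmt9 (n : ℕ) (hn : 1 ≤ n) (σ α : ℝ) (hσ : 0 < σ) (hα : 0 < α)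
    (g : EuclideanSpace ℝ (Fin n) → ℂ) (hg_meas : Measurable g) :
    StrongACond n g (2 * σ) ↔
    (∃ c₁ c₂ : ℝ, 0 < c₁ ∧ 0 < c₂ ∧ ∀ t : ℝ, 0 < t →
      ENNReal.ofReal (c₁ * t ^ (-(2 * σ) / α)) ≤ Ealpha n g α t ∧
      Ealpha n g α t ≤ ENNReal.ofReal (c₂ * t ^ (-(2 * σ) / α))) := by
  constructor
  · exact fun h => forward n hn σ α hσ hα g h
  · rintro ⟨c₁, c₂, hc₁, hc₂, hB⟩
    set D : ℝ := Real.exp 2 * c₂ * (2:ℝ) ^ (4*σ) with hDdef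
    have hD : 0 < D := by
      apply mul_pos (mul_pos (Real.exp_pos _) hc₂) (r2_pos _)
    have hb_up : ∀ j : ℤ, bB n g j ≤ ENNReal.ofReal (D * (2:ℝ) ^ ((4*σ) * (j:ℝ))) :=
      block_upper n σ α hσ hα g c₂ hc₂ (fun t ht => (hB t ht).2)
    obtain ⟨M, hM, cL, hcL, hwin⟩ :=
      block_window n hn σ α hσ hα g c₁ D hc₁ hD hb_up (fun t ht => (hB t ht).1)
    refine ⟨Real.sqrt cL, Real.sqrt D, Real.sqrt_pos.mpr hcL, Real.sqrt_pos.mpr hD, M, hM,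
      ?_, ?_⟩
    · intro j
      rw [ajBlock_eq]
      have hsq : (Real.sqrt D * (2:ℝ) ^ (2 * σ * (j:ℝ))) ^ 2 = D * (2:ℝ) ^ ((4*σ) * (j:ℝ)) := by
        rw [sq_two_sigma, Real.sq_sqrt hD.le]
      apply aj_le_of_bB (by positivity)
      rw [hsq]
      exact hb_up j
    · intro j₀
      obtain ⟨j, h1, h2, h3⟩ := hwin j₀
      refine ⟨j, h1, h2, ?_⟩
      rw [ajBlock_eq]
      have hsq : (Real.sqrt cL * (2:ℝ) ^ (2 * σ * (j:ℝ))) ^ 2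
          = cL * (2:ℝ) ^ ((4*σ) * (j:ℝ)) := by
        rw [sq_two_sigma, Real.sq_sqrt hcL.le]
      apply le_aj_of_bB (by positivity)
      rw [hsq]
      exact h3
end
end

section
/- Let n ≥ 1, σ > 0, α > 0 and 1 ≤ q < ∞. There exist constants C₁, C₂ > 0, depending only on n, σ, α, q, such that for every measurable g : ℝⁿ → ℂ one has (with both sides valued in [0,+∞]): C₁ · Σ_{j∈ℤ} (2^{−2jσ} a_j(g))^q ≤ ∫₀^∞ t^{qσ/α} (∫_{ℝⁿ} e^{−2t|ξ|^{2α}} |g(ξ)|² dξ)^{q/2} dt/t ≤ C₂ · Σ_{j∈ℤ} (2^{−2jσ} a_j(g))^q. (This is the p = 2 case of the characterization of the homogeneous Besov space Ḃ^{−2σ}_{2,q} through the semigroup e^{t𝓛} generated by a diagonalizable pseudo-differential operator 𝓛 with homogeneous symbol of order 2α: the norm ‖f‖_{Ḃ^{−2σ}_{2,q}} is equivalent to ‖ t^{σ/α}‖e^{t𝓛}f‖₂ ‖_{L^q(ℝ⁺, dt/t)}.) -/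
open MeasureTheory Filter Topology
open scoped ENNReal NNReal

noncomputable section

lemma sq_div_four_le_exp {x : ℝ} (hx : 0 ≤ x) : x ^ 2 / 4 ≤ Real.exp x := by
  have h1 : x / 2 ≤ Real.exp (x / 2) := (Real.add_one_le_exp _).trans' (by linarith)
  have h2 : Real.exp (x / 2) ^ 2 = Real.exp x := by
    rw [sq, ← Real.exp_add]; ring_nf
  nlinarith [Real.exp_pos (x/2)]

lemma summable_aux (c d e : ℝ) (hc : 0 < c) (hd : 0 < d) (he : 0 < e) :
    Summable (fun m : ℤ => (2:ℝ) ^ (c * (m:ℝ)) * Real.exp (-(d * (2:ℝ) ^ (e * (m:ℝ))))) := by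
  have hL : (0:ℝ) < Real.log 2 := Real.log_pos (by norm_num)
  set L := Real.log 2 with hLdef
  apply Summable.of_nat_of_neg
  · -- positive part
    set b : ℝ := d * (e * L) ^ 2 / 4 with hbdef
    have hb : 0 < b := by positivity
    set M : ℝ := (c * L + 1) ^ 2 / (4 * b) with hMdef
    refine Summable.of_nonneg_of_le (fun k => by positivity) (fun k => ?_)
      ((summable_geometric_of_lt_one (Real.exp_pos _).le
        (Real.exp_lt_one_iff.mpr (by norm_num : (-1:ℝ) < 0))).mul_left (Real.exp M))
    push_cast
    have h2k : (2:ℝ) ^ (c * (k:ℝ)) = Real.exp (c * (k:ℝ) * L) := by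
      rw [Real.rpow_def_of_pos (by norm_num : (0:ℝ) < 2), hLdef]; ring_nf
    have h2e : (e * (k:ℝ) * L) ^ 2 / 4 ≤ (2:ℝ) ^ (e * (k:ℝ)) := by
      rw [Real.rpow_def_of_pos (by norm_num : (0:ℝ) < 2)]
      calc (e * (k:ℝ) * L) ^ 2 / 4 ≤ Real.exp (e * (k:ℝ) * L) :=
            sq_div_four_le_exp (by positivity)
        _ = Real.exp (L * (e * (k:ℝ))) := by ring_nf
    have hexpk : Real.exp (-1) ^ k = Real.exp (-(k:ℝ)) := by
      rw [← Real.exp_nat_mul]; ring_nf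
    rw [h2k, hexpk, ← Real.exp_add, ← Real.exp_add]
    apply Real.exp_le_exp.mpr
    have h3 : d * ((e * (k:ℝ) * L) ^ 2 / 4) ≤ d * (2:ℝ) ^ (e * (k:ℝ)) :=
      mul_le_mul_of_nonneg_left h2e hd.le
    have h4 : b * (k:ℝ)^2 = d * ((e * (k:ℝ) * L) ^ 2 / 4) := by rw [hbdef]; ring
    have hM4 : M * (4*b) = (c*L+1)^2 := by rw [hMdef]; field_simp
    have quad : c * (k:ℝ) * L - b * (k:ℝ)^2 ≤ M - (k:ℝ) := by
      nlinarith [sq_nonneg (2*b*(k:ℝ) - (c*L+1)), hb]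
    linarith [quad, h3, h4]
  · -- negative part
    refine Summable.of_nonneg_of_le (fun k => by positivity) (fun k => ?_)
      (summable_geometric_of_lt_one (r := (2:ℝ) ^ (-c)) (by positivity)
        (Real.rpow_lt_one_of_one_lt_of_neg (by norm_num) (neg_lt_zero.mpr hc)))
    push_cast
    have h1 : (2:ℝ) ^ (c * (-(k:ℝ))) = ((2:ℝ) ^ (-c)) ^ k := by
      rw [← Real.rpow_natCast ((2:ℝ) ^ (-c)) k, ← Real.rpow_mul (by norm_num : (0:ℝ) ≤ 2)]
      ring_nf
    rw [h1]
    have he1 : Real.exp (-(d * (2:ℝ) ^ (e * (-(k:ℝ))))) ≤ 1 :=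
      Real.exp_le_one_iff.mpr (neg_nonpos.mpr (by positivity))
    have hp : (0:ℝ) < ((2:ℝ) ^ (-c)) ^ k :=
      pow_pos (Real.rpow_pos_of_pos (by norm_num) _) k
    nlinarith [Real.exp_pos (-(d * (2:ℝ) ^ (e * (-(k:ℝ)))))]

lemma finset_rpow_le {p : ℝ} (hp : 0 < p) (hp1 : p ≤ 1) (s : Finset ℤ) (f : ℤ → ℝ≥0∞) :
    (∑ m ∈ s, f m) ^ p ≤ ∑ m ∈ s, (f m) ^ p := by
  classical
  induction s using Finset.induction with
  | empty => simp [ENNReal.zero_rpow_of_pos hp]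
  | insert a s hnotmem ih =>
    rw [Finset.sum_insert hnotmem, Finset.sum_insert hnotmem]
    exact (ENNReal.rpow_add_le_add_rpow _ _ hp.le hp1).trans (by gcongr)

lemma tsum_rpow_le {p : ℝ} (hp : 0 < p) (hp1 : p ≤ 1) (f : ℤ → ℝ≥0∞) :
    (∑' m, f m) ^ p ≤ ∑' m, (f m) ^ p := by
  rw [ENNReal.tsum_eq_iSup_sum]
  have : (⨆ s : Finset ℤ, ∑ m ∈ s, f m) ^ p = ⨆ s : Finset ℤ, (∑ m ∈ s, f m) ^ p := by
    exact (ENNReal.orderIsoRpow p hp).map_iSup _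
  rw [this]
  exact iSup_le fun s => (finset_rpow_le hp hp1 s f).trans (ENNReal.sum_le_tsum s)

lemma holder_tsum {p : ℝ} (hp : 1 < p) (V B : ℤ → ℝ≥0∞)
    (hV0 : ∀ m, V m ≠ 0) (hVt : ∀ m, V m ≠ ∞) :
    (∑' m, V m * B m) ^ p ≤ (∑' m, V m) ^ (p - 1) * ∑' m, V m * (B m) ^ p := by
  have hp0 : (0:ℝ) < p := lt_trans zero_lt_one hp
  set q := Real.conjExponent p with hqdef
  have hpq : p.HolderConjugate q := Real.HolderConjugate.conjExponent hp
  have hq0 : (0:ℝ) < q := hpq.symm.pos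
  set f : ℤ → ℝ≥0∞ := fun m => (V m * (B m) ^ p) ^ (1/p) with hfdef
  set g : ℤ → ℝ≥0∞ := fun m => (V m) ^ (1/q) with hgdef
  have hfg : ∀ m, (f * g) m = V m * B m := by
    intro m
    simp only [f, g, Pi.mul_apply]
    rw [ENNReal.mul_rpow_of_nonneg _ _ (by positivity : (0:ℝ) ≤ 1/p),
      ← ENNReal.rpow_mul]
    rw [mul_one_div, div_self hp0.ne', ENNReal.rpow_one]
    rw [mul_comm (V m ^ (1/p)) (B m), mul_assoc, ← ENNReal.rpow_add _ _ (hV0 m) (hVt m)]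
    rw [show 1/p + 1/q = 1 by simpa [one_div] using hpq.inv_add_inv_eq_one, ENNReal.rpow_one, mul_comm]
  have hold := ENNReal.lintegral_mul_le_Lp_mul_Lq (Measure.count : Measure ℤ) hpq
    (Measurable.aemeasurable (measurable_from_top)) (Measurable.aemeasurable (measurable_from_top))
    (f := f) (g := g)
  rw [lintegral_count, lintegral_count, lintegral_count] at hold
  have hfp : ∀ m, f m ^ p = V m * (B m) ^ p := by
    intro m
    rw [hfdef]
    simp only []
    rw [← ENNReal.rpow_mul, one_div, inv_mul_cancel₀ hp0.ne', ENNReal.rpow_one]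
  have hgq : ∀ m, g m ^ q = V m := by
    intro m
    rw [hgdef]
    simp only []
    rw [← ENNReal.rpow_mul, one_div, inv_mul_cancel₀ hq0.ne', ENNReal.rpow_one]
  simp only [hfg, hfp, hgq] at hold
  calc (∑' m, V m * B m) ^ p
      ≤ ((∑' m, V m * (B m) ^ p) ^ (1/p) * (∑' m, V m) ^ (1/q)) ^ p :=
        ENNReal.rpow_le_rpow hold hp0.le
    _ = (∑' m, V m) ^ (p - 1) * ∑' m, V m * (B m) ^ p := by
        rw [ENNReal.mul_rpow_of_nonneg _ _ hp0.le, ← ENNReal.rpow_mul, ← ENNReal.rpow_mul,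
          one_div_mul_cancel hp0.ne', ENNReal.rpow_one]
        rw [show 1/q * p = p - 1 by
          have h1 := hpq.inv_add_inv_eq_one
          have h2 : q ≠ 0 := hpq.symm.ne_zero
          field_simp
          field_simp at h1
          nlinarith [h1]]
        ring

lemma exists_dyadic {x : ℝ} (hx : 0 < x) :
    ∃ j : ℤ, (2:ℝ) ^ (j:ℝ) ≤ x ∧ x < (2:ℝ) ^ ((j:ℝ) + 1) := by
  set L := Real.logb 2 x with hL
  have hxL : (2:ℝ) ^ L = x := Real.rpow_logb (by norm_num) (by norm_num) hx
  refine ⟨⌊L⌋, ?_, ?_⟩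
  · have h1 : (2:ℝ) ^ ((⌊L⌋:ℤ):ℝ) ≤ (2:ℝ) ^ L :=
      Real.rpow_le_rpow_of_exponent_le (by norm_num) (Int.floor_le L)
    linarith
  · have h1 : (2:ℝ) ^ L < (2:ℝ) ^ (((⌊L⌋:ℤ):ℝ) + 1) := by
      apply Real.rpow_lt_rpow_of_exponent_lt (by norm_num)
      push_cast
      exact Int.lt_floor_add_one L
    linarith

lemma exists_dyadic_t {α : ℝ} (hα : 0 < α) {t : ℝ} (ht : 0 < t) :
    ∃ k : ℤ, (2:ℝ) ^ (-(2*α)*((k:ℝ) + 1)) < t ∧ t ≤ (2:ℝ) ^ (-(2*α)*(k:ℝ)) := by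
  set L := Real.logb 2 t with hL
  have htL : (2:ℝ) ^ L = t := Real.rpow_logb (by norm_num) (by norm_num) ht
  refine ⟨⌊-L/(2*α)⌋, ?_, ?_⟩
  · have h1 : -L/(2*α) < (⌊-L/(2*α)⌋:ℝ) + 1 := Int.lt_floor_add_one _
    have h2 : -L < (2*α) * ((⌊-L/(2*α)⌋:ℝ) + 1) := by
      rw [div_lt_iff₀ (by positivity : (0:ℝ) < 2*α)] at h1
      linarith
    have h3 : (2:ℝ) ^ (-(2*α)*((⌊-L/(2*α)⌋:ℝ) + 1)) < (2:ℝ) ^ L :=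
      Real.rpow_lt_rpow_of_exponent_lt (by norm_num) (by linarith)
    linarith
  · have h1 : (⌊-L/(2*α)⌋:ℝ) ≤ -L/(2*α) := Int.floor_le _
    have h2 : (2*α) * (⌊-L/(2*α)⌋:ℝ) ≤ -L := by
      rw [le_div_iff₀ (by positivity : (0:ℝ) < 2*α)] at h1
      linarith
    have h3 : (2:ℝ) ^ L ≤ (2:ℝ) ^ (-(2*α)*(⌊-L/(2*α)⌋:ℝ)) :=
      Real.rpow_le_rpow_of_exponent_le (by norm_num) (by linarith)
    linarith

lemma conv_sum {p : ℝ} (hp : 0 < p) (V B : ℤ → ℝ≥0∞) (hV0 : ∀ m, V m ≠ 0)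
    (hVt : ∀ m, V m ≠ ∞) (hVS : (∑' m, V m) ≠ ∞) :
    ∑' k : ℤ, (∑' m : ℤ, V m * B (k + m)) ^ p ≤
      ((∑' m, (V m) ^ p) + (∑' m, V m) ^ p) * ∑' j, (B j) ^ p := by
  have hshift : ∀ m : ℤ, (∑' k : ℤ, (B (k + m)) ^ p) = ∑' j : ℤ, (B j) ^ p := fun m =>
    (Equiv.addRight m).tsum_eq (fun j => (B j) ^ p)
  rcases le_or_gt p 1 with hple | hpgt
  · calc ∑' k : ℤ, (∑' m : ℤ, V m * B (k + m)) ^ p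
        ≤ ∑' k : ℤ, ∑' m : ℤ, (V m * B (k + m)) ^ p :=
          ENNReal.tsum_le_tsum fun k => tsum_rpow_le hp hple _
      _ = ∑' m : ℤ, ∑' k : ℤ, (V m) ^ p * (B (k + m)) ^ p := by
          rw [ENNReal.tsum_comm]
          simp_rw [ENNReal.mul_rpow_of_nonneg _ _ hp.le]
      _ = ∑' m : ℤ, (V m) ^ p * ∑' j : ℤ, (B j) ^ p := by
          simp_rw [ENNReal.tsum_mul_left, hshift]
      _ = (∑' m, (V m) ^ p) * ∑' j : ℤ, (B j) ^ p := ENNReal.tsum_mul_right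
      _ ≤ ((∑' m, (V m) ^ p) + (∑' m, V m) ^ p) * ∑' j, (B j) ^ p := by
          gcongr; exact le_self_add
  · have hS0 : (∑' m, V m) ≠ 0 := by
      rw [Ne, ENNReal.tsum_eq_zero]
      intro h; exact hV0 0 (h 0)
    calc ∑' k : ℤ, (∑' m : ℤ, V m * B (k + m)) ^ p
        ≤ ∑' k : ℤ, (∑' m, V m) ^ (p - 1) * ∑' m : ℤ, V m * (B (k + m)) ^ p :=
          ENNReal.tsum_le_tsum fun k => holder_tsum hpgt V (fun m => B (k + m)) hV0 hVt
      _ = (∑' m, V m) ^ (p - 1) * ∑' m : ℤ, V m * ∑' k : ℤ, (B (k + m)) ^ p := by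
          rw [ENNReal.tsum_mul_left, ENNReal.tsum_comm]
          simp_rw [ENNReal.tsum_mul_left]
      _ = (∑' m, V m) ^ (p - 1) * ((∑' m, V m) * ∑' j : ℤ, (B j) ^ p) := by
          simp_rw [hshift]
          rw [ENNReal.tsum_mul_right]
      _ = (∑' m, V m) ^ p * ∑' j : ℤ, (B j) ^ p := by
          rw [← mul_assoc]
          congr 1
          nth_rewrite 2 [← ENNReal.rpow_one (∑' m, V m)]
          rw [← ENNReal.rpow_add _ _ hS0 hVS]
          ring_nf
      _ ≤ ((∑' m, (V m) ^ p) + (∑' m, V m) ^ p) * ∑' j, (B j) ^ p := by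
          gcongr; exact le_add_self

open Filter Topology Set in
set_option maxHeartbeats 2000000 in
theorem stmt11 (n : ℕ) (hn : 1 ≤ n) (σ α q : ℝ) (hσ : 0 < σ) (hα : 0 < α) (hq : 1 ≤ q) :
    ∃ C₁ C₂ : ℝ, 0 < C₁ ∧ 0 < C₂ ∧
      ∀ g : EuclideanSpace ℝ (Fin n) → ℂ, Measurable g →
        ENNReal.ofReal C₁ *
            ∑' j : ℤ, (ENNReal.ofReal ((2 : ℝ) ^ (-(2 * (j : ℝ) * σ))) * ajBlock n g j) ^ q ≤
          (∫⁻ t in Set.Ioi (0 : ℝ),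
            ENNReal.ofReal (t ^ (q * σ / α)) * (Ealpha n g α t) ^ (q / 2) *
              ENNReal.ofReal t⁻¹) ∧
        (∫⁻ t in Set.Ioi (0 : ℝ),
            ENNReal.ofReal (t ^ (q * σ / α)) * (Ealpha n g α t) ^ (q / 2) *
              ENNReal.ofReal t⁻¹) ≤
          ENNReal.ofReal C₂ *
            ∑' j : ℤ, (ENNReal.ofReal ((2 : ℝ) ^ (-(2 * (j : ℝ) * σ))) * ajBlock n g j) ^ q := by
  have hq0 : (0:ℝ) < q := lt_of_lt_of_le one_pos hq
  have hp : (0:ℝ) < q/2 := by positivity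
  -- constants
  set ε : ℝ := Real.exp (-((2:ℝ)^((1:ℝ)+2*α))) with hεdef
  have hε : 0 < ε := Real.exp_pos _
  set C₁ : ℝ := (2:ℝ)^(-(2*σ*q)) * ε^(q/2) * (1 - (2:ℝ)^(-(2*α))) with hC1def
  have h2a : (2:ℝ)^(-(2*α)) < 1 :=
    Real.rpow_lt_one_of_one_lt_of_neg (by norm_num) (by linarith)
  have hC1 : 0 < C₁ := by
    have : (0:ℝ) < 1 - (2:ℝ)^(-(2*α)) := by linarith
    positivity
  set v : ℤ → ℝ := fun m => (2:ℝ)^((4*σ)*(m:ℝ)) *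
    Real.exp (-((2:ℝ)^((1:ℝ)-2*α) * (2:ℝ)^((2*α)*(m:ℝ)))) with hvdef
  have hv_pos : ∀ m, 0 < v m := fun m => by
    have := Real.rpow_pos_of_pos (by norm_num : (0:ℝ) < 2) ((4*σ)*(m:ℝ))
    have := Real.exp_pos (-((2:ℝ)^((1:ℝ)-2*α) * (2:ℝ)^((2*α)*(m:ℝ))))
    positivity
  have hv_sum : Summable v := by
    have := summable_aux (4*σ) ((2:ℝ)^((1:ℝ)-2*α)) (2*α) (by positivity)
      (Real.rpow_pos_of_pos (by norm_num) _) (by positivity)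
    exact this.congr (fun m => by simp [hvdef])
  have hvp_sum : Summable (fun m => v m ^ (q/2)) := by
    have hs := summable_aux (4*σ*(q/2)) ((q/2) * (2:ℝ)^((1:ℝ)-2*α)) (2*α) (by positivity)
      (by positivity) (by positivity)
    apply hs.congr
    intro m
    rw [hvdef]
    simp only []
    rw [Real.mul_rpow (by positivity) (by positivity),
      ← Real.rpow_mul (by norm_num : (0:ℝ) ≤ 2),
      ← Real.exp_log (x := Real.exp _ ^ (q/2)) (by positivity)]
    rw [Real.log_rpow (Real.exp_pos _), Real.log_exp]
    ring_nf
  set R1 : ℝ := ∑' m, v m ^ (q/2) with hR1def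
  set R2 : ℝ := ∑' m, v m with hR2def
  have hR1 : 0 ≤ R1 := tsum_nonneg (fun m => by positivity)
  have hR2 : 0 < R2 := Summable.tsum_pos hv_sum (fun m => (hv_pos m).le) 0 (hv_pos 0)
  set C₂ : ℝ := (2:ℝ)^(2*α) * (R1 + R2^(q/2)) + 1 with hC2def
  have hC2 : 0 < C₂ := by positivity
  refine ⟨C₁, C₂, hC1, hC2, ?_⟩
  intro g hg
  -- definitions depending on g
  set F : EuclideanSpace ℝ (Fin n) → ℝ≥0∞ := fun ξ => ENNReal.ofReal (‖g ξ‖ ^ 2) with hFdef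
  set A : ℤ → Set (EuclideanSpace ℝ (Fin n)) := fun j =>
    {ξ | (2:ℝ)^(j:ℝ) ≤ ‖ξ‖ ∧ ‖ξ‖ < (2:ℝ)^((j:ℝ)+1)} with hAdef
  set I : ℤ → ℝ≥0∞ := fun j => ∫⁻ ξ in A j, F ξ with hIdef
  have haj : ∀ j, ajBlock n g j = (I j) ^ ((1:ℝ)/2) := fun j => rfl
  have hAmeas : ∀ j, MeasurableSet (A j) := by
    intro j
    have : A j = (fun ξ : EuclideanSpace ℝ (Fin n) => ‖ξ‖) ⁻¹'
        (Set.Ico ((2:ℝ)^(j:ℝ)) ((2:ℝ)^((j:ℝ)+1))) := by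
      ext ξ; simp [hAdef, Set.mem_Ico]
    rw [this]
    exact measurable_norm measurableSet_Ico
  have hterm : ∀ j : ℤ, (ENNReal.ofReal ((2:ℝ)^(-(2*(j:ℝ)*σ))) * ajBlock n g j) ^ q
      = ENNReal.ofReal ((2:ℝ)^(-(2*σ*q)*(j:ℝ))) * (I j) ^ (q/2) := by
    intro j
    rw [haj j, ENNReal.mul_rpow_of_nonneg _ _ hq0.le, ← ENNReal.rpow_mul,
      ENNReal.ofReal_rpow_of_pos (by positivity),
      ← Real.rpow_mul (by norm_num : (0:ℝ) ≤ 2)]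
    rw [show (-(2*(j:ℝ)*σ)) * q = (-(2*σ*q))*(j:ℝ) by ring,
      show (1:ℝ)/2 * q = q/2 by ring]
  set J : ℤ → Set ℝ := fun k =>
    Set.Ioc ((2:ℝ)^(-(2*α)*((k:ℝ)+1))) ((2:ℝ)^(-(2*α)*(k:ℝ))) with hJdef
  have hJmeas : ∀ k, MeasurableSet (J k) := fun k => measurableSet_Ioc
  have hmono2 : ∀ {a b : ℤ}, a < b →
      (2:ℝ)^(-(2*α)*((b:ℝ))) ≤ (2:ℝ)^(-(2*α)*((a:ℝ)+1)) := by
    intro a b hab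
    apply Real.rpow_le_rpow_of_exponent_le (by norm_num)
    have : (a:ℝ) + 1 ≤ (b:ℝ) := by exact_mod_cast hab
    nlinarith
  have hJdisj : Pairwise (Function.onFun Disjoint J) := by
    intro a b hab
    rcases hab.lt_or_gt with h | h
    · exact Set.Ioc_disjoint_Ioc.mpr ((min_le_right _ _).trans ((hmono2 h).trans (le_max_left _ _)))
    · exact Set.Ioc_disjoint_Ioc.mpr ((min_le_left _ _).trans ((hmono2 h).trans (le_max_right _ _)))
  have hJsub : ∀ k, J k ⊆ Set.Ioi (0:ℝ) := by
    intro k t ht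
    exact lt_trans (Real.rpow_pos_of_pos (by norm_num) _) ht.1
  have hJunion : (⋃ k, J k) = Set.Ioi (0:ℝ) := by
    apply Set.Subset.antisymm
    · exact Set.iUnion_subset hJsub
    · intro t ht
      obtain ⟨k, h1, h2⟩ := exists_dyadic_t hα ht
      exact Set.mem_iUnion.mpr ⟨k, h1, h2⟩
  constructor
  · -- lower bound
    have hEge : ∀ j : ℤ, ∀ t ∈ J j,
        ENNReal.ofReal (ε^(q/2)) * (I j)^(q/2) ≤ (Ealpha n g α t)^(q/2) := by
      intro j t ht
      have hbase : ENNReal.ofReal ε * I j ≤ Ealpha n g α t := by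
        have h1 : (∫⁻ ξ in A j, ENNReal.ofReal (Real.exp (-(2*t) * ‖ξ‖^(2*α)) * ‖g ξ‖^2))
            ≤ Ealpha n g α t := setLIntegral_le_lintegral _ _
        refine le_trans ?_ h1
        have h2 : ∀ ξ ∈ A j, ENNReal.ofReal ε * F ξ ≤
            ENNReal.ofReal (Real.exp (-(2*t) * ‖ξ‖^(2*α)) * ‖g ξ‖^2) := by
          intro ξ hξ
          rw [hFdef]
          simp only []
          rw [← ENNReal.ofReal_mul hε.le]
          apply ENNReal.ofReal_le_ofReal
          apply mul_le_mul_of_nonneg_right _ (by positivity)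
          rw [hεdef]
          apply Real.exp_le_exp.mpr
          have hξ2 : ‖ξ‖^(2*α) ≤ (2:ℝ)^(((j:ℝ)+1)*(2*α)) := by
            rw [Real.rpow_mul (by norm_num : (0:ℝ) ≤ 2)]
            exact Real.rpow_le_rpow (norm_nonneg ξ) hξ.2.le (by positivity)
          have ht2 : t ≤ (2:ℝ)^(-(2*α)*(j:ℝ)) := ht.2
          have ht0 : 0 < t := hJsub j ht
          have hb0 : (0:ℝ) < (2:ℝ)^(-(2*α)*(j:ℝ)) := Real.rpow_pos_of_pos (by norm_num) _
          have hx0 : (0:ℝ) ≤ ‖ξ‖^(2*α) := by positivity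
          have hprod : 2 * t * ‖ξ‖^(2*α)
              ≤ 2 * ((2:ℝ)^(-(2*α)*(j:ℝ)) * (2:ℝ)^(((j:ℝ)+1)*(2*α))) := by
            nlinarith
          have hcollapse : 2 * ((2:ℝ)^(-(2*α)*(j:ℝ)) * (2:ℝ)^(((j:ℝ)+1)*(2*α)))
              = (2:ℝ)^((1:ℝ)+2*α) := by
            rw [← Real.rpow_add (by norm_num : (0:ℝ)<2)]
            nth_rewrite 1 [show (2:ℝ) = (2:ℝ)^(1:ℝ) by rw [Real.rpow_one]]
            rw [← Real.rpow_add (by norm_num : (0:ℝ)<2)]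
            ring_nf
          nlinarith
        calc ENNReal.ofReal ε * I j = ∫⁻ ξ in A j, ENNReal.ofReal ε * F ξ :=
              (lintegral_const_mul' _ _ ENNReal.ofReal_ne_top).symm
          _ ≤ _ := setLIntegral_mono' (hAmeas j) h2
      calc ENNReal.ofReal (ε^(q/2)) * (I j)^(q/2)
          = (ENNReal.ofReal ε * I j)^(q/2) := by
            rw [ENNReal.mul_rpow_of_nonneg _ _ hp.le, ENNReal.ofReal_rpow_of_pos hε]
        _ ≤ _ := ENNReal.rpow_le_rpow hbase hp.le
    have hlow : ∀ j : ℤ,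
        ENNReal.ofReal C₁ * (ENNReal.ofReal ((2:ℝ)^(-(2*σ*q)*(j:ℝ))) * (I j)^(q/2))
        ≤ ∫⁻ t in J j,
            ENNReal.ofReal (t ^ (q*σ/α)) * (Ealpha n g α t)^(q/2) * ENNReal.ofReal t⁻¹ := by
      intro j
      set aj := (2:ℝ)^(-(2*α)*((j:ℝ)+1)) with hajdef
      set bj := (2:ℝ)^(-(2*α)*(j:ℝ)) with hbjdef
      have haj0 : 0 < aj := Real.rpow_pos_of_pos (by norm_num) _
      have hbj0 : 0 < bj := Real.rpow_pos_of_pos (by norm_num) _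
      have hab : aj ≤ bj :=
        Real.rpow_le_rpow_of_exponent_le (by norm_num) (by nlinarith)
      have e1 : aj ^ (q*σ/α) = (2:ℝ)^(-(2*σ*q)*((j:ℝ)+1)) := by
        rw [hajdef, ← Real.rpow_mul (by norm_num : (0:ℝ) ≤ 2)]
        congr 1
        field_simp
      have e2 : aj = bj * (2:ℝ)^(-(2*α)) := by
        rw [hajdef, hbjdef, ← Real.rpow_add (by norm_num : (0:ℝ)<2)]
        congr 1
        ring
      have e3 : (2:ℝ)^(-(2*σ*q)*((j:ℝ)+1))
          = (2:ℝ)^(-(2*σ*q)) * (2:ℝ)^(-(2*σ*q)*(j:ℝ)) := by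
        rw [← Real.rpow_add (by norm_num : (0:ℝ)<2)]
        congr 1
        ring
      have h4 : bj⁻¹ * (bj - aj) = 1 - (2:ℝ)^(-(2*α)) := by
        rw [e2]
        field_simp
      have escalar : aj ^ (q*σ/α) * ε^(q/2) * bj⁻¹ * (bj - aj)
          = C₁ * (2:ℝ)^(-(2*σ*q)*(j:ℝ)) := by
        rw [e1, e3, hC1def]
        calc (2:ℝ)^(-(2*σ*q)) * (2:ℝ)^(-(2*σ*q)*(j:ℝ)) * ε^(q/2) * bj⁻¹ * (bj - aj)
            = ((2:ℝ)^(-(2*σ*q)) * ε^(q/2) * (bj⁻¹ * (bj - aj))) * (2:ℝ)^(-(2*σ*q)*(j:ℝ)) := by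
              ring
          _ = _ := by rw [h4]
      set c : ℝ≥0∞ := ENNReal.ofReal (aj ^ (q*σ/α)) *
        (ENNReal.ofReal (ε^(q/2)) * (I j)^(q/2)) * ENNReal.ofReal bj⁻¹ with hcdef
      have hconst : ∀ t ∈ J j, c ≤
          ENNReal.ofReal (t ^ (q*σ/α)) * (Ealpha n g α t)^(q/2) * ENNReal.ofReal t⁻¹ := by
        intro t ht
        have ht0 : 0 < t := hJsub j ht
        rw [hcdef]
        refine mul_le_mul' (mul_le_mul' ?_ (hEge j t ht)) ?_
        · exact ENNReal.ofReal_le_ofReal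
            (Real.rpow_le_rpow haj0.le ht.1.le (by positivity))
        · exact ENNReal.ofReal_le_ofReal (by
            apply inv_anti₀ ht0 ht.2)
      calc ENNReal.ofReal C₁ * (ENNReal.ofReal ((2:ℝ)^(-(2*σ*q)*(j:ℝ))) * (I j)^(q/2))
          = ENNReal.ofReal (C₁ * (2:ℝ)^(-(2*σ*q)*(j:ℝ))) * (I j)^(q/2) := by
            rw [ENNReal.ofReal_mul hC1.le]
            ring
        _ = ENNReal.ofReal (aj ^ (q*σ/α) * ε^(q/2) * bj⁻¹ * (bj - aj)) * (I j)^(q/2) := by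
            rw [escalar]
        _ = c * ENNReal.ofReal (bj - aj) := by
            rw [hcdef, ENNReal.ofReal_mul (by positivity), ENNReal.ofReal_mul (by positivity),
              ENNReal.ofReal_mul (by positivity)]
            ring
        _ = c * volume (J j) := by
            rw [hJdef]
            simp only []
            rw [Real.volume_Ioc]
        _ = ∫⁻ _ in J j, c := (setLIntegral_const _ _).symm
        _ ≤ _ := setLIntegral_mono' (hJmeas j) hconst
    calc ENNReal.ofReal C₁ *
          ∑' j : ℤ, (ENNReal.ofReal ((2:ℝ)^(-(2*(j:ℝ)*σ))) * ajBlock n g j) ^ q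
        = ∑' j : ℤ, ENNReal.ofReal C₁ *
            (ENNReal.ofReal ((2:ℝ)^(-(2*σ*q)*(j:ℝ))) * (I j)^(q/2)) := by
          rw [← ENNReal.tsum_mul_left]
          exact tsum_congr fun j => by rw [hterm j]
      _ ≤ ∑' j : ℤ, ∫⁻ t in J j,
            ENNReal.ofReal (t ^ (q*σ/α)) * (Ealpha n g α t)^(q/2) * ENNReal.ofReal t⁻¹ :=
          ENNReal.tsum_le_tsum hlow
      _ = ∫⁻ t in ⋃ j, J j,
            ENNReal.ofReal (t ^ (q*σ/α)) * (Ealpha n g α t)^(q/2) * ENNReal.ofReal t⁻¹ :=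
          (lintegral_iUnion hJmeas hJdisj _).symm
      _ ≤ _ := lintegral_mono_set (le_of_eq hJunion)
  · -- upper bound
    have hEdef : ∀ t, Ealpha n g α t = ∫⁻ ξ : EuclideanSpace ℝ (Fin n),
        ENNReal.ofReal (Real.exp (-(2 * t) * ‖ξ‖ ^ (2 * α)) * ‖g ξ‖ ^ 2) := fun t => rfl
    haveI : Nontrivial (EuclideanSpace ℝ (Fin n)) := by
      refine ⟨⟨0, EuclideanSpace.single (⟨0, hn⟩ : Fin n) (1:ℝ), fun h => ?_⟩⟩
      have := congrArg (fun x => x (⟨0, hn⟩ : Fin n)) h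
      simp [EuclideanSpace.single_apply] at this
    set tk : ℤ → ℝ := fun k => (2:ℝ)^(-(2*α)*((k:ℝ)+1)) with htkdef
    have htk0 : ∀ k, 0 < tk k := fun k => Real.rpow_pos_of_pos (by norm_num) _
    have hmono3 : ∀ {a b : ℤ}, a < b → (2:ℝ)^((a:ℝ)+1) ≤ (2:ℝ)^((b:ℝ)) := by
      intro a b hab
      apply Real.rpow_le_rpow_of_exponent_le (by norm_num)
      exact_mod_cast hab
    have hAdisj : Pairwise (Function.onFun Disjoint A) := by
      intro a b hab
      rw [Function.onFun, Set.disjoint_left]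
      rintro ξ ⟨ha1, ha2⟩ ⟨hb1, hb2⟩
      rcases hab.lt_or_gt with h | h
      · exact absurd ((ha2.trans_le (hmono3 h)).trans_le hb1) (lt_irrefl _)
      · exact absurd ((hb2.trans_le (hmono3 h)).trans_le ha1) (lt_irrefl _)
    have hAcoverU : (Set.univ : Set (EuclideanSpace ℝ (Fin n))) ⊆ (⋃ j, A j) ∪ {0} := by
      intro ξ _
      by_cases hξ : ξ = 0
      · exact Or.inr (by simp [hξ])
      · obtain ⟨j, h1, h2⟩ := exists_dyadic (norm_pos_iff.mpr hξ)
        exact Or.inl (Set.mem_iUnion.mpr ⟨j, h1, h2⟩)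
    have hEle : ∀ k : ℤ, Ealpha n g α (tk k) ≤
        ∑' j : ℤ, ENNReal.ofReal (Real.exp (-(2 * tk k) * (2:ℝ)^((j:ℝ)*(2*α)))) * I j := by
      intro k
      have hzero : (∫⁻ ξ in ({0} : Set (EuclideanSpace ℝ (Fin n))),
          ENNReal.ofReal (Real.exp (-(2 * tk k) * ‖ξ‖ ^ (2 * α)) * ‖g ξ‖ ^ 2)) = 0 :=
        setLIntegral_measure_zero _ _ (measure_singleton 0)
      have hsplit : Ealpha n g α (tk k) ≤
          (∫⁻ ξ in ⋃ j, A j,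
            ENNReal.ofReal (Real.exp (-(2 * tk k) * ‖ξ‖ ^ (2 * α)) * ‖g ξ‖ ^ 2)) +
          ∫⁻ ξ in ({0} : Set (EuclideanSpace ℝ (Fin n))),
            ENNReal.ofReal (Real.exp (-(2 * tk k) * ‖ξ‖ ^ (2 * α)) * ‖g ξ‖ ^ 2) := by
        rw [hEdef, ← setLIntegral_univ]
        exact (lintegral_mono_set hAcoverU).trans (lintegral_union_le _ _ _)
      rw [hzero, add_zero, lintegral_iUnion hAmeas hAdisj] at hsplit
      refine hsplit.trans (ENNReal.tsum_le_tsum fun j => ?_)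
      have hpt : ∀ ξ ∈ A j,
          ENNReal.ofReal (Real.exp (-(2 * tk k) * ‖ξ‖ ^ (2 * α)) * ‖g ξ‖ ^ 2) ≤
          ENNReal.ofReal (Real.exp (-(2 * tk k) * (2:ℝ)^((j:ℝ)*(2*α)))) * F ξ := by
        intro ξ hξ
        rw [hFdef]
        simp only []
        rw [← ENNReal.ofReal_mul (Real.exp_pos _).le]
        apply ENNReal.ofReal_le_ofReal
        apply mul_le_mul_of_nonneg_right _ (by positivity)
        apply Real.exp_le_exp.mpr
        have hξ1 : (2:ℝ)^((j:ℝ)*(2*α)) ≤ ‖ξ‖^(2*α) := by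
          rw [Real.rpow_mul (by norm_num : (0:ℝ) ≤ 2)]
          exact Real.rpow_le_rpow (by positivity) hξ.1 (by positivity)
        nlinarith [htk0 k]
      calc (∫⁻ ξ in A j,
            ENNReal.ofReal (Real.exp (-(2 * tk k) * ‖ξ‖ ^ (2 * α)) * ‖g ξ‖ ^ 2))
          ≤ ∫⁻ ξ in A j,
            ENNReal.ofReal (Real.exp (-(2 * tk k) * (2:ℝ)^((j:ℝ)*(2*α)))) * F ξ :=
            setLIntegral_mono' (hAmeas j) hpt
        _ = ENNReal.ofReal (Real.exp (-(2 * tk k) * (2:ℝ)^((j:ℝ)*(2*α)))) * I j :=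
            lintegral_const_mul' _ _ ENNReal.ofReal_ne_top
    have hup1 : ∀ k : ℤ, (∫⁻ t in J k,
          ENNReal.ofReal (t ^ (q*σ/α)) * (Ealpha n g α t)^(q/2) * ENNReal.ofReal t⁻¹)
        ≤ ENNReal.ofReal ((2:ℝ)^(2*α)) *
          (ENNReal.ofReal ((2:ℝ)^(-(2*σ*q)*(k:ℝ))) * (Ealpha n g α (tk k))^(q/2)) := by
      intro k
      set bk := (2:ℝ)^(-(2*α)*(k:ℝ)) with hbkdef
      have hbk0 : 0 < bk := Real.rpow_pos_of_pos (by norm_num) _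
      have e1 : bk ^ (q*σ/α) = (2:ℝ)^(-(2*σ*q)*(k:ℝ)) := by
        rw [hbkdef, ← Real.rpow_mul (by norm_num : (0:ℝ) ≤ 2)]
        congr 1
        field_simp
      have e2 : (tk k)⁻¹ * bk = (2:ℝ)^(2*α) := by
        rw [htkdef, hbkdef]
        simp only []
        rw [← Real.rpow_neg (by norm_num : (0:ℝ) ≤ 2), ← Real.rpow_add (by norm_num : (0:ℝ)<2)]
        congr 1
        ring
      set c : ℝ≥0∞ := ENNReal.ofReal (bk ^ (q*σ/α)) * (Ealpha n g α (tk k))^(q/2) *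
        ENNReal.ofReal ((tk k)⁻¹) with hcdef
      have hconst : ∀ t ∈ J k,
          ENNReal.ofReal (t ^ (q*σ/α)) * (Ealpha n g α t)^(q/2) * ENNReal.ofReal t⁻¹ ≤ c := by
        intro t ht
        have ht0 : 0 < t := hJsub k ht
        rw [hcdef]
        refine mul_le_mul' (mul_le_mul' ?_ ?_) ?_
        · exact ENNReal.ofReal_le_ofReal (Real.rpow_le_rpow ht0.le ht.2 (by positivity))
        · apply ENNReal.rpow_le_rpow _ hp.le
          rw [hEdef, hEdef]
          apply lintegral_mono
          intro ξ
          apply ENNReal.ofReal_le_ofReal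
          apply mul_le_mul_of_nonneg_right _ (by positivity)
          apply Real.exp_le_exp.mpr
          have hx0 : (0:ℝ) ≤ ‖ξ‖^(2*α) := by positivity
          nlinarith [ht.1]
        · exact ENNReal.ofReal_le_ofReal (inv_anti₀ (htk0 k) ht.1.le)
      calc (∫⁻ t in J k,
            ENNReal.ofReal (t ^ (q*σ/α)) * (Ealpha n g α t)^(q/2) * ENNReal.ofReal t⁻¹)
          ≤ ∫⁻ _ in J k, c := setLIntegral_mono' (hJmeas k) hconst
        _ = c * volume (J k) := setLIntegral_const _ _
        _ ≤ c * ENNReal.ofReal bk := by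
            rw [hJdef]
            simp only []
            rw [Real.volume_Ioc]
            exact mul_le_mul' le_rfl (ENNReal.ofReal_le_ofReal (by linarith [htk0 k]))
        _ = ENNReal.ofReal ((2:ℝ)^(2*α)) *
            (ENNReal.ofReal ((2:ℝ)^(-(2*σ*q)*(k:ℝ))) * (Ealpha n g α (tk k))^(q/2)) := by
            rw [hcdef, e1.symm, ← e2, ENNReal.ofReal_mul (by positivity)]
            ring
    set Bb : ℤ → ℝ≥0∞ := fun j => ENNReal.ofReal ((2:ℝ)^(-(4*σ)*(j:ℝ))) * I j with hBbdef
    set V : ℤ → ℝ≥0∞ := fun m => ENNReal.ofReal (v m) with hVdef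
    have hup2 : ∀ k : ℤ,
        ENNReal.ofReal ((2:ℝ)^(-(2*σ*q)*(k:ℝ))) * (Ealpha n g α (tk k))^(q/2)
        ≤ (∑' m : ℤ, V m * Bb (k + m)) ^ (q/2) := by
      intro k
      have hof : ENNReal.ofReal ((2:ℝ)^(-(2*σ*q)*(k:ℝ)))
          = (ENNReal.ofReal ((2:ℝ)^(-(4*σ)*(k:ℝ))))^(q/2) := by
        rw [ENNReal.ofReal_rpow_of_pos (by positivity),
          ← Real.rpow_mul (by norm_num : (0:ℝ) ≤ 2)]
        congr 1
        ring
      rw [hof, ← ENNReal.mul_rpow_of_nonneg _ _ hp.le]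
      apply ENNReal.rpow_le_rpow _ hp.le
      calc ENNReal.ofReal ((2:ℝ)^(-(4*σ)*(k:ℝ))) * Ealpha n g α (tk k)
          ≤ ENNReal.ofReal ((2:ℝ)^(-(4*σ)*(k:ℝ))) *
            ∑' j : ℤ, ENNReal.ofReal (Real.exp (-(2 * tk k) * (2:ℝ)^((j:ℝ)*(2*α)))) * I j :=
            mul_le_mul' le_rfl (hEle k)
        _ = ∑' j : ℤ, ENNReal.ofReal ((2:ℝ)^(-(4*σ)*(k:ℝ))) *
            (ENNReal.ofReal (Real.exp (-(2 * tk k) * (2:ℝ)^((j:ℝ)*(2*α)))) * I j) :=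
            (ENNReal.tsum_mul_left).symm
        _ = ∑' m : ℤ, V m * Bb (k + m) := by
            rw [← (Equiv.addLeft k).tsum_eq (fun j : ℤ =>
              ENNReal.ofReal ((2:ℝ)^(-(4*σ)*(k:ℝ))) *
              (ENNReal.ofReal (Real.exp (-(2 * tk k) * (2:ℝ)^((j:ℝ)*(2*α)))) * I j))]
            apply tsum_congr
            intro m
            simp only [Equiv.coe_addLeft]
            rw [hVdef, hBbdef]
            simp only []
            have hexparg : (2 * tk k) * (2:ℝ)^((((k+m : ℤ)):ℝ)*(2*α))
                = (2:ℝ)^((1:ℝ)-2*α) * (2:ℝ)^((2*α)*(m:ℝ)) := by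
              rw [htkdef]
              simp only []
              rw [show (2:ℝ) * (2:ℝ)^(-(2*α)*((k:ℝ)+1))
                  = (2:ℝ)^((1:ℝ) + -(2*α)*((k:ℝ)+1)) by
                rw [Real.rpow_add (by norm_num : (0:ℝ)<2), Real.rpow_one],
                ← Real.rpow_add (by norm_num : (0:ℝ)<2),
                ← Real.rpow_add (by norm_num : (0:ℝ)<2)]
              congr 1
              push_cast
              ring
            have hscal : (2:ℝ)^(-(4*σ)*(k:ℝ)) *
                Real.exp (-(2 * tk k) * (2:ℝ)^((((k+m : ℤ)):ℝ)*(2*α)))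
                = v m * (2:ℝ)^(-(4*σ)*(((k+m : ℤ)):ℝ)) := by
              rw [show -(2 * tk k) * (2:ℝ)^((((k+m : ℤ)):ℝ)*(2*α))
                  = -((2 * tk k) * (2:ℝ)^((((k+m : ℤ)):ℝ)*(2*α))) from neg_mul _ _,
                hexparg, hvdef]
              simp only []
              rw [show (2:ℝ)^(-(4*σ)*(k:ℝ))
                  = (2:ℝ)^((4*σ)*(m:ℝ)) * (2:ℝ)^(-(4*σ)*(((k+m : ℤ)):ℝ)) by
                rw [← Real.rpow_add (by norm_num : (0:ℝ)<2)]
                congr 1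
                push_cast
                ring]
              ring
            calc ENNReal.ofReal ((2:ℝ)^(-(4*σ)*(k:ℝ))) *
                (ENNReal.ofReal (Real.exp (-(2 * tk k) * (2:ℝ)^((((k+m : ℤ)):ℝ)*(2*α)))) *
                  I (k+m))
                = ENNReal.ofReal ((2:ℝ)^(-(4*σ)*(k:ℝ)) *
                    Real.exp (-(2 * tk k) * (2:ℝ)^((((k+m : ℤ)):ℝ)*(2*α)))) * I (k+m) := by
                  rw [ENNReal.ofReal_mul (by positivity)]
                  ring
              _ = ENNReal.ofReal (v m * (2:ℝ)^(-(4*σ)*(((k+m : ℤ)):ℝ))) * I (k+m) := by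
                  rw [hscal]
              _ = ENNReal.ofReal (v m) *
                  (ENNReal.ofReal ((2:ℝ)^(-(4*σ)*(((k+m : ℤ)):ℝ))) * I (k+m)) := by
                  rw [ENNReal.ofReal_mul (hv_pos m).le]
                  ring
    have hV0 : ∀ m, V m ≠ 0 := fun m => ne_of_gt (ENNReal.ofReal_pos.mpr (hv_pos m))
    have hVt : ∀ m, V m ≠ ∞ := fun m => ENNReal.ofReal_ne_top
    have hVsum_eq : ∑' m, V m = ENNReal.ofReal R2 := by
      rw [hVdef, hR2def]
      exact (ENNReal.ofReal_tsum_of_nonneg (fun m => (hv_pos m).le) hv_sum).symm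
    have hVS : (∑' m, V m) ≠ ∞ := by rw [hVsum_eq]; exact ENNReal.ofReal_ne_top
    have hVp_eq : ∑' m, (V m)^(q/2) = ENNReal.ofReal R1 := by
      have h1 : ∀ m : ℤ, (V m)^(q/2) = ENNReal.ofReal (v m ^ (q/2)) := fun m =>
        ENNReal.ofReal_rpow_of_pos (hv_pos m)
      rw [tsum_congr h1, hR1def]
      exact (ENNReal.ofReal_tsum_of_nonneg (fun m => by positivity) hvp_sum).symm
    have hconv := conv_sum hp V Bb hV0 hVt hVS
    have hBbp : ∀ j : ℤ, (Bb j)^(q/2)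
        = ENNReal.ofReal ((2:ℝ)^(-(2*σ*q)*(j:ℝ))) * (I j)^(q/2) := by
      intro j
      rw [hBbdef]
      simp only []
      rw [ENNReal.mul_rpow_of_nonneg _ _ hp.le,
        ENNReal.ofReal_rpow_of_pos (by positivity),
        ← Real.rpow_mul (by norm_num : (0:ℝ) ≤ 2)]
      congr 2
      ring
    calc (∫⁻ t in Set.Ioi (0:ℝ),
          ENNReal.ofReal (t ^ (q*σ/α)) * (Ealpha n g α t)^(q/2) * ENNReal.ofReal t⁻¹)
        = ∑' k : ℤ, ∫⁻ t in J k,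
            ENNReal.ofReal (t ^ (q*σ/α)) * (Ealpha n g α t)^(q/2) * ENNReal.ofReal t⁻¹ := by
          rw [← hJunion, lintegral_iUnion hJmeas hJdisj]
      _ ≤ ∑' k : ℤ, ENNReal.ofReal ((2:ℝ)^(2*α)) *
            (ENNReal.ofReal ((2:ℝ)^(-(2*σ*q)*(k:ℝ))) * (Ealpha n g α (tk k))^(q/2)) :=
          ENNReal.tsum_le_tsum hup1
      _ ≤ ∑' k : ℤ, ENNReal.ofReal ((2:ℝ)^(2*α)) * ((∑' m : ℤ, V m * Bb (k + m)) ^ (q/2)) :=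
          ENNReal.tsum_le_tsum fun k => mul_le_mul' le_rfl (hup2 k)
      _ = ENNReal.ofReal ((2:ℝ)^(2*α)) * ∑' k : ℤ, (∑' m : ℤ, V m * Bb (k + m)) ^ (q/2) :=
          ENNReal.tsum_mul_left
      _ ≤ ENNReal.ofReal ((2:ℝ)^(2*α)) *
          ((ENNReal.ofReal R1 + (ENNReal.ofReal R2)^(q/2)) * ∑' j : ℤ, (Bb j)^(q/2)) := by
          refine mul_le_mul' le_rfl (hconv.trans ?_)
          rw [hVp_eq, hVsum_eq]
      _ ≤ ENNReal.ofReal C₂ *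
          ∑' j : ℤ, (ENNReal.ofReal ((2:ℝ)^(-(2*(j:ℝ)*σ))) * ajBlock n g j) ^ q := by
          have hsums : ∑' j : ℤ, (Bb j)^(q/2)
              = ∑' j : ℤ, (ENNReal.ofReal ((2:ℝ)^(-(2*(j:ℝ)*σ))) * ajBlock n g j) ^ q :=
            tsum_congr fun j => by rw [hBbp j, ← hterm j]
          rw [hsums, ← mul_assoc]
          refine mul_le_mul' ?_ le_rfl
          rw [ENNReal.ofReal_rpow_of_pos hR2,
            ← ENNReal.ofReal_add (by positivity) (by positivity),
            ← ENNReal.ofReal_mul (by positivity)]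
          apply ENNReal.ofReal_le_ofReal
          rw [hC2def]
          nlinarith [hR1, Real.rpow_pos_of_pos hR2 (q/2), Real.rpow_pos_of_pos (by norm_num : (0:ℝ)<2) (2*α)]
end
end
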